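/- arXiv:2306.01178 — 8 statements merged into one kernel-verified Lean document; each statement's English description precedes it below -/
import Mathlib

section
/- If V < ∞ (which forces U < ∞), then 2V − U² ≥ 2U/r. -/
open MeasureTheory Set
open scoped ENNReal Interval

/-- Integral of `1/y²` over `Ioo x r`. -/
lemma lintegral_inv_sq_Ioo {x r : ℝ} (hx : 0 < x) (hxr : x ≤ r) :
    ∫⁻ y in Ioo x r, ENNReal.ofReal (1 / y ^ 2) = ENNReal.ofReal (x⁻¹ - r⁻¹) := by
  have hcont : ContinuousOn (fun y : ℝ => 1 / y ^ 2) (Icc x r) := by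
    apply ContinuousOn.div continuousOn_const (by fun_prop)
    intro y hy
    have : 0 < y := lt_of_lt_of_le hx hy.1
    positivity
  have hint : IntegrableOn (fun y : ℝ => 1 / y ^ 2) (Ioo x r) := by
    exact (hcont.integrableOn_compact isCompact_Icc).mono_set Ioo_subset_Icc_self
  have hpos : 0 ≤ᵐ[volume.restrict (Ioo x r)] (fun y : ℝ => 1 / y ^ 2) := by
    filter_upwards [ae_restrict_mem measurableSet_Ioo] with y hy
    have : 0 < y := lt_trans hx hy.1
    positivity
  rw [← ofReal_integral_eq_lintegral_ofReal hint hpos]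
  congr 1
  have h0 : (0:ℝ) ∉ [[x, r]] := by
    rw [Set.uIcc_of_le hxr]
    intro h; exact absurd h.1 (not_le.2 hx)
  have := integral_zpow (a := x) (b := r) (n := -2) (Or.inr ⟨by decide, h0⟩)
  rw [← MeasureTheory.integral_Ioc_eq_integral_Ioo, ← intervalIntegral.integral_of_le hxr]
  have heq : ∀ y ∈ [[x, r]], (1 : ℝ) / y ^ 2 = y ^ (-2 : ℤ) := by
    intro y hy
    rw [Set.uIcc_of_le hxr] at hy
    have : 0 < y := lt_of_lt_of_le hx hy.1
    rw [zpow_neg, zpow_two]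
    field_simp
  rw [intervalIntegral.integral_congr heq, this]
  push_cast
  have hx' : x ≠ 0 := ne_of_gt hx
  have hr' : r ≠ 0 := ne_of_gt (lt_of_lt_of_le hx hxr)
  field_simp
  ring

/-- Lemma 4.8 (first part) of the paper: for measurable `η : (0,r) → [0,1]`, with
`U = ∫₀^r η(x)/x² dx` and `V = ∫₀^r η(x)/x³ dx` (valued in `[0,∞]`), if `V < ∞`
then `2V − U² ≥ 2U/r`. -/
theorem two_V_sub_U_sq_ge
    (r : ℝ) (hr : 0 < r) (η : ℝ → ℝ) (hmeas : Measurable η)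
    (hbd : ∀ᵐ x ∂(volume.restrict (Ioo 0 r)), η x ∈ Icc (0 : ℝ) 1)
    (U V : ℝ≥0∞)
    (hU : U = ∫⁻ x in Ioo 0 r, ENNReal.ofReal (η x / x ^ 2))
    (hV : V = ∫⁻ x in Ioo 0 r, ENNReal.ofReal (η x / x ^ 3))
    (hVfin : V ≠ ⊤) :
    2 * U / ENNReal.ofReal r ≤ 2 * V - U ^ 2 := by
  have h1 : ∀ᵐ x ∂(volume : Measure ℝ), x ∈ Ioo 0 r → η x ∈ Icc (0:ℝ) 1 :=
    (ae_restrict_iff' measurableSet_Ioo).1 hbd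
  set f : ℝ → ℝ≥0∞ := fun x => ENNReal.ofReal (η x / x ^ 2) with hf_def
  have hf : Measurable f := (hmeas.div (measurable_id.pow_const 2)).ennreal_ofReal
  set e : ℝ → ℝ≥0∞ := (Ioo (0:ℝ) r).indicator f with he_def
  have he : Measurable e := hf.indicator measurableSet_Ioo
  have hUe : U = ∫⁻ x, e x := by
    rw [hU, ← lintegral_indicator measurableSet_Ioo f]
  -- U is finite
  have hUle : U ≤ ENNReal.ofReal r * V := by
    rw [hU, hV, ← lintegral_const_mul _ (by fun_prop)]
    refine setLIntegral_mono_ae (by fun_prop) ?_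
    filter_upwards [h1] with x hx hx'
    have hx0 : 0 < x := hx'.1
    have hxr : x < r := hx'.2
    have hη0 : 0 ≤ η x := (hx hx').1
    rw [← ENNReal.ofReal_mul hr.le]
    apply ENNReal.ofReal_le_ofReal
    have h3 : 0 ≤ η x / x ^ 3 := by positivity
    have : η x / x ^ 2 = x * (η x / x ^ 3) := by
      field_simp
    rw [this]
    exact mul_le_mul_of_nonneg_right hxr.le h3
  have hUfin : U ≠ ⊤ := by
    intro h
    rw [h] at hUle
    exact (ENNReal.mul_ne_top ENNReal.ofReal_ne_top hVfin) (top_le_iff.1 hUle)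
  -- G' and H'
  set G : ℝ → ℝ≥0∞ := fun x => ∫⁻ y, (Ioi x).indicator e y with hG_def
  set H : ℝ → ℝ≥0∞ := fun x => ∫⁻ y, (Iio x).indicator e y with hH_def
  have hΦmeas : Measurable fun p : ℝ × ℝ => (Ioi p.1).indicator e p.2 := by
    have : (fun p : ℝ × ℝ => (Ioi p.1).indicator e p.2)
        = {q : ℝ × ℝ | q.1 < q.2}.indicator (fun q => e q.2) := by
      ext p
      by_cases h : p.1 < p.2
      · rw [indicator_of_mem (by exact h : p.2 ∈ Ioi p.1), indicator_of_mem (by exact h)]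
      · rw [indicator_of_notMem (by exact h : p.2 ∉ Ioi p.1), indicator_of_notMem (by exact h)]
    rw [this]
    exact (he.comp measurable_snd).indicator (measurableSet_lt measurable_fst measurable_snd)
  have hΨmeas : Measurable fun p : ℝ × ℝ => (Iio p.1).indicator e p.2 := by
    have : (fun p : ℝ × ℝ => (Iio p.1).indicator e p.2)
        = {q : ℝ × ℝ | q.2 < q.1}.indicator (fun q => e q.2) := by
      ext p
      by_cases h : p.2 < p.1
      · rw [indicator_of_mem (by exact h : p.2 ∈ Iio p.1), indicator_of_mem (by exact h)]
      · rw [indicator_of_notMem (by exact h : p.2 ∉ Iio p.1), indicator_of_notMem (by exact h)]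
    rw [this]
    exact (he.comp measurable_snd).indicator (measurableSet_lt measurable_snd measurable_fst)
  have hGmeas : Measurable G := hΦmeas.lintegral_prod_right'
  have hHmeas : Measurable H := hΨmeas.lintegral_prod_right'
  -- swap
  have hswap : ∫⁻ x, e x * G x = ∫⁻ x, e x * H x := by
    have lhs : ∫⁻ x, e x * G x = ∫⁻ x, ∫⁻ y, e x * (Ioi x).indicator e y := by
      congr 1; ext x
      rw [lintegral_const_mul _ (he.indicator measurableSet_Ioi)]
    have rhs : ∫⁻ y, e y * H y = ∫⁻ y, ∫⁻ x, e y * (Iio y).indicator e x := by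
      congr 1; ext y
      rw [lintegral_const_mul _ (he.indicator measurableSet_Iio)]
    rw [lhs, rhs]
    have key : ∀ x y : ℝ, e x * (Ioi x).indicator e y = e y * (Iio y).indicator e x := by
      intro x y
      by_cases h : x < y
      · rw [indicator_of_mem (by exact h), indicator_of_mem (by exact h), mul_comm]
      · rw [indicator_of_notMem (by exact h),
          indicator_of_notMem (by exact fun h' => h h' : x ∉ Iio y), mul_zero, mul_zero]
    have : (fun x => ∫⁻ y, e x * (Ioi x).indicator e y)
        = fun x => ∫⁻ y, e y * (Iio y).indicator e x := by
      ext x; congr 1; ext y; exact key x y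
    rw [this]
    exact lintegral_lintegral_swap
      ((((he.comp measurable_fst).mul hΨmeas).comp measurable_swap).aemeasurable)
  -- G x + H x = U for all x
  have hGH : ∀ x : ℝ, G x + H x = U := by
    intro x
    rw [hG_def, hH_def]
    simp only
    rw [← lintegral_add_left (he.indicator measurableSet_Ioi)]
    have heq : (fun y => (Ioi x).indicator e y + (Iio x).indicator e y)
        = ({x}ᶜ : Set ℝ).indicator e := by
      ext y
      simp only [indicator_apply, mem_Ioi, mem_Iio, mem_compl_iff, mem_singleton_iff]
      rcases lt_trichotomy x y with h | h | h
      · rw [if_pos h, if_neg (asymm h), add_zero, if_pos (show ¬y = x from h.ne')]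
      · subst h; simp
      · rw [if_neg (asymm h), if_pos h, zero_add, if_pos (show ¬y = x from h.ne)]
    rw [heq, lintegral_indicator (measurableSet_singleton x).compl,
      setLIntegral_congr (s := ({x}ᶜ : Set ℝ)) (t := univ)
        (by rw [ae_eq_univ, compl_compl]; exact measure_singleton x),
      Measure.restrict_univ, ← hUe]
  -- U² = 2 ∫ e G
  have hU2 : U ^ 2 = 2 * ∫⁻ x, e x * G x := by
    have h1' : ∫⁻ x, e x * U = U * U := by
      rw [lintegral_mul_const U he, ← hUe]
    have h2' : ∫⁻ x, e x * U = (∫⁻ x, e x * G x) + ∫⁻ x, e x * H x := by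
      rw [← lintegral_add_left (f := fun x => e x * G x) (he.mul hGmeas)]
      congr 1; ext x
      rw [← mul_add, hGH x]
    rw [pow_two, ← h1', h2', hswap, two_mul]
  set c : ℝ≥0∞ := ENNReal.ofReal r⁻¹ with hc_def
  -- pointwise key bound
  have hkey : ∀ᵐ x ∂(volume : Measure ℝ), e x * (G x + c) ≤
      (Ioo (0:ℝ) r).indicator (fun x => ENNReal.ofReal (η x / x ^ 3)) x := by
    refine ae_of_all _ fun x => ?_
    by_cases hx : x ∈ Ioo (0:ℝ) r
    · have hx0 : 0 < x := hx.1
      have hxr : x < r := hx.2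
      have hGbound : G x ≤ ENNReal.ofReal (x⁻¹ - r⁻¹) := by
        have hGx : G x = ∫⁻ y in Ioo x r, f y := by
          rw [hG_def]
          simp only
          rw [lintegral_indicator measurableSet_Ioi, he_def,
            lintegral_indicator measurableSet_Ioo,
            Measure.restrict_restrict measurableSet_Ioo]
          have hset : Ioo (0:ℝ) r ∩ Ioi x = Ioo x r := by
            ext y
            constructor
            · rintro ⟨⟨_, h2⟩, h3⟩; exact ⟨h3, h2⟩
            · rintro ⟨h1', h2⟩; exact ⟨⟨lt_trans hx0 h1', h2⟩, h1'⟩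
          rw [hset]
        rw [hGx, ← lintegral_inv_sq_Ioo hx0 hxr.le]
        refine setLIntegral_mono_ae (by fun_prop) ?_
        filter_upwards [h1] with y hy hy'
        have hy0 : 0 < y := lt_trans hx0 hy'.1
        have hymem : y ∈ Ioo (0:ℝ) r := ⟨hy0, hy'.2⟩
        refine ENNReal.ofReal_le_ofReal ?_
        have hden : (0:ℝ) < y ^ 2 := by positivity
        exact div_le_div_of_nonneg_right (hy hymem).2 hden.le
      have hsum : G x + c ≤ ENNReal.ofReal x⁻¹ := by
        have hsub : (0:ℝ) ≤ x⁻¹ - r⁻¹ :=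
          sub_nonneg.2 (inv_anti₀ hx0 hxr.le)
        calc G x + c ≤ ENNReal.ofReal (x⁻¹ - r⁻¹) + ENNReal.ofReal r⁻¹ :=
              add_le_add_left hGbound c
        _ = ENNReal.ofReal x⁻¹ := by
              rw [← ENNReal.ofReal_add hsub (by positivity), sub_add_cancel]
      rw [indicator_of_mem hx, he_def, indicator_of_mem hx]
      calc f x * (G x + c) ≤ f x * ENNReal.ofReal x⁻¹ := mul_le_mul_right hsum _
      _ = ENNReal.ofReal (η x / x ^ 3) := by
            rw [hf_def]
            simp only
            rw [← ENNReal.ofReal_mul' (by positivity)]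
            have hxx : η x / x ^ 2 * x⁻¹ = η x / x ^ 3 := by
              rw [← div_eq_mul_inv, div_div, ← pow_succ]
            rw [hxx]
    · rw [he_def, indicator_of_notMem hx, indicator_of_notMem hx, zero_mul]
  have hmain : U ^ 2 + 2 * (U * c) ≤ 2 * V := by
    have hVe : V = ∫⁻ x, (Ioo (0:ℝ) r).indicator
        (fun x => ENNReal.ofReal (η x / x ^ 3)) x := by
      rw [hV, ← lintegral_indicator measurableSet_Ioo]
    have hle : (∫⁻ x, e x * (G x + c)) ≤ V := by
      rw [hVe]; exact lintegral_mono_ae hkey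
    have hsplit : (∫⁻ x, e x * (G x + c)) = (∫⁻ x, e x * G x) + U * c := by
      have hpt : ∀ x, e x * (G x + c) = e x * G x + e x * c := fun x => mul_add _ _ _
      simp_rw [hpt]
      rw [lintegral_add_left (f := fun x => e x * G x) (he.mul hGmeas), lintegral_mul_const c he, ← hUe]
    calc U ^ 2 + 2 * (U * c) = 2 * ((∫⁻ x, e x * G x) + U * c) := by rw [hU2]; ring
    _ = 2 * ∫⁻ x, e x * (G x + c) := by rw [hsplit]
    _ ≤ 2 * V := by gcongr
  have hU2fin : U ^ 2 ≠ ⊤ := ENNReal.pow_ne_top hUfin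
  have hdiv : 2 * U / ENNReal.ofReal r = 2 * (U * c) := by
    rw [div_eq_mul_inv, ← ENNReal.ofReal_inv_of_pos hr, mul_assoc]
  rw [hdiv]
  exact (ENNReal.cancel_of_ne hU2fin).le_tsub_of_add_le_left hmain
end

section
/- If W < ∞ (which forces U < ∞ and V < ∞) and U > 0, then W ≥ U³/12 + V²/U. -/
open MeasureTheory Set
open scoped ENNReal

private lemma bathtub (r : ℝ) (η : ℝ → ℝ)
    (hbd : ∀ᵐ x ∂(volume.restrict (Ioo 0 r)), η x ∈ Icc (0 : ℝ) 1)
    (a b : ℝ) (ha : 0 < a) (hab : a < b) (hbr : b ≤ r)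
    (φ : ℝ → ℝ) (hφ : ContinuousOn φ (Ioi 0))
    (hneg : ∀ x ∈ Ioo a b, φ x ≤ 0)
    (hpos : ∀ x ∈ Ioo 0 r, x ∉ Ioo a b → 0 ≤ φ x)
    (hInt : IntegrableOn (fun x => φ x * η x / x ^ 2) (Ioo 0 r)) :
    ∫ x in Ioo a b, φ x / x ^ 2 ≤ ∫ x in Ioo 0 r, φ x * η x / x ^ 2 := by
  have hsub : Ioo a b ⊆ Ioo 0 r := fun x hx => ⟨lt_trans ha hx.1, lt_of_lt_of_le hx.2 hbr⟩
  have hIccsub : Icc a b ⊆ Ioi 0 := fun x hx => lt_of_lt_of_le ha hx.1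
  have hcont : ContinuousOn (fun x => φ x / x ^ 2) (Icc a b) := by
    apply (hφ.mono hIccsub).div ((continuous_pow 2).continuousOn)
    intro x hx
    exact pow_ne_zero 2 (ne_of_gt (hIccsub hx))
  have hgI : IntegrableOn (fun x => φ x / x ^ 2) (Ioo a b) :=
    (hcont.integrableOn_Icc).mono_set Ioo_subset_Icc_self
  have hind : Integrable ((Ioo a b).indicator (fun x => φ x / x ^ 2))
      (volume.restrict (Ioo 0 r)) :=
    ((integrable_indicator_iff measurableSet_Ioo).mpr hgI).restrict
  have key : (Ioo a b).indicator (fun x => φ x / x ^ 2) ≤ᵐ[volume.restrict (Ioo 0 r)]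
      fun x => φ x * η x / x ^ 2 := by
    filter_upwards [hbd, ae_restrict_mem measurableSet_Ioo] with x hη hx
    by_cases hxI : x ∈ Ioo a b
    · rw [Set.indicator_of_mem hxI]
      have hx0 : (0:ℝ) < x := hx.1
      have h1 : φ x ≤ 0 := hneg x hxI
      have hx2 : (0:ℝ) < x ^ 2 := by positivity
      rw [div_le_div_iff_of_pos_right hx2]
      nlinarith [hη.1, hη.2]
    · rw [Set.indicator_of_notMem hxI]
      exact div_nonneg (mul_nonneg (hpos x hx hxI) hη.1) (by positivity)
  calc ∫ x in Ioo a b, φ x / x ^ 2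
      = ∫ x in Ioo 0 r, (Ioo a b).indicator (fun x => φ x / x ^ 2) x := by
        rw [setIntegral_indicator measurableSet_Ioo,
          Set.inter_eq_self_of_subset_right hsub]
    _ ≤ ∫ x in Ioo 0 r, φ x * η x / x ^ 2 := integral_mono_ae hind hInt key

set_option maxHeartbeats 1000000 in
/-- Lemma 4.8 (second part) of the paper: for measurable `η : (0,r) → [0,1]`, with
`U = ∫₀^r η(x)/x² dx`, `V = ∫₀^r η(x)/x³ dx` and `W = ∫₀^r η(x)/x⁴ dx` (valued in
`[0,∞]`), if `W < ∞` and `U > 0` then `W ≥ U³/12 + V²/U`. -/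
theorem W_ge_U_cubed_add_V_sq_div_U
    (r : ℝ) (hr : 0 < r) (η : ℝ → ℝ) (hmeas : Measurable η)
    (hbd : ∀ᵐ x ∂(volume.restrict (Ioo 0 r)), η x ∈ Icc (0 : ℝ) 1)
    (U V W : ℝ≥0∞)
    (hU : U = ∫⁻ x in Ioo 0 r, ENNReal.ofReal (η x / x ^ 2))
    (hV : V = ∫⁻ x in Ioo 0 r, ENNReal.ofReal (η x / x ^ 3))
    (hW : W = ∫⁻ x in Ioo 0 r, ENNReal.ofReal (η x / x ^ 4))
    (hWfin : W ≠ ⊤) (hUpos : 0 < U) :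
    U ^ 3 / 12 + V ^ 2 / U ≤ W := by
  -- finiteness of all the lintegrals
  have hW4 : (∫⁻ x in Ioo 0 r, ENNReal.ofReal (η x / x ^ 4)) ≠ ⊤ := hW ▸ hWfin
  have hfin : ∀ k : ℕ, k ≤ 4 → (∫⁻ x in Ioo 0 r, ENNReal.ofReal (η x / x ^ k)) ≠ ⊤ := by
    intro k hk
    have hle : ∀ᵐ x ∂(volume.restrict (Ioo 0 r)),
        ENNReal.ofReal (η x / x ^ k) ≤ ENNReal.ofReal (η x / x ^ 4) + 1 := by
      filter_upwards [hbd, ae_restrict_mem measurableSet_Ioo] with x hη hx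
      have hx0 : (0:ℝ) < x := hx.1
      have h4 : (0:ℝ) ≤ η x / x ^ 4 := div_nonneg hη.1 (by positivity)
      have hstep : η x / x ^ k ≤ η x / x ^ 4 + 1 := by
        rcases le_total x 1 with h1 | h1
        · have hpow : x ^ 4 ≤ x ^ k := pow_le_pow_of_le_one hx0.le h1 hk
          have := div_le_div_of_nonneg_left hη.1 (by positivity : (0:ℝ) < x ^ 4) hpow
          linarith
        · have hxk : (1:ℝ) ≤ x ^ k := one_le_pow₀ h1
          have : η x / x ^ k ≤ 1 := by
            rw [div_le_one (by positivity)]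
            linarith [hη.2]
          linarith
      calc ENNReal.ofReal (η x / x ^ k) ≤ ENNReal.ofReal (η x / x ^ 4 + 1) :=
            ENNReal.ofReal_le_ofReal hstep
        _ = ENNReal.ofReal (η x / x ^ 4) + 1 := by
            rw [ENNReal.ofReal_add h4 zero_le_one, ENNReal.ofReal_one]
    have hmono := lintegral_mono_ae hle
    have hadd : (∫⁻ x in Ioo 0 r, (ENNReal.ofReal (η x / x ^ 4) + 1))
        = (∫⁻ x in Ioo 0 r, ENNReal.ofReal (η x / x ^ 4)) + volume (Ioo (0:ℝ) r) := by
      rw [lintegral_add_right _ measurable_const, setLIntegral_const]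
      simp [mul_comm]
    refine ne_top_of_le_ne_top ?_ (hmono.trans_eq hadd)
    have : volume (Ioo (0:ℝ) r) = ENNReal.ofReal r := by simp
    rw [this]
    exact ENNReal.add_ne_top.mpr ⟨hW4, ENNReal.ofReal_ne_top⟩
  -- nonnegativity and integrability
  have hnn : ∀ k : ℕ, ∀ᵐ x ∂(volume.restrict (Ioo 0 r)), 0 ≤ η x / x ^ k := by
    intro k
    filter_upwards [hbd, ae_restrict_mem measurableSet_Ioo] with x hη hx
    have hx0 : (0:ℝ) < x := hx.1
    exact div_nonneg hη.1 (by positivity)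
  have hint : ∀ k : ℕ, k ≤ 4 → IntegrableOn (fun x => η x / x ^ k) (Ioo 0 r) := by
    intro k hk
    refine ⟨(hmeas.div (measurable_id.pow_const k)).aestronglyMeasurable, ?_⟩
    rw [hasFiniteIntegral_iff_ofReal (hnn k)]
    exact (hfin k hk).lt_top
  -- real versions
  set u := ∫ x in Ioo 0 r, η x / x ^ 2 with hu_def
  set v := ∫ x in Ioo 0 r, η x / x ^ 3 with hv_def
  set w := ∫ x in Ioo 0 r, η x / x ^ 4 with hw_def
  have hUu : U = ENNReal.ofReal u := by
    rw [hU, hu_def, ofReal_integral_eq_lintegral_ofReal (hint 2 (by norm_num)) (hnn 2)]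
  have hVv : V = ENNReal.ofReal v := by
    rw [hV, hv_def, ofReal_integral_eq_lintegral_ofReal (hint 3 (by norm_num)) (hnn 3)]
  have hWw : W = ENNReal.ofReal w := by
    rw [hW, hw_def, ofReal_integral_eq_lintegral_ofReal (hint 4 le_rfl) (hnn 4)]
  have hu0 : 0 ≤ u := integral_nonneg_of_ae (hnn 2)
  have hv0 : 0 ≤ v := integral_nonneg_of_ae (hnn 3)
  have hup : 0 < u := by rwa [hUu, ENNReal.ofReal_pos] at hUpos
  -- Step 1 : v ≥ u/r + u²/2
  have hstep1 : u * r⁻¹ + u ^ 2 / 2 ≤ v := by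
    set c := r⁻¹ + u with hc_def
    have hrinv : (0:ℝ) < r⁻¹ := by positivity
    have hcpos : 0 < c := by rw [hc_def]; linarith
    have hrc : r⁻¹ < c := by rw [hc_def]; linarith
    have hcinv_pos : 0 < c⁻¹ := by positivity
    have hcr : c⁻¹ < r := inv_lt_of_inv_lt₀ hr hrc
    have hcont1 : ContinuousOn (fun x : ℝ => x⁻¹ - c) (Ioi 0) := by
      apply ContinuousOn.sub _ continuousOn_const
      exact continuousOn_inv₀.mono (fun x hx => by simpa using ne_of_gt hx)
    have heq1 : ∀ᵐ x ∂(volume.restrict (Ioo 0 r)),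
        η x / x ^ 3 - c * (η x / x ^ 2) = (x⁻¹ - c) * η x / x ^ 2 := by
      filter_upwards [ae_restrict_mem measurableSet_Ioo] with x hx
      have hx0 : x ≠ 0 := ne_of_gt hx.1
      field_simp
    have hInt1 : IntegrableOn (fun x => (x⁻¹ - c) * η x / x ^ 2) (Ioo 0 r) :=
      ((hint 3 (by norm_num)).sub ((hint 2 (by norm_num)).const_mul c)).congr heq1
    have hneg1 : ∀ x ∈ Ioo c⁻¹ r, (fun x : ℝ => x⁻¹ - c) x ≤ 0 := by
      intro x hx
      have h := inv_lt_of_inv_lt₀ hcpos hx.1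
      simpa using h.le
    have hpos1 : ∀ x ∈ Ioo 0 r, x ∉ Ioo c⁻¹ r → 0 ≤ (fun x : ℝ => x⁻¹ - c) x := by
      intro x hx hxn
      have hx0 : (0:ℝ) < x := hx.1
      have hxle : x ≤ c⁻¹ := by
        by_contra h
        push_neg at h
        exact hxn ⟨h, hx.2⟩
      have := le_inv_of_le_inv₀ hx0 hxle
      simp only
      linarith
    have hb1 := bathtub r η hbd c⁻¹ r hcinv_pos hcr le_rfl
      (fun x : ℝ => x⁻¹ - c) hcont1 hneg1 hpos1 hInt1
    have hRHS : ∫ x in Ioo 0 r, (x⁻¹ - c) * η x / x ^ 2 = v - c * u := by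
      rw [← integral_congr_ae heq1,
        integral_sub (hint 3 (by norm_num)) ((hint 2 (by norm_num)).const_mul c),
        MeasureTheory.integral_const_mul]
    have hLHS : ∫ x in Ioo c⁻¹ r, (x⁻¹ - c) / x ^ 2 = -(u ^ 2) / 2 := by
      rw [← integral_Ioc_eq_integral_Ioo, ← intervalIntegral.integral_of_le hcr.le]
      have hFTC : ∫ x in c⁻¹..r, (x⁻¹ - c) / x ^ 2
          = (fun x : ℝ => -((x⁻¹ - c) ^ 2 / 2)) r
            - (fun x : ℝ => -((x⁻¹ - c) ^ 2 / 2)) c⁻¹ := by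
        apply intervalIntegral.integral_eq_sub_of_hasDerivAt
        · intro x hx
          rw [uIcc_of_le hcr.le] at hx
          have hx0 : (0:ℝ) < x := lt_of_lt_of_le hcinv_pos hx.1
          have h1 := (((hasDerivAt_inv hx0.ne').sub_const c).pow 2).div_const 2
          have h2 := h1.neg
          refine h2.congr_deriv ?_
          have hx2 : x ^ 2 ≠ 0 := by positivity
          norm_num
          ring
        · apply ContinuousOn.intervalIntegrable
          rw [uIcc_of_le hcr.le]
          apply ContinuousOn.div
          · exact hcont1.mono (fun x hx => lt_of_lt_of_le hcinv_pos hx.1)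
          · exact (continuous_pow 2).continuousOn
          · intro x hx
            exact pow_ne_zero 2 (ne_of_gt (lt_of_lt_of_le hcinv_pos hx.1))
      rw [hFTC]
      simp only [inv_inv]
      rw [hc_def]
      ring
    rw [hRHS, hLHS, hc_def] at hb1
    nlinarith [hb1]
  -- Step 2 : main inequality
  have hfinal : u ^ 3 / 12 + v ^ 2 / u ≤ w := by
    set m := v / u with hm_def
    have hm : r⁻¹ + u / 2 ≤ m := by
      rw [hm_def, le_div_iff₀ hup]
      nlinarith [hstep1]
    have hrinv : (0:ℝ) < r⁻¹ := by positivity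
    set q := m - u / 2 with hq_def
    set p := m + u / 2 with hp_def
    have hq0 : 0 < q := by rw [hq_def]; linarith
    have hp0 : 0 < p := by rw [hp_def]; linarith
    have hqp : q < p := by rw [hq_def, hp_def]; linarith
    have hrq : r⁻¹ ≤ q := by rw [hq_def]; linarith
    have ha0 : 0 < p⁻¹ := by positivity
    have hab2 : p⁻¹ < q⁻¹ := by gcongr
    have hbr2 : q⁻¹ ≤ r := inv_le_of_inv_le₀ hr hrq
    set φ := fun x : ℝ => (x⁻¹ - m) ^ 2 - (u / 2) ^ 2 with hφ_def
    have hcont2 : ContinuousOn φ (Ioi 0) := by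
      apply ContinuousOn.sub _ continuousOn_const
      exact (ContinuousOn.sub (continuousOn_inv₀.mono
        (fun x hx => by simpa using ne_of_gt hx)) continuousOn_const).pow 2
    have heq2 : ∀ᵐ x ∂(volume.restrict (Ioo 0 r)),
        η x / x ^ 4 - 2 * m * (η x / x ^ 3) + (m ^ 2 - (u / 2) ^ 2) * (η x / x ^ 2)
          = φ x * η x / x ^ 2 := by
      filter_upwards [ae_restrict_mem measurableSet_Ioo] with x hx
      have hx0 : x ≠ 0 := ne_of_gt hx.1
      simp only [hφ_def]
      field_simp
      ring
    have hInt2 : IntegrableOn (fun x => φ x * η x / x ^ 2) (Ioo 0 r) :=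
      (((hint 4 le_rfl).sub ((hint 3 (by norm_num)).const_mul (2 * m))).add
        ((hint 2 (by norm_num)).const_mul _)).congr heq2
    have hneg2 : ∀ x ∈ Ioo p⁻¹ q⁻¹, φ x ≤ 0 := by
      intro x hx
      have hx0 : 0 < x := lt_trans ha0 hx.1
      have h1 : x⁻¹ < p := inv_lt_of_inv_lt₀ hp0 hx.1
      have h2 : q < x⁻¹ := lt_inv_of_lt_inv₀ hx0 hx.2
      simp only [hφ_def]
      rw [hq_def] at h2
      rw [hp_def] at h1
      nlinarith
    have hpos2 : ∀ x ∈ Ioo 0 r, x ∉ Ioo p⁻¹ q⁻¹ → 0 ≤ φ x := by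
      intro x hx hxn
      have hx0 : (0:ℝ) < x := hx.1
      simp only [hφ_def]
      rcases not_and_or.mp (fun h => hxn ⟨h.1, h.2⟩) with h | h
      · push_neg at h
        have hpx : p ≤ x⁻¹ := le_inv_of_le_inv₀ hx0 h
        rw [hp_def] at hpx
        nlinarith [hup]
      · push_neg at h
        have hqx : x⁻¹ ≤ q := inv_le_of_inv_le₀ hq0 h
        rw [hq_def] at hqx
        nlinarith [hup]
    have hb2 := bathtub r η hbd p⁻¹ q⁻¹ ha0 hab2 hbr2 φ hcont2 hneg2 hpos2 hInt2
    have hRHS : ∫ x in Ioo 0 r, φ x * η x / x ^ 2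
        = w - 2 * m * v + (m ^ 2 - (u / 2) ^ 2) * u := by
      have hi1 : Integrable (fun x => η x / x ^ 4 - 2 * m * (η x / x ^ 3))
          (volume.restrict (Ioo 0 r)) :=
        (hint 4 le_rfl).sub ((hint 3 (by norm_num)).const_mul (2 * m))
      have hi2 : Integrable (fun x => (m ^ 2 - (u / 2) ^ 2) * (η x / x ^ 2))
          (volume.restrict (Ioo 0 r)) :=
        (hint 2 (by norm_num)).const_mul _
      rw [← integral_congr_ae heq2,
        integral_add hi1 hi2,
        integral_sub (hint 4 le_rfl) ((hint 3 (by norm_num)).const_mul (2 * m)),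
        MeasureTheory.integral_const_mul, MeasureTheory.integral_const_mul]
    have hLHS : ∫ x in Ioo p⁻¹ q⁻¹, φ x / x ^ 2 = -(u ^ 3) / 6 := by
      simp only [hφ_def]
      rw [← integral_Ioc_eq_integral_Ioo, ← intervalIntegral.integral_of_le hab2.le]
      have hG : ∀ x ∈ uIcc p⁻¹ q⁻¹,
          HasDerivAt (fun x : ℝ => -((x⁻¹ - m) ^ 3 / 3) + (u / 2) ^ 2 * x⁻¹)
            (((x⁻¹ - m) ^ 2 - (u / 2) ^ 2) / x ^ 2) x := by
        intro x hx
        rw [uIcc_of_le hab2.le] at hx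
        have hx0 : (0:ℝ) < x := lt_of_lt_of_le ha0 hx.1
        have h1 := ((((hasDerivAt_inv hx0.ne').sub_const m).pow 3).div_const 3).neg
        have h2 := (hasDerivAt_inv hx0.ne').const_mul ((u / 2) ^ 2)
        have h3 := h1.add h2
        refine h3.congr_deriv ?_
        have hx2 : x ^ 2 ≠ 0 := by positivity
        norm_num
        ring
      have hie : IntervalIntegrable
          (fun x : ℝ => ((x⁻¹ - m) ^ 2 - (u / 2) ^ 2) / x ^ 2) volume p⁻¹ q⁻¹ := by
        apply ContinuousOn.intervalIntegrable
        rw [uIcc_of_le hab2.le]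
        apply ContinuousOn.div
        · exact (hcont2.mono (fun x hx => lt_of_lt_of_le ha0 hx.1)).congr
            (fun x hx => by simp [hφ_def])
        · exact (continuous_pow 2).continuousOn
        · intro x hx
          exact pow_ne_zero 2 (ne_of_gt (lt_of_lt_of_le ha0 hx.1))
      have hFTC := intervalIntegral.integral_eq_sub_of_hasDerivAt hG hie
      rw [hFTC]
      simp only [inv_inv]
      rw [hq_def, hp_def]
      ring
    rw [hRHS, hLHS] at hb2
    have hmv : 2 * m * v - m ^ 2 * u = v ^ 2 / u := by
      rw [hm_def]
      field_simp
      ring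
    nlinarith [hb2, hmv]
  -- transfer to ℝ≥0∞
  rw [hUu, hVv, hWw]
  calc ENNReal.ofReal u ^ 3 / 12 + ENNReal.ofReal v ^ 2 / ENNReal.ofReal u
      = ENNReal.ofReal (u ^ 3) / ENNReal.ofReal 12
        + ENNReal.ofReal (v ^ 2) / ENNReal.ofReal u := by
        rw [ENNReal.ofReal_pow hu0, ENNReal.ofReal_pow hv0]
        norm_num
    _ = ENNReal.ofReal (u ^ 3 / 12) + ENNReal.ofReal (v ^ 2 / u) := by
        rw [← ENNReal.ofReal_div_of_pos (by norm_num), ← ENNReal.ofReal_div_of_pos hup]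
    _ = ENNReal.ofReal (u ^ 3 / 12 + v ^ 2 / u) := by
        rw [← ENNReal.ofReal_add (by positivity) (div_nonneg (sq_nonneg v) hup.le)]
    _ ≤ ENNReal.ofReal w := ENNReal.ofReal_le_ofReal hfinal
end

section
/- Let P, Q, U₋, U₊, V₋, V₊ be real numbers with P > 0, Q > 0, U₋ > 0, U₊ > 0, and suppose U₋ + U₊ = P + Q, 2V₋ − 2V₊ = P² − Q², 2V₋ > U₋², and 2V₊ > U₊². Then 2(U₋³ + U₊³) + 3U₋(2V₋ − U₋²) + 3U₊(2V₊ − U₊²) > 2P³ + 2Q³. -/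
/-- The elementary inequality from the proof of Lemma 4.7 of the paper, the key step in
showing that the fourth-order coefficient `A` governing the Pearcey scaling at a cusp is
strictly positive. -/
theorem cusp_A_positive_key_inequality
    (P Q Um Up Vm Vp : ℝ)
    (hP : 0 < P) (hQ : 0 < Q) (hUm : 0 < Um) (hUp : 0 < Up)
    (hsum : Um + Up = P + Q)
    (hV : 2 * Vm - 2 * Vp = P ^ 2 - Q ^ 2)
    (hGm : Um ^ 2 < 2 * Vm) (hGp : Up ^ 2 < 2 * Vp) :
    2 * P ^ 3 + 2 * Q ^ 3 <
      2 * (Um ^ 3 + Up ^ 3) + 3 * Um * (2 * Vm - Um ^ 2) + 3 * Up * (2 * Vp - Up ^ 2) := by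
  have hPeq : P = Um + Up - Q := by linarith
  subst hPeq
  rcases le_or_gt Q Up with h | h
  · -- eliminate Vm using hV: 2Vm = 2Vp + P² - Q²
    nlinarith [mul_pos (add_pos hUm hUp) (sub_pos.2 hGp),
      mul_nonneg (mul_nonneg (add_pos hUm hUp).le (sub_nonneg.2 h)) hQ.le,
      mul_pos hUm (sub_pos.2 hGm), mul_pos hUm (sub_pos.2 hGp)]
  · nlinarith [mul_pos (add_pos hUm hUp) (sub_pos.2 hGm),
      mul_nonneg (mul_nonneg (add_pos hUm hUp).le (sub_pos.2 h).le)
        (by linarith : (0:ℝ) ≤ Um + Up - Q),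
      mul_pos hUp (sub_pos.2 hGm), mul_pos hUp (sub_pos.2 hGp)]
end

section
/- Let t_c > 0 and z_c ∈ (E₋, E₊) with −t_c < z_c < 0, and assume the normalized cusp equations: z_c + t_c·f₀(z_c)/(f₀(z_c)+1) = 0; 1 + t_c·f₀′(z_c)/(f₀(z_c)+1)² = 0; and f₀″(z_c) − 2·f₀′(z_c)²/(f₀(z_c)+1) = 0. For z ∈ (E₋, E₊) with −t_c < z < 0 define G(z) = ∫_{−∞}^{E₋} log(z−x)·ρ₀(x) dx + ∫_{E₊}^{∞} log(x−z)·ρ₀(x) dx + (z+t_c)·log(z+t_c) − z·log(−z) + z·log(β/(1−β)), and set A = t_c⁴·∫_ℝ ρ₀(x)/(4(z_c−x)⁴) dx − t_c⁴/(12(t_c+z_c)³) − t_c⁴/(12(−z_c)³). Then G is four times differentiable at z_c, with G′(z_c) = G″(z_c) = G‴(z_c) = 0 and G⁗(z_c) = −24·t_c^{−4}·A. -/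
open MeasureTheory Set


lemma aux_integrable (μ : Measure ℝ) (h : ℝ → ℝ) (hm : AEStronglyMeasurable h μ)
    (R C : ℝ) (hfin : μ (Icc (-R) R) < ⊤)
    (hb : ∀ᵐ x ∂μ, ‖h x‖ ≤ Set.indicator (Icc (-R) R) (fun _ => C) x) :
    Integrable h μ := by
  refine Integrable.mono' ?_ hm hb
  rw [integrable_indicator_iff measurableSet_Icc]
  exact integrableOn_const hfin.ne

lemma aux_abs_div_pow_le {ρx w x dd : ℝ} (k : ℕ) (hρ : |ρx| ≤ 1) (hd : 0 < dd)
    (hdist : dd ≤ |w - x|) : ‖ρx / (w - x) ^ k‖ ≤ (dd ^ k)⁻¹ := by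
  rw [Real.norm_eq_abs, abs_div, abs_pow]
  have h1 : dd ^ k ≤ |w - x| ^ k := pow_le_pow_left₀ hd.le hdist k
  have h2 : (0:ℝ) < dd ^ k := pow_pos hd k
  calc |ρx| / |w - x| ^ k ≤ 1 / dd ^ k :=
        div_le_div₀ zero_le_one hρ h2 h1
    _ = (dd ^ k)⁻¹ := one_div _

lemma aux_hasDerivAt_pow (ρ : ℝ → ℝ) (hmeas : Measurable ρ) (R : ℝ)
    (hρ0 : ∀ x, x ∉ Icc (-R) R → ρ x = 0)
    (hbd : ∀ᵐ x ∂(volume : Measure ℝ), |ρ x| ≤ 1)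
    (s : Set ℝ) (hs : MeasurableSet s)
    (k : ℕ) (z ε dd : ℝ) (hε : 0 < ε) (hd : 0 < dd)
    (hdist : ∀ w ∈ Metric.ball z ε, ∀ x ∈ s, dd ≤ |w - x|) :
    HasDerivAt (fun w => ∫ x in s, ρ x / (w - x) ^ k)
      (∫ x in s, -(k:ℝ) * (ρ x / (z - x) ^ (k+1))) z := by
  have hfin : (volume.restrict s) (Icc (-R) R) < ⊤ := by
    rw [Measure.restrict_apply measurableSet_Icc]
    exact lt_of_le_of_lt (measure_mono inter_subset_left) measure_Icc_lt_top
  have hbd' : ∀ᵐ x ∂(volume.restrict s), |ρ x| ≤ 1 := ae_restrict_of_ae hbd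
  have hmem : ∀ᵐ x ∂(volume.restrict s), x ∈ s := ae_restrict_mem hs
  have hFmeas : ∀ w : ℝ, AEStronglyMeasurable (fun x => ρ x / (w - x) ^ k) (volume.restrict s) :=
    fun w => ((hmeas.div ((measurable_const.sub measurable_id).pow_const k))).aestronglyMeasurable
  have hF'meas : ∀ w : ℝ, AEStronglyMeasurable
      (fun x => -(k:ℝ) * (ρ x / (w - x) ^ (k+1))) (volume.restrict s) :=
    fun w => (measurable_const.mul
      (hmeas.div ((measurable_const.sub measurable_id).pow_const (k+1)))).aestronglyMeasurable
  have key := hasDerivAt_integral_of_dominated_loc_of_deriv_le (μ := volume.restrict s)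
    (F := fun w x => ρ x / (w - x) ^ k)
    (F' := fun w x => -(k:ℝ) * (ρ x / (w - x) ^ (k+1)))
    (bound := Set.indicator (Icc (-R) R) (fun _ => (k:ℝ) * (dd ^ (k+1))⁻¹))
    (Metric.ball_mem_nhds z hε) (Filter.Eventually.of_forall fun w => hFmeas w)
    (aux_integrable _ _ (hFmeas z) R ((dd ^ k)⁻¹) hfin ?_)
    (hF'meas z) ?_ ?_ ?_
  · exact key.2
  · filter_upwards [hbd', hmem] with x hx hxs
    by_cases hR : x ∈ Icc (-R) R
    · rw [Set.indicator_of_mem hR]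
      exact aux_abs_div_pow_le k hx hd (hdist z (Metric.mem_ball_self hε) x hxs)
    · rw [Set.indicator_of_notMem hR, hρ0 x hR]
      simp
  · filter_upwards [hbd', hmem] with x hx hxs w hw
    by_cases hR : x ∈ Icc (-R) R
    · rw [Set.indicator_of_mem hR, norm_mul]
      have := aux_abs_div_pow_le (k+1) hx hd (hdist w hw x hxs)
      have hk : ‖-(k:ℝ)‖ = (k:ℝ) := by simp
      rw [hk]
      exact mul_le_mul_of_nonneg_left this (Nat.cast_nonneg k)
    · rw [Set.indicator_of_notMem hR, hρ0 x hR]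
      simp
  · rw [integrable_indicator_iff measurableSet_Icc]
    exact integrableOn_const hfin.ne
  · filter_upwards [hmem] with x hxs w hw
    have hne : w - x ≠ 0 := by
      have := hdist w hw x hxs
      intro h; rw [h] at this; simp at this; linarith
    have hpow : HasDerivAt (fun w => (w - x) ^ k) ((k * (w - x) ^ (k-1)) * 1) w :=
      (hasDerivAt_pow k (w - x)).comp w ((hasDerivAt_id w).sub_const x)
    have hdiv := (hasDerivAt_const w (ρ x)).div hpow (pow_ne_zero k hne)
    refine hdiv.congr_deriv ?_
    rcases Nat.eq_zero_or_pos k with hk0 | hk0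
    · subst hk0; simp
    · have hkk : k - 1 + 1 = k := Nat.succ_pred_eq_of_pos hk0
      have hden : ((w - x) ^ k) ^ 2 = (w - x) ^ (k - 1) * (w - x) ^ (k + 1) := by
        rw [← pow_add, ← pow_mul]
        congr 1
        omega
      rw [hden, ← div_div]
      have hnum : (0 * (w - x) ^ k - ρ x * ((k:ℝ) * (w - x) ^ (k - 1) * 1))
          = (-((k:ℝ) * ρ x)) * (w - x) ^ (k - 1) := by ring
      rw [hnum, mul_div_cancel_right₀ _ (pow_ne_zero _ hne)]
      ring

lemma aux_hasDerivAt_log (ρ : ℝ → ℝ) (hmeas : Measurable ρ) (R : ℝ)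
    (hρ0 : ∀ x, x ∉ Icc (-R) R → ρ x = 0)
    (hbd : ∀ᵐ x ∂(volume : Measure ℝ), |ρ x| ≤ 1)
    (s : Set ℝ) (hs : MeasurableSet s)
    (z ε dd : ℝ) (hε : 0 < ε) (hd : 0 < dd)
    (hdist : ∀ w ∈ Metric.ball z ε, ∀ x ∈ s, dd ≤ |w - x|) :
    HasDerivAt (fun w => ∫ x in s, Real.log (w - x) * ρ x)
      (∫ x in s, ρ x / (z - x) ^ 1) z := by
  have hfin : (volume.restrict s) (Icc (-R) R) < ⊤ := by
    rw [Measure.restrict_apply measurableSet_Icc]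
    exact lt_of_le_of_lt (measure_mono inter_subset_left) measure_Icc_lt_top
  have hbd' : ∀ᵐ x ∂(volume.restrict s), |ρ x| ≤ 1 := ae_restrict_of_ae hbd
  have hmem : ∀ᵐ x ∂(volume.restrict s), x ∈ s := ae_restrict_mem hs
  have hFmeas : ∀ w : ℝ, AEStronglyMeasurable (fun x => Real.log (w - x) * ρ x)
      (volume.restrict s) := fun w =>
    ((Real.measurable_log.comp (measurable_const.sub measurable_id)).mul hmeas).aestronglyMeasurable
  have hF'meas : ∀ w : ℝ, AEStronglyMeasurable (fun x => ρ x / (w - x) ^ 1)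
      (volume.restrict s) := fun w =>
    (hmeas.div ((measurable_const.sub measurable_id).pow_const 1)).aestronglyMeasurable
  have key := hasDerivAt_integral_of_dominated_loc_of_deriv_le (μ := volume.restrict s)
    (F := fun w x => Real.log (w - x) * ρ x)
    (F' := fun w x => ρ x / (w - x) ^ 1)
    (bound := Set.indicator (Icc (-R) R) (fun _ => (dd ^ 1)⁻¹))
    (Metric.ball_mem_nhds z hε) (Filter.Eventually.of_forall fun w => hFmeas w)
    (aux_integrable _ _ (hFmeas z) R (|Real.log dd| + |Real.log (|z| + ε + R)|) hfin ?_)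
    (hF'meas z) ?_ ?_ ?_
  · exact key.2
  · filter_upwards [hbd', hmem] with x hx hxs
    by_cases hR : x ∈ Icc (-R) R
    · rw [Set.indicator_of_mem hR]
      have h1 : dd ≤ |z - x| := hdist z (Metric.mem_ball_self hε) x hxs
      have h2 : |z - x| ≤ |z| + ε + R := by
        have hxR : |x| ≤ R := abs_le.2 ⟨hR.1, hR.2⟩
        have := abs_sub (z) (x)
        calc |z - x| ≤ |z| + |x| := abs_sub _ _
          _ ≤ |z| + ε + R := by linarith
      have hpos : 0 < |z - x| := lt_of_lt_of_le hd h1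
      have hlog : |Real.log (z - x)| ≤ |Real.log dd| + |Real.log (|z| + ε + R)| := by
        rw [← Real.log_abs]
        have hl1 : Real.log dd ≤ Real.log |z - x| := Real.log_le_log hd h1
        have hl2 : Real.log |z - x| ≤ Real.log (|z| + ε + R) := Real.log_le_log hpos h2
        rw [abs_le]
        constructor
        · have := neg_abs_le (Real.log dd); nlinarith [abs_nonneg (Real.log (|z| + ε + R))]
        · have := le_abs_self (Real.log (|z| + ε + R)); nlinarith [abs_nonneg (Real.log dd)]
      rw [Real.norm_eq_abs, abs_mul]
      calc |Real.log (z - x)| * |ρ x| ≤ (|Real.log dd| + |Real.log (|z| + ε + R)|) * 1 :=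
            mul_le_mul hlog hx (abs_nonneg _) (by positivity)
        _ = _ := mul_one _
    · rw [Set.indicator_of_notMem hR, hρ0 x hR]
      simp
  · filter_upwards [hbd', hmem] with x hx hxs w hw
    by_cases hR : x ∈ Icc (-R) R
    · rw [Set.indicator_of_mem hR]
      exact aux_abs_div_pow_le 1 hx hd (hdist w hw x hxs)
    · rw [Set.indicator_of_notMem hR, hρ0 x hR]
      simp
  · rw [integrable_indicator_iff measurableSet_Icc]
    exact integrableOn_const hfin.ne
  · filter_upwards [hmem] with x hxs w hw
    have hne : w - x ≠ 0 := by
      have := hdist w hw x hxs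
      intro h; rw [h] at this; simp at this; linarith
    have hlog : HasDerivAt (fun w => Real.log (w - x)) ((w - x)⁻¹ * 1) w :=
      by have h := (Real.hasDerivAt_log hne).comp w ((hasDerivAt_id w).sub_const x); exact h
    have := hlog.mul_const (ρ x)
    refine this.congr_deriv ?_
    rw [pow_one]
    ring

noncomputable def NN (ρ : ℝ → ℝ) (Em Ep : ℝ) (k : ℕ) (z : ℝ) : ℝ :=
  (∫ x in Iic Em, ρ x / (z - x) ^ k) + ∫ x in Ici Ep, ρ x / (z - x) ^ k

noncomputable def LL (ρ : ℝ → ℝ) (Em Ep : ℝ) (z : ℝ) : ℝ :=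
  (∫ x in Iic Em, Real.log (z - x) * ρ x) + ∫ x in Ici Ep, Real.log (z - x) * ρ x

lemma hasDerivAt_NN (ρ : ℝ → ℝ) (hmeas : Measurable ρ) (R : ℝ)
    (hρ0 : ∀ x, x ∉ Icc (-R) R → ρ x = 0)
    (hbd : ∀ᵐ x ∂(volume : Measure ℝ), |ρ x| ≤ 1)
    (Em Ep : ℝ) (k : ℕ) (z ε dd : ℝ) (hε : 0 < ε) (hd : 0 < dd)
    (hdist1 : ∀ w ∈ Metric.ball z ε, ∀ x ∈ Iic Em, dd ≤ |w - x|)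
    (hdist2 : ∀ w ∈ Metric.ball z ε, ∀ x ∈ Ici Ep, dd ≤ |w - x|) :
    HasDerivAt (NN ρ Em Ep k) (-(k:ℝ) * NN ρ Em Ep (k+1) z) z := by
  have h1 := aux_hasDerivAt_pow ρ hmeas R hρ0 hbd (Iic Em) measurableSet_Iic k z ε dd hε hd hdist1
  have h2 := aux_hasDerivAt_pow ρ hmeas R hρ0 hbd (Ici Ep) measurableSet_Ici k z ε dd hε hd hdist2
  have h := h1.add h2
  simp only [integral_const_mul] at h
  refine h.congr_deriv ?_
  simp only [NN]
  ring

lemma hasDerivAt_LL (ρ : ℝ → ℝ) (hmeas : Measurable ρ) (R : ℝ)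
    (hρ0 : ∀ x, x ∉ Icc (-R) R → ρ x = 0)
    (hbd : ∀ᵐ x ∂(volume : Measure ℝ), |ρ x| ≤ 1)
    (Em Ep : ℝ) (z ε dd : ℝ) (hε : 0 < ε) (hd : 0 < dd)
    (hdist1 : ∀ w ∈ Metric.ball z ε, ∀ x ∈ Iic Em, dd ≤ |w - x|)
    (hdist2 : ∀ w ∈ Metric.ball z ε, ∀ x ∈ Ici Ep, dd ≤ |w - x|) :
    HasDerivAt (LL ρ Em Ep) (NN ρ Em Ep 1 z) z := by
  have h1 := aux_hasDerivAt_log ρ hmeas R hρ0 hbd (Iic Em) measurableSet_Iic z ε dd hε hd hdist1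
  have h2 := aux_hasDerivAt_log ρ hmeas R hρ0 hbd (Ici Ep) measurableSet_Ici z ε dd hε hd hdist2
  exact h1.add h2

lemma aux_split (Em Ep : ℝ) (hE : Em < Ep) (f : ℝ → ℝ) (hf : Integrable f (volume : Measure ℝ))
    (h0 : ∀ᵐ x ∂(volume : Measure ℝ), x ∈ Ioo Em Ep → f x = 0) :
    (∫ x, f x) = (∫ x in Iic Em, f x) + ∫ x in Ici Ep, f x := by
  rw [← intervalIntegral.integral_Iic_add_Ioi (hf.integrableOn) (hf.integrableOn)]
  congr 1
  rw [← Ioo_union_Ici_eq_Ioi hE, setIntegral_union ((Iio_disjoint_Ici le_rfl).mono_left Ioo_subset_Iio_self) measurableSet_Ici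
    hf.integrableOn hf.integrableOn]
  have hz : (∫ x in Ioo Em Ep, f x) = 0 := by
    have h0' : ∀ᵐ x ∂(volume.restrict (Ioo Em Ep)), f x = 0 :=
      (ae_restrict_iff' measurableSet_Ioo).2 h0
    calc (∫ x in Ioo Em Ep, f x) = ∫ _x in Ioo Em Ep, (0:ℝ) := integral_congr_ae h0'
      _ = 0 := integral_zero _ _
  rw [hz, zero_add]

lemma val_g1 (tc zc c N1 : ℝ) (hzt : 0 < zc + tc) (hz0 : zc < 0) (hc : 0 < c)
    (h : (c * Real.exp N1) * (zc + tc) = -zc) :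
    N1 + (Real.log (zc + tc) - Real.log (-zc) + Real.log c) = 0 := by
  have h2 := congrArg Real.log h
  rw [Real.log_mul (by positivity) (ne_of_gt hzt),
    Real.log_mul (ne_of_gt hc) (Real.exp_ne_zero _), Real.log_exp] at h2
  linarith

lemma alg1 (tc zc aa : ℝ) (hzt : 0 < zc + tc) (haa : 0 < aa)
    (h : zc + tc * aa / (aa + 1) = 0) : aa * (zc + tc) = -zc := by
  have hne : aa + 1 ≠ 0 := by positivity
  field_simp at h
  linarith

lemma alg2 (tc zc aa p : ℝ) (htc : 0 < tc) (hzt : 0 < zc + tc) (hz0 : zc < 0) (haa : 0 < aa)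
    (h1 : aa * (zc + tc) = -zc) (h2 : 1 + tc * (-(aa * p)) / (aa + 1) ^ 2 = 0) :
    p = -tc / (zc * (zc + tc)) := by
  have hne : aa + 1 ≠ 0 := by positivity
  field_simp at h2
  -- h2 should now say (aa+1)^2 = tc * (aa * p) (in some arrangement)
  have h4 : (aa + 1) * (zc + tc) = tc := by linear_combination h1
  have h5 : tc * tc = tc * (-(p * (zc * (zc + tc)))) := by
    linear_combination (zc + tc) ^ 2 * h2 - ((aa + 1) * (zc + tc) + tc) * h4 + tc * p * (zc + tc) * h1
  have h6 : p * (zc * (zc + tc)) = -tc := by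
    have := mul_left_cancel₀ (ne_of_gt htc) h5
    linarith
  have hne2 : zc * (zc + tc) ≠ 0 := by
    intro h; rcases mul_eq_zero.1 h with h | h <;> nlinarith
  rw [eq_div_iff hne2]
  linarith [h6]

lemma alg3 (tc zc aa p q : ℝ) (htc : 0 < tc) (hzt : 0 < zc + tc) (hz0 : zc < 0) (haa : 0 < aa)
    (h1 : aa * (zc + tc) = -zc) (hp : p = -tc / (zc * (zc + tc)))
    (h3 : (aa * p ^ 2 + 2 * aa * q) - 2 * (-(aa * p)) ^ 2 / (aa + 1) = 0) :
    q = -(tc * (tc + 2 * zc)) / (2 * (zc ^ 2 * (zc + tc) ^ 2)) := by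
  have hne : aa + 1 ≠ 0 := by positivity
  have haav : aa = -zc / (zc + tc) := by
    rw [eq_div_iff (ne_of_gt hzt)]; linarith [h1]
  have hz0' : zc ≠ 0 := ne_of_lt hz0
  have hzt' : zc + tc ≠ 0 := ne_of_gt hzt
  have h3' : (aa * p ^ 2 + 2 * aa * q) * (aa + 1) = 2 * (aa * p) ^ 2 := by
    field_simp at h3
    linarith
  have hq1 : (p ^ 2 + 2 * q) * (aa + 1) = 2 * aa * p ^ 2 :=
    mul_left_cancel₀ (ne_of_gt haa) (by linear_combination h3')
  rw [haav, hp] at hq1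
  field_simp at hq1
  have hfac : tc * ((zc + tc) * (zc * (zc + tc)) ^ 2) ≠ 0 := by positivity
  have key : q * (2 * (zc ^ 2 * (zc + tc) ^ 2)) = -(tc * (tc + 2 * zc)) := by
    refine mul_left_cancel₀ hfac ?_
    linear_combination (zc + tc) ^ 3 * zc ^ 2 * hq1
  rw [eq_div_iff (by positivity)]
  linarith

lemma val_g2 (tc zc p : ℝ) (hzt : 0 < zc + tc) (hz0 : zc < 0)
    (hp : p = -tc / (zc * (zc + tc))) :
    -p + ((zc + tc)⁻¹ - zc⁻¹) = 0 := by
  rw [hp]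
  have hz0' : zc ≠ 0 := ne_of_lt hz0
  have hzt' : zc + tc ≠ 0 := ne_of_gt hzt
  field_simp
  ring

lemma val_g3 (tc zc q : ℝ) (hzt : 0 < zc + tc) (hz0 : zc < 0)
    (hq : q = -(tc * (tc + 2 * zc)) / (2 * (zc ^ 2 * (zc + tc) ^ 2))) :
    2 * q + (-((zc + tc) ^ 2)⁻¹ + (zc ^ 2)⁻¹) = 0 := by
  rw [hq]
  have hz0' : zc ≠ 0 := ne_of_lt hz0
  have hzt' : zc + tc ≠ 0 := ne_of_gt hzt
  field_simp
  ring

lemma val_g4 (tc zc r : ℝ) (htc : 0 < tc) (hzt : 0 < zc + tc) (hz0 : zc < 0) :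
    -6 * r + (2 * ((zc + tc) ^ 3)⁻¹ - 2 * (zc ^ 3)⁻¹) =
      -24 / tc ^ 4 * (tc ^ 4 * (4⁻¹ * r) - tc ^ 4 / (12 * (tc + zc) ^ 3) - tc ^ 4 / (12 * (-zc) ^ 3)) := by
  have hz0' : zc ≠ 0 := ne_of_lt hz0
  have hzt' : zc + tc ≠ 0 := ne_of_gt hzt
  have htz' : tc + zc ≠ 0 := by intro h; apply hzt'; linarith
  have htc' : tc ≠ 0 := ne_of_gt htc
  rw [show (-zc) ^ 3 = -zc ^ 3 by ring]
  field_simp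
  ring

noncomputable def gg0 (ρ : ℝ → ℝ) (Em Ep tc c : ℝ) (z : ℝ) : ℝ :=
  LL ρ Em Ep z + ((z + tc) * Real.log (z + tc) - z * Real.log (-z) + z * Real.log c)

noncomputable def gg1 (ρ : ℝ → ℝ) (Em Ep tc c : ℝ) (z : ℝ) : ℝ :=
  NN ρ Em Ep 1 z + (Real.log (z + tc) - Real.log (-z) + Real.log c)

noncomputable def gg2 (ρ : ℝ → ℝ) (Em Ep tc : ℝ) (z : ℝ) : ℝ :=
  -NN ρ Em Ep 2 z + ((z + tc)⁻¹ - z⁻¹)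

noncomputable def gg3 (ρ : ℝ → ℝ) (Em Ep tc : ℝ) (z : ℝ) : ℝ :=
  2 * NN ρ Em Ep 3 z + (-((z + tc) ^ 2)⁻¹ + (z ^ 2)⁻¹)

noncomputable def gg4 (ρ : ℝ → ℝ) (Em Ep tc : ℝ) (z : ℝ) : ℝ :=
  -6 * NN ρ Em Ep 4 z + (2 * ((z + tc) ^ 3)⁻¹ - 2 * (z ^ 3)⁻¹)


/-- Lemma 4.5 of the paper: at a cusp point `z_c` (normalized so that `x_c = 0`), the
function `G` has a triple critical point, and its fourth derivative equals `−24 t_c⁻⁴ A`. -/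
theorem cusp_G_triple_critical_point
    (β : ℝ) (hβ : β ∈ Ioo (0 : ℝ) 1)
    (ρ : ℝ → ℝ) (hmeas : Measurable ρ) (hsupp : HasCompactSupport ρ)
    (hbd : ∀ᵐ x ∂(volume : Measure ℝ), ρ x ∈ Icc (0 : ℝ) 1)
    (Em Ep : ℝ) (hE : Em < Ep)
    (hgap : ∀ᵐ x ∂(volume : Measure ℝ), x ∈ Ioo Em Ep → ρ x = 0)
    (tc zc : ℝ) (htc : 0 < tc) (hzc : zc ∈ Ioo Em Ep)
    (hzc' : -tc < zc) (hzc0 : zc < 0)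
    (m₀ : ℝ → ℝ) (hm₀ : m₀ = fun z => ∫ x : ℝ, ρ x / (z - x))
    (f₀ : ℝ → ℝ) (hf₀ : f₀ = fun z => β / (1 - β) * Real.exp (m₀ z))
    (cusp1 : zc + tc * f₀ zc / (f₀ zc + 1) = 0)
    (cusp2 : 1 + tc * deriv f₀ zc / (f₀ zc + 1) ^ 2 = 0)
    (cusp3 : deriv (deriv f₀) zc - 2 * (deriv f₀ zc) ^ 2 / (f₀ zc + 1) = 0)
    (G : ℝ → ℝ)
    (hG : G = fun z =>
      (∫ x in Iic Em, Real.log (z - x) * ρ x) +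
      (∫ x in Ici Ep, Real.log (x - z) * ρ x) +
      (z + tc) * Real.log (z + tc) - z * Real.log (-z) +
      z * Real.log (β / (1 - β)))
    (A : ℝ)
    (hA : A = tc ^ 4 * (∫ x : ℝ, ρ x / (4 * (zc - x) ^ 4)) -
      tc ^ 4 / (12 * (tc + zc) ^ 3) - tc ^ 4 / (12 * (-zc) ^ 3)) :
    ContDiffAt ℝ 4 G zc ∧
    deriv G zc = 0 ∧ iteratedDeriv 2 G zc = 0 ∧ iteratedDeriv 3 G zc = 0 ∧
    iteratedDeriv 4 G zc = -24 / tc ^ 4 * A := by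
  obtain ⟨hβ0, hβ1⟩ := hβ
  obtain ⟨hzE1, hzE2⟩ := hzc
  have h1β : (0:ℝ) < 1 - β := by linarith
  have hc0 : 0 < β / (1 - β) := div_pos hβ0 h1β
  have hzt : 0 < zc + tc := by linarith
  -- support radius
  obtain ⟨R, hRs⟩ : ∃ R : ℝ, ∀ x, x ∉ Icc (-R) R → ρ x = 0 := by
    obtain ⟨R, hR⟩ := hsupp.isCompact.isBounded.subset_closedBall 0
    refine ⟨R, fun x hx => image_eq_zero_of_notMem_tsupport fun hmem => hx ?_⟩
    have := hR hmem
    simpa [Real.closedBall_eq_Icc] using this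
  have hbd' : ∀ᵐ x ∂(volume : Measure ℝ), |ρ x| ≤ 1 := by
    filter_upwards [hbd] with x hx
    exact abs_le.2 ⟨by linarith [hx.1], hx.2⟩
  -- the radius
  set δ := min (min (zc - Em) (Ep - zc)) (min (zc + tc) (-zc)) / 2 with hδdef
  have hδ : 0 < δ := by
    apply div_pos _ two_pos
    exact lt_min (lt_min (by linarith) (by linarith)) (lt_min (by linarith) (by linarith))
  have hδ1 : 2 * δ ≤ zc - Em := by
    have h1 : min (min (zc - Em) (Ep - zc)) (min (zc + tc) (-zc)) ≤ zc - Em :=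
      le_trans (min_le_left _ _) (min_le_left _ _)
    rw [hδdef]; linarith
  have hδ2 : 2 * δ ≤ Ep - zc := by
    have h1 : min (min (zc - Em) (Ep - zc)) (min (zc + tc) (-zc)) ≤ Ep - zc :=
      le_trans (min_le_left _ _) (min_le_right _ _)
    rw [hδdef]; linarith
  have hδ3 : 2 * δ ≤ zc + tc := by
    have h1 : min (min (zc - Em) (Ep - zc)) (min (zc + tc) (-zc)) ≤ zc + tc :=
      le_trans (min_le_right _ _) (min_le_left _ _)
    rw [hδdef]; linarith
  have hδ4 : 2 * δ ≤ -zc := by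
    have h1 : min (min (zc - Em) (Ep - zc)) (min (zc + tc) (-zc)) ≤ -zc :=
      le_trans (min_le_right _ _) (min_le_right _ _)
    rw [hδdef]; linarith
  have hzcmem : zc ∈ Metric.ball zc δ := Metric.mem_ball_self hδ
  -- distance estimates
  have hb1 : ∀ w ∈ Metric.ball zc δ, ∀ x ∈ Iic Em, δ ≤ |w - x| := by
    intro w hw x hx
    rw [Metric.mem_ball, Real.dist_eq] at hw
    have h := abs_lt.1 hw
    have hxE : x ≤ Em := hx
    have : δ ≤ w - x := by linarith
    exact this.trans (le_abs_self _)
  have hb2 : ∀ w ∈ Metric.ball zc δ, ∀ x ∈ Ici Ep, δ ≤ |w - x| := by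
    intro w hw x hx
    rw [Metric.mem_ball, Real.dist_eq] at hw
    have h := abs_lt.1 hw
    have hxE : Ep ≤ x := hx
    have : δ ≤ x - w := by linarith
    rw [abs_sub_comm]
    exact this.trans (le_abs_self _)
  have hzball : ∀ z ∈ Metric.ball zc δ, z + tc ≠ 0 ∧ z ≠ 0 := by
    intro z hz
    rw [Metric.mem_ball, Real.dist_eq] at hz
    have h := abs_lt.1 hz
    constructor
    · have : 0 < z + tc := by linarith
      exact ne_of_gt this
    · have : z < 0 := by linarith
      exact ne_of_lt this
  -- derivatives of NN and LL on the ball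
  have hNd : ∀ (k : ℕ), ∀ z ∈ Metric.ball zc δ,
      HasDerivAt (NN ρ Em Ep k) (-(k:ℝ) * NN ρ Em Ep (k+1) z) z := by
    intro k z hz
    rw [Metric.mem_ball] at hz
    have hεp : 0 < δ - dist z zc := by linarith
    have hsub : Metric.ball z (δ - dist z zc) ⊆ Metric.ball zc δ := by
      intro w hw
      rw [Metric.mem_ball] at *
      have := dist_triangle w z zc
      linarith
    exact hasDerivAt_NN ρ hmeas R hRs hbd' Em Ep k z _ δ hεp hδ
      (fun w hw x hx => hb1 w (hsub hw) x hx) (fun w hw x hx => hb2 w (hsub hw) x hx)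
  have hLd : ∀ z ∈ Metric.ball zc δ, HasDerivAt (LL ρ Em Ep) (NN ρ Em Ep 1 z) z := by
    intro z hz
    rw [Metric.mem_ball] at hz
    have hεp : 0 < δ - dist z zc := by linarith
    have hsub : Metric.ball z (δ - dist z zc) ⊆ Metric.ball zc δ := by
      intro w hw
      rw [Metric.mem_ball] at *
      have := dist_triangle w z zc
      linarith
    exact hasDerivAt_LL ρ hmeas R hRs hbd' Em Ep z _ δ hεp hδ
      (fun w hw x hx => hb1 w (hsub hw) x hx) (fun w hw x hx => hb2 w (hsub hw) x hx)
  -- the derivative chain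
  have hc0' : ∀ z ∈ Metric.ball zc δ,
      HasDerivAt (gg0 ρ Em Ep tc (β / (1 - β))) (gg1 ρ Em Ep tc (β / (1 - β)) z) z := by
    intro z hz
    obtain ⟨hzt', hz0'⟩ := hzball z hz
    have hE1 : HasDerivAt (fun z : ℝ => (z + tc) * Real.log (z + tc))
        (1 * Real.log (z + tc) + (z + tc) * (1 / (z + tc))) z :=
      ((hasDerivAt_id z).add_const tc).mul (((hasDerivAt_id z).add_const tc).log hzt')
    have hE2 : HasDerivAt (fun z : ℝ => z * Real.log (-z))
        (1 * Real.log (-z) + z * (-1 / -z)) z :=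
      (hasDerivAt_id z).mul ((hasDerivAt_id z).neg.log (neg_ne_zero.2 hz0'))
    have hE3 : HasDerivAt (fun z : ℝ => z * Real.log (β / (1 - β)))
        (1 * Real.log (β / (1 - β))) z := (hasDerivAt_id z).mul_const _
    have h := (hLd z hz).add ((hE1.sub hE2).add hE3)
    unfold gg0 gg1
    refine h.congr_deriv ?_
    field_simp
    ring
  have hc1' : ∀ z ∈ Metric.ball zc δ,
      HasDerivAt (gg1 ρ Em Ep tc (β / (1 - β))) (gg2 ρ Em Ep tc z) z := by
    intro z hz
    obtain ⟨hzt', hz0'⟩ := hzball z hz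
    have hE1 : HasDerivAt (fun z : ℝ => Real.log (z + tc)) (1 / (z + tc)) z :=
      ((hasDerivAt_id z).add_const tc).log hzt'
    have hE2 : HasDerivAt (fun z : ℝ => Real.log (-z)) (-1 / -z) z :=
      (hasDerivAt_id z).neg.log (neg_ne_zero.2 hz0')
    have h := (hNd 1 z hz).add ((hE1.sub hE2).add_const (Real.log (β / (1 - β))))
    unfold gg1 gg2
    refine h.congr_deriv ?_
    push_cast
    field_simp
  have hc2' : ∀ z ∈ Metric.ball zc δ,
      HasDerivAt (gg2 ρ Em Ep tc) (gg3 ρ Em Ep tc z) z := by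
    intro z hz
    obtain ⟨hzt', hz0'⟩ := hzball z hz
    have hE1 : HasDerivAt (fun z : ℝ => (z + tc)⁻¹) (-1 / (z + tc) ^ 2) z :=
      ((hasDerivAt_id z).add_const tc).inv hzt'
    have hE2 : HasDerivAt (fun z : ℝ => z⁻¹) (-1 / z ^ 2) z := (hasDerivAt_id z).inv hz0'
    have h := ((hNd 2 z hz).neg).add (hE1.sub hE2)
    unfold gg2 gg3
    refine h.congr_deriv ?_
    push_cast
    field_simp
    ring
  have hc3' : ∀ z ∈ Metric.ball zc δ,
      HasDerivAt (gg3 ρ Em Ep tc) (gg4 ρ Em Ep tc z) z := by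
    intro z hz
    obtain ⟨hzt', hz0'⟩ := hzball z hz
    have hE1 : HasDerivAt (fun z : ℝ => ((z + tc) ^ 2)⁻¹)
        (-(2 * (z + tc) ^ 1 * 1) / ((z + tc) ^ 2) ^ 2) z :=
      (((hasDerivAt_id z).add_const tc).pow 2).inv (pow_ne_zero 2 hzt')
    have hE2 : HasDerivAt (fun z : ℝ => (z ^ 2)⁻¹)
        (-(2 * z ^ 1 * 1) / (z ^ 2) ^ 2) z :=
      ((hasDerivAt_id z).pow 2).inv (pow_ne_zero 2 hz0')
    have h := ((hNd 3 z hz).const_mul 2).add (hE1.neg.add hE2)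
    unfold gg3 gg4
    refine h.congr_deriv ?_
    push_cast
    field_simp
    ring
  have hc4' : ∀ z ∈ Metric.ball zc δ, DifferentiableAt ℝ (gg4 ρ Em Ep tc) z := by
    intro z hz
    obtain ⟨hzt', hz0'⟩ := hzball z hz
    have hE1 : HasDerivAt (fun z : ℝ => ((z + tc) ^ 3)⁻¹)
        (-(3 * (z + tc) ^ 2 * 1) / ((z + tc) ^ 3) ^ 2) z :=
      (((hasDerivAt_id z).add_const tc).pow 3).inv (pow_ne_zero 3 hzt')
    have hE2 : HasDerivAt (fun z : ℝ => (z ^ 3)⁻¹)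
        (-(3 * z ^ 2 * 1) / (z ^ 3) ^ 2) z :=
      ((hasDerivAt_id z).pow 3).inv (pow_ne_zero 3 hz0')
    have h := ((hNd 4 z hz).const_mul (-6)).add ((hE1.const_mul 2).sub (hE2.const_mul 2))
    unfold gg4
    exact h.differentiableAt
  -- G equals gg0
  have hGg0 : G = gg0 ρ Em Ep tc (β / (1 - β)) := by
    rw [hG]
    funext z
    have hint : (∫ x in Ici Ep, Real.log (x - z) * ρ x) = ∫ x in Ici Ep, Real.log (z - x) * ρ x := by
      apply integral_congr_ae
      filter_upwards with x
      rw [show x - z = -(z - x) by ring, Real.log_neg_eq_log]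
    rw [hint]
    unfold gg0 LL
    ring
  -- smoothness
  have hcont : ContDiffOn ℝ 4 (gg0 ρ Em Ep tc (β / (1 - β))) (Metric.ball zc δ) := by
    rw [show (4 : WithTop ℕ∞) = 3 + 1 from by norm_num,
      contDiffOn_succ_iff_deriv_of_isOpen Metric.isOpen_ball]
    refine ⟨fun z hz => (hc0' z hz).differentiableAt.differentiableWithinAt, by simp, ?_⟩
    refine ContDiffOn.congr ?_ (fun z hz => (hc0' z hz).deriv)
    rw [show (3 : WithTop ℕ∞) = 2 + 1 from by norm_num,
      contDiffOn_succ_iff_deriv_of_isOpen Metric.isOpen_ball]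
    refine ⟨fun z hz => (hc1' z hz).differentiableAt.differentiableWithinAt, by simp, ?_⟩
    refine ContDiffOn.congr ?_ (fun z hz => (hc1' z hz).deriv)
    rw [show (2 : WithTop ℕ∞) = 1 + 1 from by norm_num,
      contDiffOn_succ_iff_deriv_of_isOpen Metric.isOpen_ball]
    refine ⟨fun z hz => (hc2' z hz).differentiableAt.differentiableWithinAt, by simp, ?_⟩
    refine ContDiffOn.congr ?_ (fun z hz => (hc2' z hz).deriv)
    rw [show (1 : WithTop ℕ∞) = 0 + 1 from by norm_num,
      contDiffOn_succ_iff_deriv_of_isOpen Metric.isOpen_ball]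
    refine ⟨fun z hz => (hc3' z hz).differentiableAt.differentiableWithinAt, by simp, ?_⟩
    refine ContDiffOn.congr ?_ (fun z hz => (hc3' z hz).deriv)
    rw [contDiffOn_zero]
    exact fun z hz => (hc4' z hz).continuousAt.continuousWithinAt
  -- iterated derivative identifications on the ball
  have e1 : ∀ z ∈ Metric.ball zc δ, deriv (gg0 ρ Em Ep tc (β / (1 - β))) z
      = gg1 ρ Em Ep tc (β / (1 - β)) z := fun z hz => (hc0' z hz).deriv
  have e2 : ∀ z ∈ Metric.ball zc δ, deriv (deriv (gg0 ρ Em Ep tc (β / (1 - β)))) z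
      = gg2 ρ Em Ep tc z := by
    intro z hz
    have h : deriv (gg0 ρ Em Ep tc (β / (1 - β))) =ᶠ[nhds z] gg1 ρ Em Ep tc (β / (1 - β)) :=
      Filter.eventuallyEq_of_mem (Metric.isOpen_ball.mem_nhds hz) e1
    rw [h.deriv_eq]
    exact (hc1' z hz).deriv
  have e3 : ∀ z ∈ Metric.ball zc δ, deriv (deriv (deriv (gg0 ρ Em Ep tc (β / (1 - β))))) z
      = gg3 ρ Em Ep tc z := by
    intro z hz
    have h : deriv (deriv (gg0 ρ Em Ep tc (β / (1 - β)))) =ᶠ[nhds z] gg2 ρ Em Ep tc :=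
      Filter.eventuallyEq_of_mem (Metric.isOpen_ball.mem_nhds hz) e2
    rw [h.deriv_eq]
    exact (hc2' z hz).deriv
  have e4 : ∀ z ∈ Metric.ball zc δ,
      deriv (deriv (deriv (deriv (gg0 ρ Em Ep tc (β / (1 - β)))))) z = gg4 ρ Em Ep tc z := by
    intro z hz
    have h : deriv (deriv (deriv (gg0 ρ Em Ep tc (β / (1 - β))))) =ᶠ[nhds z] gg3 ρ Em Ep tc :=
      Filter.eventuallyEq_of_mem (Metric.isOpen_ball.mem_nhds hz) e3
    rw [h.deriv_eq]
    exact (hc3' z hz).deriv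
  -- splitting full-line integrals
  have hsplitk : ∀ (k : ℕ), ∀ z ∈ Metric.ball zc δ,
      (∫ x : ℝ, ρ x / (z - x) ^ k) = NN ρ Em Ep k z := by
    intro k z hz
    have hint : Integrable (fun x => ρ x / (z - x) ^ k) (volume : Measure ℝ) := by
      apply aux_integrable volume (fun x => ρ x / (z - x) ^ k)
        ((hmeas.div ((measurable_const.sub measurable_id).pow_const k)).aestronglyMeasurable)
        R ((δ ^ k)⁻¹) measure_Icc_lt_top
      filter_upwards [hbd', hgap] with x hx hgx
      by_cases hxIoo : x ∈ Ioo Em Ep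
      · rw [hgx hxIoo]
        simp only [zero_div, norm_zero]
        apply Set.indicator_nonneg
        intro y _
        positivity
      · have hdist : δ ≤ |z - x| := by
          rcases le_or_gt x Em with h | h
          · exact hb1 z hz x h
          · have hxE : Ep ≤ x := by
              by_contra hcon
              exact hxIoo ⟨h, lt_of_not_ge hcon⟩
            exact hb2 z hz x hxE
        by_cases hR : x ∈ Icc (-R) R
        · rw [Set.indicator_of_mem hR]
          exact aux_abs_div_pow_le k hx hδ hdist
        · rw [Set.indicator_of_notMem hR, hRs x hR]
          simp
    rw [aux_split Em Ep hE _ hint ?_]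
    · rfl
    · filter_upwards [hgap] with x hgx hxIoo
      rw [hgx hxIoo]
      simp
  -- identify m₀ and f₀ on the ball
  have hmNN : ∀ z ∈ Metric.ball zc δ, m₀ z = NN ρ Em Ep 1 z := by
    intro z hz
    rw [hm₀]
    have h := hsplitk 1 z hz
    simpa [pow_one] using h
  have hfEq : ∀ z ∈ Metric.ball zc δ,
      f₀ z = β / (1 - β) * Real.exp (NN ρ Em Ep 1 z) := by
    intro z hz
    rw [hf₀]
    simp only
    rw [hmNN z hz]
  have hf₀d : ∀ z ∈ Metric.ball zc δ,
      HasDerivAt f₀ (-(β / (1 - β) * Real.exp (NN ρ Em Ep 1 z) * NN ρ Em Ep 2 z)) z := by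
    intro z hz
    have h := ((hNd 1 z hz).exp.const_mul (β / (1 - β)))
    have heq : f₀ =ᶠ[nhds z] (fun z => β / (1 - β) * Real.exp (NN ρ Em Ep 1 z)) :=
      Filter.eventuallyEq_of_mem (Metric.isOpen_ball.mem_nhds hz) hfEq
    have h2 := h.congr_of_eventuallyEq heq
    refine h2.congr_deriv ?_
    push_cast
    ring
  have hdf₀Eq : ∀ z ∈ Metric.ball zc δ,
      deriv f₀ z = -(β / (1 - β) * Real.exp (NN ρ Em Ep 1 z) * NN ρ Em Ep 2 z) :=
    fun z hz => (hf₀d z hz).deriv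
  -- second derivative of f₀ at zc
  have hF1d : HasDerivAt (fun z => -(β / (1 - β) * Real.exp (NN ρ Em Ep 1 z) * NN ρ Em Ep 2 z))
      (-((β / (1 - β) * (Real.exp (NN ρ Em Ep 1 zc) * (-(1:ℝ) * NN ρ Em Ep 2 zc)))
          * NN ρ Em Ep 2 zc
        + (β / (1 - β) * Real.exp (NN ρ Em Ep 1 zc)) * (-(2:ℝ) * NN ρ Em Ep 3 zc))) zc := by
    have h := (((hNd 1 zc hzcmem).exp.const_mul (β / (1 - β))).mul (hNd 2 zc hzcmem)).neg
    refine h.congr_deriv ?_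
    push_cast
    ring
  have hd2f₀ : deriv (deriv f₀) zc
      = β / (1 - β) * Real.exp (NN ρ Em Ep 1 zc) * (NN ρ Em Ep 2 zc) ^ 2
        + 2 * (β / (1 - β) * Real.exp (NN ρ Em Ep 1 zc)) * NN ρ Em Ep 3 zc := by
    have heq : deriv f₀ =ᶠ[nhds zc]
        (fun z => -(β / (1 - β) * Real.exp (NN ρ Em Ep 1 z) * NN ρ Em Ep 2 z)) :=
      Filter.eventuallyEq_of_mem (Metric.isOpen_ball.mem_nhds hzcmem) hdf₀Eq
    rw [heq.deriv_eq, hF1d.deriv]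
    ring
  -- the cusp relations in algebraic form
  have haapos : 0 < β / (1 - β) * Real.exp (NN ρ Em Ep 1 zc) :=
    mul_pos hc0 (Real.exp_pos _)
  have ha1 : (β / (1 - β) * Real.exp (NN ρ Em Ep 1 zc)) * (zc + tc) = -zc := by
    apply alg1 tc zc _ hzt haapos
    rw [← hfEq zc hzcmem]
    exact cusp1
  have hp : NN ρ Em Ep 2 zc = -tc / (zc * (zc + tc)) := by
    apply alg2 tc zc (β / (1 - β) * Real.exp (NN ρ Em Ep 1 zc)) _ htc hzt hzc0 haapos ha1
    rw [← hdf₀Eq zc hzcmem, ← hfEq zc hzcmem]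
    exact cusp2
  have hq : NN ρ Em Ep 3 zc = -(tc * (tc + 2 * zc)) / (2 * (zc ^ 2 * (zc + tc) ^ 2)) := by
    apply alg3 tc zc (β / (1 - β) * Real.exp (NN ρ Em Ep 1 zc)) (NN ρ Em Ep 2 zc) _
      htc hzt hzc0 haapos ha1 hp
    have hh : (β / (1 - β) * Real.exp (NN ρ Em Ep 1 zc)) * (NN ρ Em Ep 2 zc) ^ 2
        + 2 * (β / (1 - β) * Real.exp (NN ρ Em Ep 1 zc)) * NN ρ Em Ep 3 zc
        - 2 * (-((β / (1 - β) * Real.exp (NN ρ Em Ep 1 zc)) * NN ρ Em Ep 2 zc)) ^ 2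
          / ((β / (1 - β) * Real.exp (NN ρ Em Ep 1 zc)) + 1) = 0 := by
      have h3 := cusp3
      rw [hd2f₀, hdf₀Eq zc hzcmem, hfEq zc hzcmem] at h3
      convert h3 using 2 <;> ring
    convert hh using 2 <;> ring
  -- final values
  have hval1 : gg1 ρ Em Ep tc (β / (1 - β)) zc = 0 := by
    unfold gg1
    exact val_g1 tc zc (β / (1 - β)) (NN ρ Em Ep 1 zc) hzt hzc0 hc0 ha1
  have hval2 : gg2 ρ Em Ep tc zc = 0 := by
    unfold gg2
    have := val_g2 tc zc (NN ρ Em Ep 2 zc) hzt hzc0 hp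
    linarith
  have hval3 : gg3 ρ Em Ep tc zc = 0 := by
    unfold gg3
    have := val_g3 tc zc (NN ρ Em Ep 3 zc) hzt hzc0 hq
    linarith
  have hval4 : gg4 ρ Em Ep tc zc = -24 / tc ^ 4 * A := by
    unfold gg4
    have hA4 : (∫ x : ℝ, ρ x / (4 * (zc - x) ^ 4)) = 4⁻¹ * NN ρ Em Ep 4 zc := by
      have hfun : ∀ x : ℝ, ρ x / (4 * (zc - x) ^ 4) = 4⁻¹ * (ρ x / (zc - x) ^ 4) := by
        intro x
        rw [div_eq_mul_inv, div_eq_mul_inv, mul_inv]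
        ring
      simp only [hfun]
      rw [integral_const_mul, hsplitk 4 zc hzcmem]
    rw [hA, hA4]
    exact val_g4 tc zc (NN ρ Em Ep 4 zc) htc hzt hzc0
  -- assemble
  rw [hGg0]
  refine ⟨hcont.contDiffAt (Metric.isOpen_ball.mem_nhds hzcmem), ?_, ?_, ?_, ?_⟩
  · rw [e1 zc hzcmem]; exact hval1
  · rw [show (2:ℕ) = 1 + 1 from rfl, iteratedDeriv_succ, iteratedDeriv_one, e2 zc hzcmem]
    exact hval2
  · rw [show (3:ℕ) = 2 + 1 from rfl, iteratedDeriv_succ, show (2:ℕ) = 1 + 1 from rfl,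
      iteratedDeriv_succ, iteratedDeriv_one, e3 zc hzcmem]
    exact hval3
  · rw [show (4:ℕ) = 3 + 1 from rfl, iteratedDeriv_succ, show (3:ℕ) = 2 + 1 from rfl,
      iteratedDeriv_succ, show (2:ℕ) = 1 + 1 from rfl, iteratedDeriv_succ, iteratedDeriv_one,
      e4 zc hzcmem]
    exact hval4
end

section
/- Let ρ : ℝ → ℝ be measurable with 0 ≤ ρ(x) ≤ 1 for almost every x and 0 < ∫_ℝ ρ < ∞, and let z ∈ ℂ with Im z > 0. Then the Stieltjes transform m(z) = ∫_ℝ ρ(x)/(z−x) dx satisfies −π < Im m(z) < 0. Consequently, for every real c > 0, the complex number f := c·exp(m(z)) satisfies Im f < 0, f + 1 ≠ 0, and Im(f/(f+1)) < 0. -/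
open MeasureTheory

/-- The Stieltjes transform of a density `ρ : ℝ → [0,1]` with positive finite mass,
evaluated at a point of the upper half-plane, has imaginary part in `(−π, 0)`;
consequently `f = c·exp(m(z))` (for `c > 0`) lies in the lower half-plane, `f + 1 ≠ 0`,
and `f/(f+1)` lies in the lower half-plane. -/
theorem stieltjes_transform_imaginary_part
    (ρ : ℝ → ℝ) (hmeas : Measurable ρ)
    (hbd : ∀ᵐ x ∂(volume : Measure ℝ), ρ x ∈ Set.Icc (0 : ℝ) 1)
    (hint : Integrable ρ) (hpos : 0 < ∫ x : ℝ, ρ x)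
    (z : ℂ) (hz : 0 < z.im)
    (m : ℂ) (hm : m = ∫ x : ℝ, (ρ x : ℂ) / (z - (x : ℂ)))
    (c : ℝ) (hc : 0 < c) :
    -Real.pi < m.im ∧ m.im < 0 ∧
      ((c : ℂ) * Complex.exp m).im < 0 ∧
      (c : ℂ) * Complex.exp m + 1 ≠ 0 ∧
      ((c : ℂ) * Complex.exp m / ((c : ℂ) * Complex.exp m + 1)).im < 0 := by
  set a := z.re with ha
  set b := z.im with hb
  have hb0 : b ≠ 0 := hz.ne'
  -- the Poisson kernel
  set g : ℝ → ℝ := fun x => b / ((x - a) ^ 2 + b ^ 2) with hg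
  have hgpos : ∀ x, 0 < g x := fun x =>
    div_pos hz (by positivity)
  have hgle : ∀ x, g x ≤ b⁻¹ := by
    intro x
    rw [div_le_iff₀ (by positivity)]
    have : b * b ≤ (x - a) ^ 2 + b ^ 2 := by nlinarith [sq_nonneg (x - a)]
    calc b = b⁻¹ * (b * b) := by field_simp
    _ ≤ b⁻¹ * ((x - a) ^ 2 + b ^ 2) := by
        apply mul_le_mul_of_nonneg_left this (by positivity)
  -- normSq of z - x
  have hnsq : ∀ x : ℝ, Complex.normSq (z - (x : ℂ)) = (x - a) ^ 2 + b ^ 2 := by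
    intro x
    simp [Complex.normSq_apply, ← ha, ← hb]
    ring
  have hnsq_pos : ∀ x : ℝ, 0 < Complex.normSq (z - (x : ℂ)) := by
    intro x; rw [hnsq]; positivity
  -- integrability of g
  have hg_int : Integrable g := by
    have h1 : Integrable (fun x : ℝ => (1 + (x / b) ^ 2)⁻¹) :=
      integrable_inv_one_add_sq.comp_div hb0
    have h2 : Integrable (fun x : ℝ => (1 + ((x - a) / b) ^ 2)⁻¹) :=
      h1.comp_sub_right a
    have h3 := h2.const_mul b⁻¹
    refine h3.congr (Filter.Eventually.of_forall fun x => ?_)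
    simp only [hg]
    have hne : (x - a) ^ 2 + b ^ 2 ≠ 0 := by positivity
    field_simp
    try ring
  -- integral of g is π
  have hg_integral : ∫ x : ℝ, g x = Real.pi := by
    have h1 : ∀ x : ℝ, g x = b⁻¹ * (1 + ((x - a) / b) ^ 2)⁻¹ := by
      intro x
      simp only [hg]
      have hne : (x - a) ^ 2 + b ^ 2 ≠ 0 := by positivity
      field_simp
      ring
    simp_rw [h1]
    rw [integral_const_mul]
    have h2 : ∫ x : ℝ, (1 + ((x - a) / b) ^ 2)⁻¹ = ∫ x : ℝ, (1 + (x / b) ^ 2)⁻¹ :=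
      integral_sub_right_eq_self (fun x : ℝ => (1 + (x / b) ^ 2)⁻¹) a
    rw [h2, MeasureTheory.Measure.integral_comp_div (fun y : ℝ => (1 + y ^ 2)⁻¹) b,
      integral_univ_inv_one_add_sq, abs_of_pos hz, smul_eq_mul]
    field_simp
  -- integrability of ρ·g
  have hρg_int : Integrable (fun x => ρ x * g x) := by
    refine Integrable.mono' (hint.abs.const_mul b⁻¹) ?_ ?_
    · exact (hmeas.mul (by fun_prop : Measurable g)).aestronglyMeasurable
    · refine Filter.Eventually.of_forall fun x => ?_
      rw [Real.norm_eq_abs, abs_mul, abs_of_pos (hgpos x), mul_comm (b⁻¹)]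
      exact mul_le_mul_of_nonneg_left (hgle x) (abs_nonneg _)
  -- integrability of complex integrand
  have hF_int : Integrable (fun x : ℝ => (ρ x : ℂ) / (z - (x : ℂ))) := by
    refine Integrable.mono' (hint.abs.const_mul b⁻¹) ?_ ?_
    · exact (Complex.measurable_ofReal.comp hmeas |>.div
        ((measurable_const.sub Complex.measurable_ofReal))).aestronglyMeasurable
    · refine Filter.Eventually.of_forall fun x => ?_
      rw [norm_div]
      have hle : b ≤ ‖z - (x : ℂ)‖ := by
        have := Complex.abs_im_le_norm (z - (x : ℂ))
        simpa [← hb, abs_of_pos hz] using this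
      have hz' : (0:ℝ) < ‖z - (x : ℂ)‖ := lt_of_lt_of_le hz hle
      rw [div_le_iff₀ hz', Complex.norm_real, mul_comm (b⁻¹), mul_assoc]
      calc |ρ x| = |ρ x| * (b⁻¹ * b) := by field_simp
      _ ≤ |ρ x| * (b⁻¹ * ‖z - (x : ℂ)‖) := by
          apply mul_le_mul_of_nonneg_left _ (abs_nonneg _)
          exact mul_le_mul_of_nonneg_left hle (by positivity)
  -- imaginary part of m
  have him : m.im = -∫ x : ℝ, ρ x * g x := by
    rw [hm, ← RCLike.im_eq_complex_im, ← integral_im hF_int, ← integral_neg]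
    refine integral_congr_ae (Filter.Eventually.of_forall fun x => ?_)
    rw [RCLike.im_eq_complex_im]
    show ((ρ x : ℂ) / (z - (x : ℂ))).im = -(ρ x * g x)
    have h := hnsq_pos x
    rw [Complex.div_im]
    simp [← hb, hnsq x, hg]
    field_simp
    try ring
  -- 0 < ∫ ρ g
  have hI_pos : 0 < ∫ x : ℝ, ρ x * g x := by
    have hnn : 0 ≤ᵐ[volume] fun x => ρ x * g x := by
      filter_upwards [hbd] with x hx
      exact mul_nonneg hx.1 (hgpos x).le
    rcases lt_or_eq_of_le (integral_nonneg_of_ae hnn) with h | h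
    · exact h
    · exfalso
      have h0 : (fun x => ρ x * g x) =ᵐ[volume] 0 :=
        (integral_eq_zero_iff_of_nonneg_ae hnn hρg_int).1 h.symm
      have hρ0 : ρ =ᵐ[volume] 0 := by
        filter_upwards [h0] with x hx
        have := (hgpos x).ne'
        exact (mul_eq_zero.1 hx).resolve_right this
      rw [integral_congr_ae hρ0] at hpos
      simp at hpos
  -- ∫ ρ g < π
  have hI_lt : (∫ x : ℝ, ρ x * g x) < Real.pi := by
    have hnn : 0 ≤ᵐ[volume] fun x => (1 - ρ x) * g x := by
      filter_upwards [hbd] with x hx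
      exact mul_nonneg (by linarith [hx.2]) (hgpos x).le
    have hdiff_int : Integrable (fun x => (1 - ρ x) * g x) := by
      refine (hg_int.sub hρg_int).congr (Filter.Eventually.of_forall fun x => ?_)
      simp only [Pi.sub_apply]
      ring
    have hsub : ∫ x : ℝ, (1 - ρ x) * g x = Real.pi - ∫ x : ℝ, ρ x * g x := by
      rw [← hg_integral, ← integral_sub hg_int hρg_int]
      refine integral_congr_ae (Filter.Eventually.of_forall fun x => ?_)
      ring
    rcases lt_or_eq_of_le (integral_nonneg_of_ae hnn) with h | h
    · rw [hsub] at h; linarith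
    · exfalso
      have h0 : (fun x => (1 - ρ x) * g x) =ᵐ[volume] 0 :=
        (integral_eq_zero_iff_of_nonneg_ae hnn hdiff_int).1 h.symm
      have hρ1 : ρ =ᵐ[volume] fun _ => (1:ℝ) := by
        filter_upwards [h0] with x hx
        have := (hgpos x).ne'
        have h1 : 1 - ρ x = 0 := (mul_eq_zero.1 hx).resolve_right this
        linarith
      have : Integrable (fun _ : ℝ => (1:ℝ)) := hint.congr hρ1
      rw [integrable_const_iff] at this
      rcases this with h | h
      · exact one_ne_zero h
      · have h := @measure_lt_top ℝ _ volume h Set.univ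
        rw [Real.volume_univ] at h
        exact (lt_irrefl _ h)
  have hm_lt : m.im < 0 := by rw [him]; linarith
  have hm_gt : -Real.pi < m.im := by rw [him]; linarith
  -- now f = c exp m
  set f : ℂ := (c : ℂ) * Complex.exp m with hf
  have hfim : f.im = c * (Real.exp m.re * Real.sin m.im) := by
    simp [hf, Complex.mul_im, Complex.exp_im]
  have hsin : Real.sin m.im < 0 := Real.sin_neg_of_neg_of_neg_pi_lt hm_lt hm_gt
  have hfim_neg : f.im < 0 := by
    rw [hfim]
    exact mul_neg_of_pos_of_neg hc (mul_neg_of_pos_of_neg (Real.exp_pos _) hsin)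
  have hf1 : f + 1 ≠ 0 := by
    intro h
    have : (f + 1).im = 0 := by rw [h]; simp
    simp [Complex.add_im] at this
    linarith
  refine ⟨hm_gt, hm_lt, hfim_neg, hf1, ?_⟩
  have hdiv : (f / (f + 1)).im = f.im / Complex.normSq (f + 1) := by
    rw [Complex.div_im]
    simp [Complex.add_re, Complex.add_im]
    ring
  rw [hdiv]
  exact div_neg_of_neg_of_pos hfim_neg (Complex.normSq_pos.2 hf1)
end

section
/- Let 𝔯 > 1 and t_c > 0 be real numbers, and let z_c, x_c ∈ ℝ with x_c − z_c = t_c/𝔯. Let f be a real-valued function that is three times differentiable on a neighborhood of z_c, and let Q be a real-valued function that is three times differentiable on a neighborhood of f(z_c). Assume: Q(f(z)) = z·(f(z)+1) for all z in a neighborhood of z_c; f(z_c) = 1/(𝔯−1); Q′(f(z_c)) = x_c − t_c; and Q″(f(z_c)) = 0. Then f′(z_c) = −𝔯²/(t_c·(𝔯−1)²), f″(z_c) = 2𝔯³/(t_c²·(𝔯−1)³), and f‴(z_c) = −𝔯⁷·Q‴(f(z_c))/(t_c⁴·(𝔯−1)⁷) − 6𝔯⁴/(t_c³·(𝔯−1)⁴).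 -/
open Filter

/-- Lemma 6.7 of the paper: the derivative computation for a pair of real functions
`(f, Q)` satisfying `Q(f(z)) = z(f(z)+1)` near the base point `z_c` of the characteristic
through a cusp `(x_c, t_c)` with tangent slope `𝔯`. -/
theorem complex_slope_derivatives_at_cusp
    (r tc xc zc : ℝ) (hr : 1 < r) (htc : 0 < tc)
    (hxz : xc - zc = tc / r)
    (f Q : ℝ → ℝ)
    (hf : ∀ᶠ z in nhds zc, DifferentiableAt ℝ f z ∧ DifferentiableAt ℝ (deriv f) z ∧
      DifferentiableAt ℝ (deriv (deriv f)) z)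
    (hQ : ∀ᶠ w in nhds (f zc), DifferentiableAt ℝ Q w ∧ DifferentiableAt ℝ (deriv Q) w ∧
      DifferentiableAt ℝ (deriv (deriv Q)) w)
    (heq : ∀ᶠ z in nhds zc, Q (f z) = z * (f z + 1))
    (hfzc : f zc = 1 / (r - 1))
    (hQ1 : deriv Q (f zc) = xc - tc)
    (hQ2 : deriv (deriv Q) (f zc) = 0) :
    deriv f zc = -r ^ 2 / (tc * (r - 1) ^ 2) ∧
    deriv (deriv f) zc = 2 * r ^ 3 / (tc ^ 2 * (r - 1) ^ 3) ∧
    deriv (deriv (deriv f)) zc =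
      -r ^ 7 * deriv (deriv (deriv Q)) (f zc) / (tc ^ 4 * (r - 1) ^ 7) -
        6 * r ^ 4 / (tc ^ 3 * (r - 1) ^ 4) := by
  have hEz0 := hf.self_of_nhds
  have hcont : ContinuousAt f zc := hEz0.1.continuousAt
  have hQf : ∀ᶠ z in nhds zc, DifferentiableAt ℝ Q (f z) ∧
      DifferentiableAt ℝ (deriv Q) (f z) ∧ DifferentiableAt ℝ (deriv (deriv Q)) (f z) :=
    hcont.eventually hQ
  have hE := hf.and hQf
  have hEz := hE.self_of_nhds
  -- first derivative identity
  have hG1 : deriv (fun z => Q (f z)) =ᶠ[nhds zc] fun z => deriv Q (f z) * deriv f z := by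
    filter_upwards [hE] with z hz
    exact deriv_comp z hz.2.1 hz.1.1
  have hK1 : deriv (fun z => z * (f z + 1)) =ᶠ[nhds zc]
      fun z => (f z + 1) + z * deriv f z := by
    filter_upwards [hE] with z hz
    rw [deriv_fun_mul differentiableAt_fun_id (hz.1.1.add_const 1), deriv_id'', deriv_add_const,
      one_mul]
  have heq' : (fun z => Q (f z)) =ᶠ[nhds zc] fun z => z * (f z + 1) := heq
  have hGK1 : (fun z => deriv Q (f z) * deriv f z) =ᶠ[nhds zc]
      fun z => (f z + 1) + z * deriv f z := hG1.symm.trans (heq'.deriv.trans hK1)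
  have eq1 := hGK1.self_of_nhds
  -- second derivative identity
  have hG2 : deriv (fun z => deriv Q (f z) * deriv f z) =ᶠ[nhds zc]
      fun z => deriv (deriv Q) (f z) * deriv f z * deriv f z
        + deriv Q (f z) * deriv (deriv f) z := by
    filter_upwards [hE] with z hz
    have hc : DifferentiableAt ℝ (fun z => deriv Q (f z)) z :=
      DifferentiableAt.comp z hz.2.2.1 hz.1.1
    have hcomp : deriv (fun z => deriv Q (f z)) z = deriv (deriv Q) (f z) * deriv f z :=
      deriv_comp z hz.2.2.1 hz.1.1
    rw [deriv_fun_mul hc hz.1.2.1, hcomp]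
  have hK2 : deriv (fun z => (f z + 1) + z * deriv f z) =ᶠ[nhds zc]
      fun z => 2 * deriv f z + z * deriv (deriv f) z := by
    filter_upwards [hE] with z hz
    rw [deriv_fun_add (hz.1.1.add_const 1) (differentiableAt_fun_id.fun_mul hz.1.2.1),
      deriv_add_const, deriv_fun_mul differentiableAt_fun_id hz.1.2.1, deriv_id'', one_mul]
    ring
  have hGK2 : (fun z => deriv (deriv Q) (f z) * deriv f z * deriv f z
        + deriv Q (f z) * deriv (deriv f) z) =ᶠ[nhds zc]
      fun z => 2 * deriv f z + z * deriv (deriv f) z :=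
    hG2.symm.trans (hGK1.deriv.trans hK2)
  have eq2 := hGK2.self_of_nhds
  -- third derivative identity at the point
  have eq3raw := hGK2.deriv_eq
  have hA : DifferentiableAt ℝ (fun z => deriv (deriv Q) (f z)) zc :=
    DifferentiableAt.comp zc hEz.2.2.2 hEz.1.1
  have hC : DifferentiableAt ℝ (fun z => deriv Q (f z)) zc :=
    DifferentiableAt.comp zc hEz.2.2.1 hEz.1.1
  have hB : DifferentiableAt ℝ (deriv f) zc := hEz.1.2.1
  have hD : DifferentiableAt ℝ (deriv (deriv f)) zc := hEz.1.2.2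
  have hcompA : deriv (fun z => deriv (deriv Q) (f z)) zc
      = deriv (deriv (deriv Q)) (f zc) * deriv f zc :=
    deriv_comp zc hEz.2.2.2 hEz.1.1
  have hcompC : deriv (fun z => deriv Q (f z)) zc
      = deriv (deriv Q) (f zc) * deriv f zc :=
    deriv_comp zc hEz.2.2.1 hEz.1.1
  have hL : deriv (fun z => deriv (deriv Q) (f z) * deriv f z * deriv f z
        + deriv Q (f z) * deriv (deriv f) z) zc
      = (deriv (deriv (deriv Q)) (f zc) * deriv f zc * deriv f zc
          + deriv (deriv Q) (f zc) * deriv (deriv f) zc) * deriv f zc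
        + deriv (deriv Q) (f zc) * deriv f zc * deriv (deriv f) zc
        + (deriv (deriv Q) (f zc) * deriv f zc * deriv (deriv f) zc
          + deriv Q (f zc) * deriv (deriv (deriv f)) zc) := by
    rw [deriv_fun_add ((hA.fun_mul hB).fun_mul hB) (hC.fun_mul hD), deriv_fun_mul (hA.fun_mul hB) hB,
      deriv_fun_mul hA hB, deriv_fun_mul hC hD, hcompA, hcompC]
  have hR : deriv (fun z => 2 * deriv f z + z * deriv (deriv f) z) zc
      = 2 * deriv (deriv f) zc
        + (deriv (deriv f) zc + zc * deriv (deriv (deriv f)) zc) := by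
    rw [deriv_fun_add (hB.const_mul 2) (differentiableAt_fun_id.fun_mul hD), deriv_const_mul 2 hB,
      deriv_fun_mul differentiableAt_fun_id hD, deriv_id'', one_mul]
  have eq3 := eq3raw
  rw [hL, hR] at eq3
  -- algebra
  simp only at eq1 eq2
  set q3 := deriv (deriv (deriv Q)) (f zc) with hq3
  rw [hQ1, hQ2] at eq2 eq3
  rw [hQ1] at eq1
  rw [hfzc] at eq1
  set F1 := deriv f zc with hF1
  set F2 := deriv (deriv f) zc with hF2
  set F3 := deriv (deriv (deriv f)) zc with hF3
  have hr0 : r ≠ 0 := by positivity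
  have hr1 : r - 1 ≠ 0 := by intro h; nlinarith
  have htc0 : tc ≠ 0 := ne_of_gt htc
  have hrtc : (xc - zc) * r = tc := by
    field_simp at hxz
    linarith [hxz]
  field_simp at eq1
  have htne : tc * (r - 1) ^ 2 ≠ 0 := mul_ne_zero htc0 (pow_ne_zero 2 hr1)
  have h1' : F1 * (tc * (r - 1) ^ 2) = -r ^ 2 := by
    linear_combination (-r) * eq1 + (F1 * (r - 1)) * hrtc
  have h2' : F2 * (tc ^ 2 * (r - 1) ^ 3) = 2 * r ^ 3 := by
    linear_combination (-r * tc * (r - 1) ^ 2) * eq2 + (tc * (r - 1) ^ 2 * F2) * hrtc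
      + (-2 * r) * h1'
  have h1c : F1 ^ 3 * (tc ^ 3 * (r - 1) ^ 6) = -r ^ 6 := by
    linear_combination (F1 ^ 2 * (tc * (r - 1) ^ 2) ^ 2 - r ^ 2 * F1 * (tc * (r - 1) ^ 2)
      + r ^ 4) * h1'
  have h3' : F3 * (tc ^ 4 * (r - 1) ^ 7) = -r ^ 7 * q3 - 6 * r ^ 4 * tc * (r - 1) ^ 3 := by
    linear_combination (-r * tc ^ 3 * (r - 1) ^ 6) * eq3 + (tc ^ 3 * (r - 1) ^ 6 * F3) * hrtc
      + (r * q3) * h1c + (-3 * r * tc * (r - 1) ^ 3) * h2'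
  refine ⟨?_, ?_, ?_⟩
  · rw [eq_div_iff htne]; exact h1'
  · rw [eq_div_iff (mul_ne_zero (pow_ne_zero 2 htc0) (pow_ne_zero 3 hr1))]; exact h2'
  · have hden : tc ^ 4 * (r - 1) ^ 7 ≠ 0 :=
      mul_ne_zero (pow_ne_zero 4 htc0) (pow_ne_zero 7 hr1)
    have h3 : F3 = (-r ^ 7 * q3 - 6 * r ^ 4 * tc * (r - 1) ^ 3) / (tc ^ 4 * (r - 1) ^ 7) := by
      rw [eq_div_iff hden]; exact h3'
    rw [h3]
    field_simp
end

section
/- For every φ ∈ (0, 1/2) and C₀ ≥ 1 there is a constant C = C(φ, C₀) with the following property. Let n ≥ 2 be an integer, β ∈ (φ, 1−φ), let M, N be integers with 1 ≤ M, N ≤ C₀·n, let d_{−M} < d_{−M+1} < ⋯ < d_N be integers with |d_i| ≤ C₀·n for all i, and let x₂, t₂ be integers with |x₂| ≤ C₀·n and 1 ≤ t₂ ≤ C₀·n. Then for every z in the open upper half-plane: the limit D₂′(z) := ∑_{i=−M}^{N} 1/(nz − d_i) − lim_{m→∞} ( ∑_{i=−m}^{−x₂} 1/(nz + i) + ∑_{i=−x₂+t₂}^{m}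 1/(nz + i) ) + log(β/(1−β)) exists, and for any x_* ∈ E minimizing |z − x_*| over E one has |D₂′(z) − s/(n(z − x_*))| ≤ C·log n, where s = 1 if n·x_* ∈ {d_{−M}, …, d_N} and s = −1 otherwise. -/
open Filter Finset


lemma sum_inv_le_harmonic : ∀ (n : ℕ) (G : Finset ℕ), G.card = n → 0 ∉ G →
    ∑ m ∈ G, (1 / (m:ℝ)) ≤ (harmonic n : ℝ) := by
  intro n
  induction n with
  | zero => intro G hG _; rw [Finset.card_eq_zero.mp hG]; simp
  | succ n ih =>
    intro G hG h0
    have hne : G.Nonempty := by rw [← Finset.card_pos, hG]; omega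
    have hmem : G.max' hne ∈ G := G.max'_mem hne
    have hcard : (G.erase (G.max' hne)).card = n := by
      rw [Finset.card_erase_of_mem hmem, hG]
      omega
    have hsub : G ⊆ Finset.Icc 1 (G.max' hne) := by
      intro x hx
      simp only [Finset.mem_Icc]
      exact ⟨Nat.one_le_iff_ne_zero.mpr (fun h => h0 (h ▸ hx)), G.le_max' x hx⟩
    have hMxn : n + 1 ≤ G.max' hne := by
      have := Finset.card_le_card hsub
      rw [hG, Nat.card_Icc] at this; omega
    have hsplit : ∑ m ∈ G, (1/(m:ℝ)) = ∑ m ∈ G.erase (G.max' hne), (1/(m:ℝ)) + 1/(G.max' hne) := by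
      rw [Finset.sum_erase_add _ _ hmem]
    rw [hsplit, harmonic_succ]
    push_cast
    have h1 := ih (G.erase (G.max' hne)) hcard (fun h => h0 (Finset.mem_of_mem_erase h))
    have h2 : (1:ℝ)/(G.max' hne) ≤ ((n:ℝ)+1)⁻¹ := by
      rw [one_div]
      apply inv_anti₀ (by positivity)
      exact_mod_cast hMxn
    push_cast at h1
    linarith

lemma log_nat_mono {a b : ℕ} (h : a ≤ b) : Real.log a ≤ Real.log b := by
  rcases Nat.eq_zero_or_pos a with h0 | h0
  · simp [h0, Real.log_natCast_nonneg]
  · exact Real.log_le_log (by exact_mod_cast h0) (by exact_mod_cast h)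

lemma harmonic_card_le (G : Finset ℕ) (h0 : 0 ∉ G) (b : ℕ) (hb : G.card ≤ b) :
    ∑ m ∈ G, (1 / (m:ℝ)) ≤ 1 + Real.log b := by
  calc ∑ m ∈ G, (1 / (m:ℝ)) ≤ (harmonic G.card : ℝ) := sum_inv_le_harmonic _ G rfl h0
    _ ≤ 1 + Real.log G.card := harmonic_le_one_add_log _
    _ ≤ 1 + Real.log b := by linarith [log_nat_mono hb]

lemma sum_inv_dist_le (S : Finset ℤ) (c : ℤ) :
    ∑ k ∈ S.erase c, 1 / |(k:ℝ) - c| ≤ 2 * (1 + Real.log S.card) := by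
  classical
  set T := S.erase c with hT
  have hsplit : ∑ k ∈ T, 1 / |(k:ℝ) - c|
      = ∑ k ∈ T.filter (fun k => c < k), 1 / |(k:ℝ) - c|
        + ∑ k ∈ T.filter (fun k => ¬ c < k), 1 / |(k:ℝ) - c| :=
    (Finset.sum_filter_add_sum_filter_not _ _ _).symm
  have key : ∀ (U : Finset ℤ) (g : ℤ → ℕ), (∀ k ∈ U, 0 < g k) →
      (∀ k ∈ U, ((g k : ℝ)) = |(k:ℝ) - c|) → (∀ k₁ ∈ U, ∀ k₂ ∈ U, g k₁ = g k₂ → k₁ = k₂) →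
      U.card ≤ S.card →
      ∑ k ∈ U, 1 / |(k:ℝ) - c| ≤ 1 + Real.log S.card := by
    intro U g hpos habs hinj hcard
    have himg : ∑ k ∈ U, 1 / |(k:ℝ) - c| = ∑ m ∈ U.image g, (1/(m:ℝ)) := by
      rw [Finset.sum_image (by intro x hx y hy hxy; exact hinj x hx y hy hxy)]
      apply Finset.sum_congr rfl
      intro k hk; rw [habs k hk]
    rw [himg]
    apply harmonic_card_le
    · intro hmem
      obtain ⟨k, hk, hk0⟩ := Finset.mem_image.mp hmem
      have := hpos k hk; omega
    · exact le_trans (Finset.card_image_le) hcard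
  rw [hsplit]
  have h1 := key (T.filter (fun k => c < k)) (fun k => (k - c).toNat)
    (by intro k hk; simp only [Finset.mem_filter, hT, Finset.mem_erase] at hk; omega)
    (by intro k hk; simp only [Finset.mem_filter, hT, Finset.mem_erase] at hk
        have h' : ((k - c).toNat : ℤ) = k - c := Int.toNat_of_nonneg (by omega)
        rw [abs_of_pos (sub_pos.mpr (by exact_mod_cast hk.2 : (c:ℝ) < k))]
        exact_mod_cast h')
    (by intro k₁ h₁ k₂ h₂ h; simp only [Finset.mem_filter, hT, Finset.mem_erase] at h₁ h₂; omega)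
    (le_trans (Finset.card_filter_le _ _) (Finset.card_erase_le))
  have h2 := key (T.filter (fun k => ¬ c < k)) (fun k => (c - k).toNat)
    (by intro k hk; simp only [Finset.mem_filter, hT, Finset.mem_erase] at hk; omega)
    (by intro k hk; simp only [Finset.mem_filter, hT, Finset.mem_erase] at hk
        have hkc : k < c := by omega
        have h' : ((c - k).toNat : ℤ) = c - k := Int.toNat_of_nonneg (by omega)
        rw [abs_of_neg (sub_neg.mpr (by exact_mod_cast hkc : (k:ℝ) < c))]
        have : ((c:ℝ)) - k = ((c - k : ℤ) : ℝ) := by push_cast; ring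
        rw [neg_sub, this]
        exact_mod_cast h')
    (by intro k₁ h₁ k₂ h₂ h; simp only [Finset.mem_filter, hT, Finset.mem_erase] at h₁ h₂; omega)
    (le_trans (Finset.card_filter_le _ _) (Finset.card_erase_le))
  linarith


noncomputable def qpair (v : ℂ) (j : ℕ) : ℂ :=
  (v - ((j:ℝ)+1:ℝ))⁻¹ + (v + ((j:ℝ)+1:ℝ))⁻¹

lemma sub_real_ne_zero (v : ℂ) (him : 0 < v.im) (t : ℝ) : v - (t:ℂ) ≠ 0 := by
  intro h
  have h2 := congrArg Complex.im h
  simp only [Complex.sub_im, Complex.ofReal_im, Complex.zero_im, sub_zero] at h2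
  rw [h2] at him; exact lt_irrefl _ him

lemma add_real_ne_zero (v : ℂ) (him : 0 < v.im) (t : ℝ) : v + (t:ℂ) ≠ 0 := by
  have := sub_real_ne_zero v him (-t)
  simpa [sub_eq_add_neg] using this

lemma pair_inv_eq (v c : ℂ) (h1 : v - c ≠ 0) (h2 : v + c ≠ 0) :
    (v - c)⁻¹ + (v + c)⁻¹ = 2*v/((v - c)*(v + c)) := by
  field_simp
  ring

lemma abs_add_real_ge_re (v : ℂ) (t : ℝ) : |v.re + t| ≤ ‖v + (t:ℂ)‖ := by
  have := Complex.abs_re_le_norm (v + t)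
  simpa using this

/-- denominator bounds: if `|x| = t ≥ 1`, `|v.re| ≤ 1/2`, `v.im > 0` then
`|v + x| ≥ (2b + t - 1)/4`, `≥ (2b+t)/4` and `≥ t - 1/2`. -/
lemma denom_ge (v : ℂ) (hre : |v.re| ≤ 1/2) (him : 0 < v.im) (t : ℝ) (ht : 1 ≤ t)
    (x : ℝ) (hx : |x| = t) :
    (2*v.im + (t-1))/4 ≤ ‖v + (x:ℂ)‖ ∧ (2*v.im + t)/4 ≤ ‖v + (x:ℂ)‖
      ∧ t - 1/2 ≤ ‖v + (x:ℂ)‖ := by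
  have h1 : |v.im| ≤ ‖v + x‖ := by
    have := Complex.abs_im_le_norm (v + x); simpa using this
  have h2 : |v.re + x| ≤ ‖v + x‖ := abs_add_real_ge_re v x
  have him' : v.im ≤ ‖v + x‖ := le_trans (le_abs_self _) h1
  have hre' : t - 1/2 ≤ ‖v + x‖ := by
    have habs : |x| ≤ |v.re + x| + |v.re| := by
      calc |x| = |(v.re + x) + (-v.re)| := by ring_nf
        _ ≤ |v.re + x| + |(-v.re)| := abs_add_le _ _
        _ = |v.re + x| + |v.re| := by rw [abs_neg]
    linarith [hx ▸ habs]
  exact ⟨by linarith, by linarith, hre'⟩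

lemma qpair_eq (v : ℂ) (him : 0 < v.im) (j : ℕ) :
    qpair v j = 2*v / ((v - ((j:ℝ)+1:ℝ)) * (v + ((j:ℝ)+1:ℝ))) :=
  pair_inv_eq v _ (sub_real_ne_zero v him _) (add_real_ne_zero v him _)

lemma qpair_abs_eq (v : ℂ) (him : 0 < v.im) (j : ℕ) :
    ‖qpair v j‖
      = ‖2*v‖ / (‖v - ((j:ℝ)+1:ℝ)‖ * ‖v + ((j:ℝ)+1:ℝ)‖) := by
  rw [qpair_eq v him j, norm_div, norm_mul, norm_mul]

lemma abs_two_v_le (v : ℂ) (hre : |v.re| ≤ 1/2) (him : 0 < v.im) :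
    ‖2*v‖ ≤ 2*v.im + 1 := by
  rw [norm_mul]
  have h1 := Complex.norm_le_abs_re_add_abs_im v
  have h2 : ‖(2:ℂ)‖ = 2 := by norm_num
  rw [h2, abs_of_pos him] at *
  linarith

lemma hj1 (j : ℕ) : (1:ℝ) ≤ (j:ℝ)+1 := by
  have : (0:ℝ) ≤ (j:ℝ) := Nat.cast_nonneg j
  linarith

lemma qpair_denoms (v : ℂ) (hre : |v.re| ≤ 1/2) (him : 0 < v.im) (j : ℕ) :
    ((2*v.im + j)/4 ≤ ‖v - ((j:ℝ)+1:ℝ)‖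
      ∧ ((j:ℝ)+1)/2 ≤ ‖v - ((j:ℝ)+1:ℝ)‖)
    ∧ ((2*v.im + j+1)/4 ≤ ‖v + ((j:ℝ)+1:ℝ)‖
      ∧ ((j:ℝ)+1)/2 ≤ ‖v + ((j:ℝ)+1:ℝ)‖) := by
  have hm := denom_ge v hre him ((j:ℝ)+1) (hj1 j) (-((j:ℝ)+1))
    (by rw [abs_neg]; exact abs_of_nonneg (by linarith [hj1 j]))
  have hp := denom_ge v hre him ((j:ℝ)+1) (hj1 j) ((j:ℝ)+1)
    (abs_of_nonneg (by linarith [hj1 j]))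
  have he : v + ((-((j:ℝ)+1) : ℝ) : ℂ) = v - (((j:ℝ)+1:ℝ) : ℂ) := by
    push_cast
    ring
  rw [he] at hm
  refine ⟨⟨?_, ?_⟩, ⟨?_, ?_⟩⟩
  · calc (2*v.im + j)/4 = (2*v.im + (((j:ℝ)+1)-1))/4 := by ring_nf
      _ ≤ _ := hm.1
  · linarith [hm.2.2]
  · calc (2*v.im + (j:ℝ)+1)/4 = (2*v.im + ((j:ℝ)+1))/4 := by ring_nf
      _ ≤ _ := hp.2.1
  · linarith [hp.2.2]

lemma qpair_abs_le (v : ℂ) (hre : |v.re| ≤ 1/2) (him : 0 < v.im) (j : ℕ) :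
    ‖qpair v j‖ ≤ 16*(2*v.im+1) / ((2*v.im+j) * (2*v.im+j+1)) := by
  obtain ⟨⟨hd1, _⟩, hd2, _⟩ := qpair_denoms v hre him j
  rw [qpair_abs_eq v him j]
  calc ‖2*v‖ / (‖v - ((j:ℝ)+1:ℝ)‖ * ‖v + ((j:ℝ)+1:ℝ)‖)
      ≤ (2*v.im + 1) / ((2*v.im + j)/4 * ((2*v.im + j+1)/4)) :=
        div_le_div₀ (by positivity) (abs_two_v_le v hre him) (by positivity)
          (mul_le_mul hd1 hd2 (by positivity) (norm_nonneg _))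
    _ = 16*(2*v.im+1) / ((2*v.im+j) * (2*v.im+j+1)) := by
        field_simp
        ring

lemma qpair_abs_le_sq (v : ℂ) (hre : |v.re| ≤ 1/2) (him : 0 < v.im) (j : ℕ) :
    ‖qpair v j‖ ≤ 4*(2*v.im+1) / ((j:ℝ)+1)^2 := by
  obtain ⟨⟨_, hd1⟩, _, hd2⟩ := qpair_denoms v hre him j
  rw [qpair_abs_eq v him j]
  calc ‖2*v‖ / (‖v - ((j:ℝ)+1:ℝ)‖ * ‖v + ((j:ℝ)+1:ℝ)‖)
      ≤ (2*v.im + 1) / (((j:ℝ)+1)/2 * (((j:ℝ)+1)/2)) :=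
        div_le_div₀ (by positivity) (abs_two_v_le v hre him) (by positivity)
          (mul_le_mul hd1 hd2 (by positivity) (norm_nonneg _))
    _ = 4*(2*v.im+1) / ((j:ℝ)+1)^2 := by field_simp; ring

lemma summable_inv_sq_succ : Summable (fun j : ℕ => 1/((j:ℝ)+1)^2) := by
  have base : Summable (fun n : ℕ => 1/(n:ℝ)^2) :=
    Real.summable_one_div_nat_pow.mpr (by norm_num)
  have := (summable_nat_add_iff 1).mpr base
  refine this.congr ?_
  intro j
  push_cast
  ring

lemma summable_qpair_abs (v : ℂ) (hre : |v.re| ≤ 1/2) (him : 0 < v.im) :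
    Summable (fun j => ‖qpair v j‖) := by
  apply Summable.of_nonneg_of_le (fun j => norm_nonneg _)
    (fun j => qpair_abs_le_sq v hre him j)
  have := summable_inv_sq_succ.mul_left (4*(2*v.im+1))
  refine this.congr ?_
  intro j
  rw [mul_one_div]

lemma summable_qpair (v : ℂ) (hre : |v.re| ≤ 1/2) (him : 0 < v.im) :
    Summable (qpair v) := by
  apply Summable.of_norm
  simpa using summable_qpair_abs v hre him

lemma sum_range_inv_sq_le : ∀ m : ℕ, ∑ j ∈ Finset.range m, (1/((j:ℝ)+1)^2) ≤ 2 - 2/((m:ℝ)+1) := by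
  intro m
  induction m with
  | zero => norm_num
  | succ m ih =>
    rw [Finset.sum_range_succ]
    have h1 : (1:ℝ)/((m:ℝ)+1)^2 ≤ 2/((m:ℝ)+1) - 2/((m:ℝ)+1+1) := by
      rw [div_sub_div _ _ (by positivity) (by positivity), div_le_div_iff₀ (by positivity) (by positivity)]
      nlinarith [Nat.cast_nonneg (α := ℝ) m]
    push_cast
    push_cast at ih
    linarith

lemma tsum_qpair_abs_le (v : ℂ) (hre : |v.re| ≤ 1/2) (him : 0 < v.im) :
    ∑' j, ‖qpair v j‖ ≤ 32 := by
  rcases le_or_gt v.im (1/2) with hb | hb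
  · apply Real.tsum_le_of_sum_range_le (fun j => norm_nonneg _)
    intro m
    calc ∑ j ∈ Finset.range m, ‖qpair v j‖
        ≤ ∑ j ∈ Finset.range m, 8 * (1/((j:ℝ)+1)^2) := by
          apply Finset.sum_le_sum
          intro j _
          calc ‖qpair v j‖ ≤ 4*(2*v.im+1) / ((j:ℝ)+1)^2 := qpair_abs_le_sq v hre him j
            _ ≤ 8 / ((j:ℝ)+1)^2 := by gcongr; linarith
            _ = 8 * (1/((j:ℝ)+1)^2) := by rw [mul_one_div]
      _ = 8 * ∑ j ∈ Finset.range m, 1/((j:ℝ)+1)^2 := by rw [Finset.mul_sum]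
      _ ≤ 32 := by
          have h := sum_range_inv_sq_le m
          have h2 : (0:ℝ) < 2/((m:ℝ)+1) := by positivity
          linarith
  · apply Real.tsum_le_of_sum_range_le (fun j => norm_nonneg _)
    intro m
    have key : ∀ j : ℕ, ‖qpair v j‖
        ≤ 16*(2*v.im+1) * ((fun j : ℕ => 1/(2*v.im+j)) j - (fun j : ℕ => 1/(2*v.im+j)) (j+1)) := by
      intro j
      have h := qpair_abs_le v hre him j
      have heq : (fun j : ℕ => 1/(2*v.im+(j:ℝ))) j - (fun j : ℕ => 1/(2*v.im+(j:ℝ))) (j+1)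
          = 1/((2*v.im+j) * (2*v.im+j+1)) := by
        show (1:ℝ)/(2*v.im+(j:ℝ)) - 1/(2*v.im+((j:ℕ)+1:ℕ)) = _
        push_cast
        rw [div_sub_div _ _ (by positivity) (by positivity)]
        congr 1
        · ring
        · ring
      rw [heq, mul_one_div]
      exact h
    calc ∑ j ∈ Finset.range m, ‖qpair v j‖
        ≤ ∑ j ∈ Finset.range m, 16*(2*v.im+1) * ((fun j : ℕ => 1/(2*v.im+j)) j - (fun j : ℕ => 1/(2*v.im+j)) (j+1)) :=
          Finset.sum_le_sum (fun j _ => key j)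
      _ = 16*(2*v.im+1) * (1/(2*v.im+((0:ℕ):ℝ)) - 1/(2*v.im+((m:ℕ):ℝ))) := by
          rw [← Finset.mul_sum, Finset.sum_range_sub' (fun j : ℕ => 1/(2*v.im+(j:ℝ))) m]
      _ ≤ 16*(2*v.im+1) * (1/(2*v.im)) := by
          have hm : (0:ℝ) ≤ 1/(2*v.im+((m:ℕ):ℝ)) := by positivity
          have hf : (0:ℝ) ≤ 16*(2*v.im+1) := by positivity
          have he : 2*v.im+((0:ℕ):ℝ) = 2*v.im := by norm_num
          rw [he]
          nlinarith
      _ ≤ 32 := by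
          rw [mul_one_div, div_le_iff₀ (by positivity)]
          linarith

lemma abs_tsum_qpair_le (v : ℂ) (hre : |v.re| ≤ 1/2) (him : 0 < v.im) :
    ‖∑' j, qpair v j‖ ≤ 32 := by
  have h1 : ‖∑' j, qpair v j‖ ≤ ∑' j, ‖qpair v j‖ :=
    norm_tsum_le_tsum_norm (summable_qpair_abs v hre him)
  calc ‖∑' j, qpair v j‖ ≤ ∑' j, ‖qpair v j‖ := h1
    _ = ∑' j, ‖qpair v j‖ := by simp
    _ ≤ 32 := tsum_qpair_abs_le v hre him

noncomputable def fz (w : ℂ) (k : ℤ) : ℂ := (w - (k:ℂ))⁻¹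

lemma fz_pair (w : ℂ) (k₀ : ℤ) (j : ℕ) :
    fz w (k₀ + (j+1)) + fz w (k₀ - (j+1)) = qpair (w - (k₀:ℂ)) j := by
  unfold fz qpair
  push_cast
  ring_nf

lemma window_insert (k₀ : ℤ) (m : ℕ) :
    Finset.Icc (k₀-((m:ℤ)+1)) (k₀+((m:ℤ)+1))
      = insert (k₀-((m:ℤ)+1)) (insert (k₀+((m:ℤ)+1)) (Finset.Icc (k₀-m) (k₀+m))) := by
  ext k
  simp only [Finset.mem_Icc, Finset.mem_insert]
  omega

lemma centered_sum (w : ℂ) (k₀ : ℤ) (m : ℕ) :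
    ∑ k ∈ Finset.Icc (k₀-(m:ℤ)) (k₀+(m:ℤ)), fz w k
      = fz w k₀ + ∑ j ∈ Finset.range m, qpair (w - (k₀:ℂ)) j := by
  induction m with
  | zero => simp
  | succ m ih =>
    have h1 : (((m:ℕ)+1 : ℕ) : ℤ) = (m:ℤ)+1 := by push_cast; ring
    rw [h1, window_insert k₀ m, Finset.sum_insert, Finset.sum_insert,
      Finset.sum_range_succ, ih, ← fz_pair w k₀ m]
    · ring
    · simp only [Finset.mem_Icc]
      omega
    · simp only [Finset.mem_insert, Finset.mem_Icc]
      omega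

lemma centered_tendsto (w : ℂ) (k₀ : ℤ)
    (hsum : Summable (qpair (w - (k₀:ℂ)))) :
    Tendsto (fun m : ℕ => ∑ k ∈ Finset.Icc (k₀-(m:ℤ)) (k₀+(m:ℤ)), fz w k) atTop
      (nhds (fz w k₀ + ∑' j, qpair (w - (k₀:ℂ)) j)) := by
  have h2 := hsum.hasSum.tendsto_sum_nat
  have h3 := (tendsto_const_nhds (x := fz w k₀) (f := atTop (α := ℕ))).add h2
  refine h3.congr ?_
  intro m
  exact (centered_sum w k₀ m).symm

lemma sdiff_sub (A B : Finset ℤ) (f : ℤ → ℂ) :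
    ∑ k ∈ A, f k - ∑ k ∈ B, f k = ∑ k ∈ A \ B, f k - ∑ k ∈ B \ A, f k := by
  have hA := Finset.sum_inter_add_sum_sdiff A B f
  have hB := Finset.sum_inter_add_sum_sdiff B A f
  rw [Finset.inter_comm] at hB
  rw [← hA, ← hB]
  ring

lemma boundary_subset_1 (k₀ : ℤ) (m : ℕ) :
    Finset.Icc (-(m:ℤ)) (m:ℤ) \ Finset.Icc (k₀-(m:ℤ)) (k₀+(m:ℤ))
      ⊆ Finset.Icc (-(m:ℤ)) (k₀-(m:ℤ)-1) ∪ Finset.Icc (k₀+(m:ℤ)+1) (m:ℤ) := by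
  intro k hk
  simp only [Finset.mem_sdiff, Finset.mem_Icc, Finset.mem_union, not_and, not_le] at hk ⊢
  omega

lemma boundary_subset_2 (k₀ : ℤ) (m : ℕ) :
    Finset.Icc (k₀-(m:ℤ)) (k₀+(m:ℤ)) \ Finset.Icc (-(m:ℤ)) (m:ℤ)
      ⊆ Finset.Icc (k₀-(m:ℤ)) (-(m:ℤ)-1) ∪ Finset.Icc ((m:ℤ)+1) (k₀+(m:ℤ)) := by
  intro k hk
  simp only [Finset.mem_sdiff, Finset.mem_Icc, Finset.mem_union, not_and, not_le] at hk ⊢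
  omega

lemma card_boundary_1 (k₀ : ℤ) (m : ℕ) :
    ((Finset.Icc (-(m:ℤ)) (m:ℤ) \ Finset.Icc (k₀-(m:ℤ)) (k₀+(m:ℤ))).card : ℝ) ≤ |(k₀:ℝ)| := by
  have h1 := Finset.card_le_card (boundary_subset_1 k₀ m)
  have h2 := Finset.card_union_le (Finset.Icc (-(m:ℤ)) (k₀-(m:ℤ)-1)) (Finset.Icc (k₀+(m:ℤ)+1) (m:ℤ))
  rw [Int.card_Icc, Int.card_Icc] at h2
  have h3 : (Finset.Icc (-(m:ℤ)) (m:ℤ) \ Finset.Icc (k₀-(m:ℤ)) (k₀+(m:ℤ))).card ≤ k₀.natAbs := by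
    omega
  calc ((Finset.Icc (-(m:ℤ)) (m:ℤ) \ Finset.Icc (k₀-(m:ℤ)) (k₀+(m:ℤ))).card : ℝ)
      ≤ (k₀.natAbs : ℝ) := by exact_mod_cast h3
    _ = |(k₀:ℝ)| := by rw [Nat.cast_natAbs, Int.cast_abs]

lemma card_boundary_2 (k₀ : ℤ) (m : ℕ) :
    ((Finset.Icc (k₀-(m:ℤ)) (k₀+(m:ℤ)) \ Finset.Icc (-(m:ℤ)) (m:ℤ)).card : ℝ) ≤ |(k₀:ℝ)| := by
  have h1 := Finset.card_le_card (boundary_subset_2 k₀ m)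
  have h2 := Finset.card_union_le (Finset.Icc (k₀-(m:ℤ)) (-(m:ℤ)-1)) (Finset.Icc ((m:ℤ)+1) (k₀+(m:ℤ)))
  rw [Int.card_Icc, Int.card_Icc] at h2
  have h3 : (Finset.Icc (k₀-(m:ℤ)) (k₀+(m:ℤ)) \ Finset.Icc (-(m:ℤ)) (m:ℤ)).card ≤ k₀.natAbs := by
    omega
  calc ((Finset.Icc (k₀-(m:ℤ)) (k₀+(m:ℤ)) \ Finset.Icc (-(m:ℤ)) (m:ℤ)).card : ℝ)
      ≤ (k₀.natAbs : ℝ) := by exact_mod_cast h3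
    _ = |(k₀:ℝ)| := by rw [Nat.cast_natAbs, Int.cast_abs]

/-- norm bound for far away terms -/
lemma fz_far_bound (w : ℂ) (k : ℤ) (R : ℝ) (hR : 1 ≤ R)
    (hk : R + ‖w‖ ≤ |(k:ℝ)|) : ‖fz w k‖ ≤ R⁻¹ := by
  have h1 : R ≤ ‖w - (k:ℂ)‖ := by
    have h2 : ‖(k:ℂ)‖ - ‖w‖ ≤ ‖(k:ℂ) - w‖ := norm_sub_norm_le _ _
    have h3 : ‖(k:ℂ) - w‖ = ‖w - (k:ℂ)‖ := norm_sub_rev _ _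
    have h4 : ‖(k:ℂ)‖ = |(k:ℝ)| := by
      rw [Complex.norm_intCast]
    linarith
  rw [fz, norm_inv]
  exact inv_anti₀ (by linarith) h1

lemma sum_norm_fz_le (w : ℂ) (S : Finset ℤ) (R : ℝ) (hR : 1 ≤ R) (b : ℝ)
    (hcard : (S.card : ℝ) ≤ b)
    (hfar : ∀ k ∈ S, R + ‖w‖ ≤ |(k:ℝ)|) :
    ‖∑ k ∈ S, fz w k‖ ≤ b * R⁻¹ := by
  calc ‖∑ k ∈ S, fz w k‖ ≤ ∑ k ∈ S, ‖fz w k‖ := norm_sum_le _ _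
    _ ≤ ∑ _k ∈ S, R⁻¹ := Finset.sum_le_sum (fun k hk => fz_far_bound w k R hR (hfar k hk))
    _ = (S.card : ℝ) * R⁻¹ := by rw [Finset.sum_const, nsmul_eq_mul]
    _ ≤ b * R⁻¹ := by
        have : (0:ℝ) < R := by linarith
        apply mul_le_mul_of_nonneg_right hcard (by positivity)

lemma boundary_tendsto (w : ℂ) (k₀ : ℤ) :
    Tendsto (fun m : ℕ => (∑ k ∈ Finset.Icc (-(m:ℤ)) (m:ℤ), fz w k)
      - ∑ k ∈ Finset.Icc (k₀-(m:ℤ)) (k₀+(m:ℤ)), fz w k) atTop (nhds 0) := by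
  set c : ℝ := |(k₀:ℝ)| + ‖w‖ + 1 with hc
  have hc0 : 0 ≤ |(k₀:ℝ)| := abs_nonneg _
  have hw0 : 0 ≤ ‖w‖ := norm_nonneg _
  apply squeeze_zero_norm' (a := fun m : ℕ => (2 * |(k₀:ℝ)|) * ((m:ℝ) - c)⁻¹)
  · filter_upwards [eventually_ge_atTop (⌈c⌉₊ + 1)] with m hm
    have hmc : c + 1 ≤ (m:ℝ) := by
      have h1 : ((⌈c⌉₊ + 1 : ℕ) : ℝ) ≤ (m:ℝ) := by exact_mod_cast hm
      have h2 := Nat.le_ceil c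
      push_cast at h1
      linarith
    set R : ℝ := (m:ℝ) - |(k₀:ℝ)| - ‖w‖ with hR
    have hR1 : 1 ≤ R := by rw [hR]; rw [hc] at hmc; linarith
    have hfar : ∀ k ∈ Finset.Icc (-(m:ℤ)) (m:ℤ) \ Finset.Icc (k₀-(m:ℤ)) (k₀+(m:ℤ))
        ∪ Finset.Icc (k₀-(m:ℤ)) (k₀+(m:ℤ)) \ Finset.Icc (-(m:ℤ)) (m:ℤ),
        R + ‖w‖ ≤ |(k:ℝ)| := by
      intro k hk
      have habs : m ≤ k.natAbs + k₀.natAbs := by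
        simp only [Finset.mem_union, Finset.mem_sdiff, Finset.mem_Icc, not_and, not_le] at hk
        rcases hk with ⟨⟨h1,h2⟩,h3⟩ | ⟨⟨h1,h2⟩,h3⟩ <;> omega
      have habs' : (m:ℝ) ≤ |(k:ℝ)| + |(k₀:ℝ)| := by
        have h5 : ((m:ℕ):ℝ) ≤ ((k.natAbs + k₀.natAbs : ℕ) : ℝ) := by exact_mod_cast habs
        push_cast at h5
        rw [Nat.cast_natAbs, Nat.cast_natAbs, Int.cast_abs, Int.cast_abs] at h5
        exact h5
      rw [hR]
      linarith
    rw [sdiff_sub]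
    have h1 := sum_norm_fz_le w _ R hR1 _ (card_boundary_1 k₀ m)
      (fun k hk => hfar k (Finset.mem_union_left _ hk))
    have h2 := sum_norm_fz_le w _ R hR1 _ (card_boundary_2 k₀ m)
      (fun k hk => hfar k (Finset.mem_union_right _ hk))
    have h3 := norm_sub_le (∑ k ∈ Finset.Icc (-(m:ℤ)) (m:ℤ) \ Finset.Icc (k₀-(m:ℤ)) (k₀+(m:ℤ)), fz w k)
      (∑ k ∈ Finset.Icc (k₀-(m:ℤ)) (k₀+(m:ℤ)) \ Finset.Icc (-(m:ℤ)) (m:ℤ), fz w k)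
    have hRinv : R⁻¹ ≤ ((m:ℝ) - c)⁻¹ := by
      apply inv_anti₀
      · rw [hc] at hmc; linarith
      · rw [hR, hc]; linarith
    have hRpos : (0:ℝ) < R⁻¹ := by positivity
    calc ‖_ - _‖ ≤ _ := h3
      _ ≤ |(k₀:ℝ)| * R⁻¹ + |(k₀:ℝ)| * R⁻¹ := add_le_add h1 h2
      _ = (2 * |(k₀:ℝ)|) * R⁻¹ := by ring
      _ ≤ (2 * |(k₀:ℝ)|) * ((m:ℝ) - c)⁻¹ := by
          apply mul_le_mul_of_nonneg_left hRinv (by positivity)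
  · have h1 : Tendsto (fun m : ℕ => (m:ℝ) - c) atTop atTop :=
      tendsto_atTop_add_const_right _ _ tendsto_natCast_atTop_atTop
    have h2 : Tendsto (fun m : ℕ => ((m:ℝ) - c)⁻¹) atTop (nhds 0) := h1.inv_tendsto_atTop
    have h3 := h2.const_mul (2 * |(k₀:ℝ)|)
    simpa using h3

lemma symmetric_tendsto (w : ℂ) (k₀ : ℤ)
    (hsum : Summable (qpair (w - (k₀:ℂ)))) :
    Tendsto (fun m : ℕ => ∑ k ∈ Finset.Icc (-(m:ℤ)) (m:ℤ), fz w k) atTop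
      (nhds (fz w k₀ + ∑' j, qpair (w - (k₀:ℂ)) j)) := by
  have h1 := (boundary_tendsto w k₀).add (centered_tendsto w k₀ hsum)
  rw [zero_add] at h1
  refine h1.congr ?_
  intro m
  ring

lemma single_erase (S : Finset ℤ) (f : ℤ → ℂ) (a : ℤ) :
    ∑ k ∈ S.erase a, f k = ∑ k ∈ S, f k - (if a ∈ S then f a else 0) := by
  by_cases h : a ∈ S
  · rw [if_pos h, Finset.sum_erase_eq_sub h]
  · rw [if_neg h, Finset.erase_eq_of_notMem h, sub_zero]

lemma sum_double_erase (S : Finset ℤ) (f : ℤ → ℂ) (a b : ℤ) (hab : b ≠ a) :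
    ∑ k ∈ S, f k = ∑ k ∈ (S.erase a).erase b, f k
      + (if a ∈ S then f a else 0) + (if b ∈ S then f b else 0) := by
  have h1 := single_erase S f a
  have h2 := single_erase (S.erase a) f b
  have h3 : (if b ∈ S.erase a then f b else 0) = (if b ∈ S then f b else 0) := by
    by_cases hb : b ∈ S <;> simp [Finset.mem_erase, hab, hb]
  rw [h3] at h2
  rw [h2, h1]
  ring

lemma norm_ite_le (P : Prop) [Decidable P] (x : ℂ) (b : ℝ) (hx : ‖x‖ ≤ b) (hb : 0 ≤ b) :
    ‖if P then x else 0‖ ≤ b := by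
  split
  · exact hx
  · simpa using hb

lemma int_dist_ge_one {k k₀ : ℤ} (hk : k ≠ k₀) : (1:ℝ) ≤ |(k:ℝ) - (k₀:ℝ)| := by
  have h1 : 1 ≤ (k - k₀).natAbs := by omega
  have h2 : ((k-k₀).natAbs : ℝ) = |((k-k₀:ℤ):ℝ)| := by rw [Nat.cast_natAbs, Int.cast_abs]
  push_cast at h2
  calc (1:ℝ) ≤ ((k-k₀).natAbs:ℝ) := by exact_mod_cast h1
    _ = |(k:ℝ) - (k₀:ℝ)| := h2

lemma fz_abs_le_two_div (w : ℂ) (k₀ k : ℤ) (hre : |w.re - (k₀:ℝ)| ≤ 1/2) (hk : k ≠ k₀) :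
    ‖fz w k‖ ≤ 2 * (1/|(k:ℝ) - (k₀:ℝ)|) := by
  have h1 : (1:ℝ) ≤ |(k:ℝ) - (k₀:ℝ)| := int_dist_ge_one hk
  have h2 : |(k:ℝ) - (k₀:ℝ)|/2 ≤ |w.re - (k:ℝ)| := by
    have htri : |(k:ℝ) - (k₀:ℝ)| ≤ |w.re - (k:ℝ)| + |w.re - (k₀:ℝ)| := by
      calc |(k:ℝ) - (k₀:ℝ)| = |(-(w.re - (k:ℝ))) + (w.re - (k₀:ℝ))| := by ring_nf
        _ ≤ |(-(w.re - (k:ℝ)))| + |w.re - (k₀:ℝ)| := abs_add_le _ _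
        _ = |w.re - (k:ℝ)| + |w.re - (k₀:ℝ)| := by rw [abs_neg]
    linarith
  have h3 : |w.re - (k:ℝ)| ≤ ‖w - (k:ℂ)‖ := by
    have := Complex.abs_re_le_norm (w - (k:ℂ))
    simpa using this
  rw [fz, norm_inv]
  have h4 : (0:ℝ) < |(k:ℝ) - (k₀:ℝ)|/2 := by linarith
  calc ‖w - (k:ℂ)‖⁻¹ ≤ (|(k:ℝ) - (k₀:ℝ)|/2)⁻¹ := by
        apply inv_anti₀ h4
        linarith
    _ = 2 * (1/|(k:ℝ) - (k₀:ℝ)|) := by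
        have h5 : |(k:ℝ) - (k₀:ℝ)| ≠ 0 := by linarith
        field_simp

lemma log_cast_le (c : ℕ) (X : ℝ) (h1 : (c:ℝ) ≤ X) (hX : 1 ≤ X) : Real.log c ≤ Real.log X := by
  rcases Nat.eq_zero_or_pos c with h0 | h0
  · simp only [h0, Nat.cast_zero, Real.log_zero]
    exact Real.log_nonneg hX
  · exact Real.log_le_log (by exact_mod_cast h0) h1

lemma log_ratio_bound (φ β : ℝ) (hφ0 : 0 < φ) (hφ2 : φ < 1/2) (hβ1 : φ < β) (hβ2 : β < 1 - φ) :
    |Real.log (β/(1-β))| ≤ Real.log ((1-φ)/φ) := by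
  have hβ0 : 0 < β := lt_trans hφ0 hβ1
  have h1β : 0 < 1 - β := by linarith
  rw [abs_le]
  constructor
  · have hle : φ/(1-φ) ≤ β/(1-β) := div_le_div₀ (le_of_lt hβ0) (le_of_lt hβ1) h1β (by linarith)
    have h2 : Real.log (φ/(1-φ)) ≤ Real.log (β/(1-β)) := Real.log_le_log (div_pos hφ0 (by linarith)) hle
    have h3 : Real.log (φ/(1-φ)) = - Real.log ((1-φ)/φ) := by
      rw [← Real.log_inv, inv_div]
    linarith
  · have hle : β/(1-β) ≤ (1-φ)/φ := div_le_div₀ (by linarith) (le_of_lt hβ2) hφ0 (by linarith)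
    exact Real.log_le_log (div_pos hβ0 h1β) hle
lemma sum_fz_erase_le (w : ℂ) (k₀ : ℤ) (hre : |w.re - (k₀:ℝ)| ≤ 1/2) (S : Finset ℤ) :
    ∑ k ∈ S.erase k₀, ‖fz w k‖ ≤ 4*(1 + Real.log S.card) := by
  calc ∑ k ∈ S.erase k₀, ‖fz w k‖ ≤ ∑ k ∈ S.erase k₀, 2*(1/|(k:ℝ) - (k₀:ℝ)|) :=
      Finset.sum_le_sum (fun k hk => fz_abs_le_two_div w k₀ k hre (Finset.mem_erase.mp hk).1)
    _ = 2 * ∑ k ∈ S.erase k₀, 1/|(k:ℝ) - (k₀:ℝ)| := by rw [Finset.mul_sum]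
    _ ≤ 2 * (2*(1 + Real.log S.card)) := by
        have h := sum_inv_dist_le S k₀
        linarith
    _ = 4*(1+Real.log S.card) := by ring

lemma sum_neg_reindex (w : ℂ) (a b : ℤ) :
    ∑ i ∈ Finset.Icc a b, (1:ℂ)/(w + (i:ℂ)) = ∑ k ∈ Finset.Icc (-b) (-a), fz w k := by
  have himg : Finset.Icc (-b) (-a) = (Finset.Icc a b).image (fun i => -i) := by
    ext k
    simp only [Finset.mem_Icc, Finset.mem_image]
    constructor
    · intro hk; exact ⟨-k, by omega, by omega⟩
    · rintro ⟨i, hi, rfl⟩; omega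
  rw [himg, Finset.sum_image (by intro x _ y _ h; exact neg_inj.mp h)]
  apply Finset.sum_congr rfl
  intro i _
  rw [fz, one_div]
  push_cast
  rw [sub_neg_eq_add]

open Filter

/-- Lemma 4.12 of the paper: away from its nearest pole, the logarithmic derivative `D₂′`
of the key function `D₂` arising in the steepest-descent analysis of the NBRW kernel is of
size `O(log n)`.  The limit defining `D₂′(z)` exists, and near the nearest pole `x_*` of
the pole set `E`, one has `|D₂′(z) − s/(n(z − x_*))| ≤ C log n` with the appropriate
sign `s ∈ {1, −1}`. -/
theorem D2_derivative_log_bound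
    (φ C₀ : ℝ) (hφ : φ ∈ Set.Ioo (0 : ℝ) (1 / 2)) (hC₀ : 1 ≤ C₀) :
    ∃ C : ℝ, 0 < C ∧
      ∀ (n : ℕ), 2 ≤ n →
      ∀ (β : ℝ), β ∈ Set.Ioo φ (1 - φ) →
      ∀ (M N : ℤ), 1 ≤ M → 1 ≤ N → (M : ℝ) ≤ C₀ * n → (N : ℝ) ≤ C₀ * n →
      ∀ (d : ℤ → ℤ), StrictMonoOn d (Set.Icc (-M) N) →
        (∀ i ∈ Set.Icc (-M) N, |(d i : ℝ)| ≤ C₀ * n) →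
      ∀ (x₂ t₂ : ℤ), |(x₂ : ℝ)| ≤ C₀ * n → 1 ≤ t₂ → (t₂ : ℝ) ≤ C₀ * n →
      ∀ z : ℂ, 0 < z.im →
        ∃ L : ℂ,
          Tendsto (fun m : ℕ =>
              (∑ i ∈ Finset.Icc (-M) N, 1 / ((n : ℂ) * z - (d i : ℂ)))
              - ((∑ i ∈ Finset.Icc (-(m : ℤ)) (-x₂), 1 / ((n : ℂ) * z + (i : ℂ)))
                + (∑ i ∈ Finset.Icc (-x₂ + t₂) (m : ℤ), 1 / ((n : ℂ) * z + (i : ℂ))))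
              + ((Real.log (β / (1 - β)) : ℝ) : ℂ)) atTop (nhds L) ∧
          ∀ xs : ℝ,
            (∃ k : ℤ, xs = (k : ℝ) / n ∧
              (((∃ i ∈ Finset.Icc (-M) N, d i = k) ∧ x₂ - t₂ + 1 ≤ k ∧ k ≤ x₂ - 1) ∨
               ((k ≤ x₂ - t₂ ∨ x₂ ≤ k) ∧ ¬ ∃ i ∈ Finset.Icc (-M) N, d i = k))) →
            (∀ y : ℝ,
              (∃ k : ℤ, y = (k : ℝ) / n ∧
                (((∃ i ∈ Finset.Icc (-M) N, d i = k) ∧ x₂ - t₂ + 1 ≤ k ∧ k ≤ x₂ - 1) ∨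
                 ((k ≤ x₂ - t₂ ∨ x₂ ≤ k) ∧ ¬ ∃ i ∈ Finset.Icc (-M) N, d i = k))) →
              ‖z - (xs : ℂ)‖ ≤ ‖z - (y : ℂ)‖) →
            ∀ s : ℝ,
              ((∃ i ∈ Finset.Icc (-M) N, ((d i : ℤ) : ℝ) = n * xs) → s = 1) →
              ((¬ ∃ i ∈ Finset.Icc (-M) N, ((d i : ℤ) : ℝ) = n * xs) → s = -1) →
              ‖L - (s : ℂ) / ((n : ℂ) * (z - (xs : ℂ)))‖ ≤ C * Real.log n := by
  obtain ⟨hφ0, hφ2⟩ := hφ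
  set Cβ := Real.log ((1-φ)/φ) with hCβdef
  have hCβpos : 0 < Cβ := Real.log_pos (by rw [lt_div_iff₀ hφ0]; linarith)
  have hlog3C : 0 < Real.log (3*C₀) := Real.log_pos (by linarith)
  have hlog2 : (0:ℝ) < Real.log 2 := Real.log_pos (by norm_num)
  set A := Cβ + 52 + 8*Real.log (3*C₀) with hAdef
  have hApos : 0 < A := by positivity
  refine ⟨A/Real.log 2 + 8, by positivity, ?_⟩
  intro n hn β hβ M N hM hN hMn hNn d hmono hdbd x₂ t₂ hx₂ ht₂ ht₂n z hz
  have hnR : (2:ℝ) ≤ (n:ℝ) := by exact_mod_cast hn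
  have hn0 : (n:ℝ) ≠ 0 := by linarith
  have hnC0 : (n:ℂ) ≠ 0 := by
    simp only [ne_eq, Nat.cast_eq_zero]
    omega
  have hC0n : (2:ℝ) ≤ C₀ * n := by nlinarith
  set w := (n:ℂ)*z with hw
  have him : 0 < w.im := by
    rw [hw, Complex.mul_im]
    simp only [Complex.natCast_re, Complex.natCast_im, zero_mul, add_zero]
    have : (0:ℝ) < (n:ℝ) := by linarith
    positivity
  set k₀ : ℤ := round w.re with hk₀def
  have hreK : |w.re - (k₀:ℝ)| ≤ 1/2 := by rw [hk₀def]; exact abs_sub_round w.re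
  have hvre : |(w - (k₀:ℂ)).re| ≤ 1/2 := by
    simpa [Complex.sub_re, Complex.intCast_re] using hreK
  have hvim : 0 < (w - (k₀:ℂ)).im := by
    simpa [Complex.sub_im, Complex.intCast_im] using him
  have hsum : Summable (qpair (w - (k₀:ℂ))) := summable_qpair _ hvre hvim
  set F := ∑' j, qpair (w - (k₀:ℂ)) j with hFdef
  have hFle : ‖F‖ ≤ 32 := by
    rw [hFdef]
    exact abs_tsum_qpair_le _ hvre hvim
  set Dset := (Finset.Icc (-M) N).image d with hDsetdef
  set gapF := Finset.Icc (x₂ - t₂ + 1) (x₂ - 1) with hgapFdef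
  set cβ : ℂ := ((Real.log (β / (1 - β)) : ℝ) : ℂ) with hcβdef
  -- rewrite of the d-sum
  have hinj : ∀ i ∈ Finset.Icc (-M) N, ∀ j ∈ Finset.Icc (-M) N, d i = d j → i = j := by
    intro i hi j hj hij
    have hi' := Finset.mem_Icc.mp hi
    have hj' := Finset.mem_Icc.mp hj
    exact hmono.injOn (Set.mem_Icc.mpr hi') (Set.mem_Icc.mpr hj') hij
  have hSD : (∑ i ∈ Finset.Icc (-M) N, 1/(w - (d i:ℂ))) = ∑ k ∈ Dset, fz w k := by
    rw [hDsetdef, Finset.sum_image hinj]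
    exact Finset.sum_congr rfl (fun i _ => by rw [fz, one_div])
  refine ⟨(∑ k ∈ Dset, fz w k) + (∑ k ∈ gapF, fz w k) + cβ - (fz w k₀ + F), ?_, ?_⟩
  · -- the convergence statement
    have hlim := symmetric_tendsto w k₀ hsum
    have h2 := (tendsto_const_nhds
      (x := (∑ k ∈ Dset, fz w k) + (∑ k ∈ gapF, fz w k) + cβ) (f := atTop (α := ℕ))).sub hlim
    refine h2.congr' ?_
    filter_upwards [eventually_ge_atTop (x₂.natAbs + t₂.natAbs)] with m hm
    have hm1 : x₂ ≤ (m:ℤ) := by omega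
    have hm2 : -(m:ℤ) ≤ x₂ - t₂ := by omega
    have hA1 : (∑ i ∈ Finset.Icc (-(m:ℤ)) (-x₂), 1/(w + (i:ℂ)))
        = ∑ k ∈ Finset.Icc x₂ (m:ℤ), fz w k := by
      have := sum_neg_reindex w (-(m:ℤ)) (-x₂)
      simpa using this
    have hB1 : (∑ i ∈ Finset.Icc (-x₂ + t₂) (m:ℤ), 1/(w + (i:ℂ)))
        = ∑ k ∈ Finset.Icc (-(m:ℤ)) (x₂ - t₂), fz w k := by
      have h := sum_neg_reindex w (-x₂ + t₂) (m:ℤ)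
      rw [show -(-x₂ + t₂) = x₂ - t₂ by ring] at h
      exact h
    have hd2 : Disjoint gapF (Finset.Icc x₂ (m:ℤ)) := by
      rw [Finset.disjoint_left]
      intro a ha hb
      rw [hgapFdef] at ha
      simp only [Finset.mem_Icc] at ha hb
      omega
    have hd1 : Disjoint (Finset.Icc (-(m:ℤ)) (x₂-t₂)) (gapF ∪ Finset.Icc x₂ (m:ℤ)) := by
      rw [Finset.disjoint_left]
      intro a ha hb
      rw [Finset.mem_union, hgapFdef] at hb
      simp only [Finset.mem_Icc] at ha hb
      omega
    have hU : Finset.Icc (-(m:ℤ)) (m:ℤ)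
        = Finset.Icc (-(m:ℤ)) (x₂-t₂) ∪ (gapF ∪ Finset.Icc x₂ (m:ℤ)) := by
      rw [hgapFdef]
      ext k
      simp only [Finset.mem_Icc, Finset.mem_union]
      omega
    have hsplit : ∑ k ∈ Finset.Icc (-(m:ℤ)) (m:ℤ), fz w k
        = (∑ k ∈ Finset.Icc (-(m:ℤ)) (x₂-t₂), fz w k) + ((∑ k ∈ gapF, fz w k)
          + ∑ k ∈ Finset.Icc x₂ (m:ℤ), fz w k) := by
      rw [hU, Finset.sum_union hd1, Finset.sum_union hd2]
    show _ = _
    rw [hSD, hA1, hB1, hsplit]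
    ring
  · -- the bound
    intro xs hxs hmin s hs1 hs2
    obtain ⟨ks, hxsk, hpole0⟩ := hxs
    have hnxs : (n:ℝ) * xs = (ks:ℝ) := by rw [hxsk]; field_simp
    have hterm : ∀ k : ℤ, (n:ℂ) * (z - ((((k:ℝ)/n : ℝ)):ℂ)) = w - (k:ℂ) := by
      intro k
      rw [hw]
      push_cast
      field_simp
    have htermxs : (n:ℂ) * (z - (xs:ℂ)) = w - (ks:ℂ) := by
      rw [hxsk]
      exact hterm ks
    -- pole predicate
    have hmemD : ∀ k:ℤ, k ∈ Dset ↔ ∃ i ∈ Finset.Icc (-M) N, d i = k := by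
      intro k
      rw [hDsetdef, Finset.mem_image]
    have hmemg : ∀ k:ℤ, k ∈ gapF ↔ (x₂-t₂+1 ≤ k ∧ k ≤ x₂-1) := by
      intro k
      rw [hgapFdef, Finset.mem_Icc]
    have hpoleks : (ks ∈ Dset ∧ ks ∈ gapF) ∨ (ks ∉ Dset ∧ ks ∉ gapF) := by
      rcases hpole0 with ⟨hex, hb1, hb2⟩ | ⟨hb, hnex⟩
      · exact Or.inl ⟨(hmemD ks).mpr hex, (hmemg ks).mpr ⟨hb1, hb2⟩⟩
      · refine Or.inr ⟨fun h => hnex ((hmemD ks).mp h), fun h => ?_⟩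
        have := (hmemg ks).mp h
        omega
    have hminZ : ∀ k : ℤ, ((k ∈ Dset ∧ k ∈ gapF) ∨ (k ∉ Dset ∧ k ∉ gapF)) →
        ‖w - (ks:ℂ)‖ ≤ ‖w - (k:ℂ)‖ := by
      intro k hk
      have hcond : (∃ k' : ℤ, ((k:ℝ)/n) = (k':ℝ)/n ∧
          (((∃ i ∈ Finset.Icc (-M) N, d i = k') ∧ x₂ - t₂ + 1 ≤ k' ∧ k' ≤ x₂ - 1) ∨
           ((k' ≤ x₂ - t₂ ∨ x₂ ≤ k') ∧ ¬ ∃ i ∈ Finset.Icc (-M) N, d i = k'))) := by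
        refine ⟨k, rfl, ?_⟩
        rcases hk with ⟨hD, hg⟩ | ⟨hD, hg⟩
        · exact Or.inl ⟨(hmemD k).mp hD, (hmemg k).mp hg⟩
        · refine Or.inr ⟨?_, fun h => hD ((hmemD k).mpr h)⟩
          by_contra hcon
          push_neg at hcon
          exact hg ((hmemg k).mpr (by omega))
      have hy := hmin ((k:ℝ)/n) hcond
      have h5 := mul_le_mul_of_nonneg_left hy (le_of_lt (show (0:ℝ) < (n:ℝ) by linarith))
      calc ‖w - (ks:ℂ)‖ = ‖(n:ℂ) * (z - (xs:ℂ))‖ := by rw [htermxs]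
        _ = (n:ℝ) * ‖z - (xs:ℂ)‖ := by
            rw [norm_mul, Complex.norm_natCast]
        _ ≤ (n:ℝ) * ‖z - ((((k:ℝ)/n : ℝ)):ℂ)‖ := h5
        _ = ‖(n:ℂ) * (z - ((((k:ℝ)/n : ℝ)):ℂ))‖ := by
            rw [norm_mul, Complex.norm_natCast]
        _ = ‖w - (k:ℂ)‖ := by rw [hterm k]
    -- value of s
    have hsval : (ks ∈ Dset → s = 1) ∧ (ks ∉ Dset → s = -1) := by
      constructor
      · intro hksD
        apply hs1
        obtain ⟨i, hi, hdi⟩ := (hmemD ks).mp hksD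
        refine ⟨i, hi, ?_⟩
        rw [hnxs]
        exact_mod_cast congrArg (Int.cast : ℤ → ℝ) hdi
      · intro hksD
        apply hs2
        rintro ⟨i, hi, hdi⟩
        apply hksD
        refine (hmemD ks).mpr ⟨i, hi, ?_⟩
        have : ((d i : ℤ):ℝ) = (ks:ℝ) := by rw [hdi, hnxs]
        exact_mod_cast this
    have hsor : s = 1 ∨ s = -1 := by
      by_cases hksD : ks ∈ Dset
      · exact Or.inl (hsval.1 hksD)
      · exact Or.inr (hsval.2 hksD)
    have hsnorm : ‖(s:ℂ)‖ = 1 := by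
      rcases hsor with h | h <;> rw [h] <;> norm_num
    -- rewrite the goal
    have hgoalrw : ((∑ k ∈ Dset, fz w k) + (∑ k ∈ gapF, fz w k) + cβ - (fz w k₀ + F))
        - (s:ℂ)/((n:ℂ)*(z - (xs:ℂ)))
        = cβ + ((∑ k ∈ Dset, fz w k) + (∑ k ∈ gapF, fz w k) - fz w k₀ - (s:ℂ) * fz w ks) - F := by
      have hfzks : ((s:ℂ)/((n:ℂ)*(z - (xs:ℂ)))) = (s:ℂ) * fz w ks := by
        rw [div_eq_mul_inv, htermxs, fz]
      rw [hfzks]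
      ring
    rw [hgoalrw]
    set R' := (∑ k ∈ Dset, fz w k) + (∑ k ∈ gapF, fz w k) - fz w k₀ - (s:ℂ) * fz w ks with hR'def
    -- bounds on cards and logs
    have hcardD : (Dset.card : ℝ) ≤ 3*C₀*n := by
      have h1 : Dset.card ≤ (Finset.Icc (-M) N).card := Finset.card_image_le
      have h2 : (Finset.Icc (-M) N).card = (N + 1 - (-M)).toNat := Int.card_Icc _ _
      have h3 : ((N + 1 - (-M)).toNat : ℤ) = N + 1 + M := by omega
      have h4 : (Dset.card : ℝ) ≤ ((N:ℝ) + 1 + M) := by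
        have : (Dset.card : ℤ) ≤ N + 1 + M := by omega
        exact_mod_cast this
      linarith
    have hcardg : (gapF.card : ℝ) ≤ 3*C₀*n := by
      have h2 : gapF.card = (x₂ - 1 + 1 - (x₂ - t₂ + 1)).toNat := by
        rw [hgapFdef]; exact Int.card_Icc _ _
      have h3 : ((x₂ - 1 + 1 - (x₂ - t₂ + 1)).toNat : ℤ) ≤ t₂ := by omega
      have h4 : (gapF.card : ℝ) ≤ (t₂:ℝ) := by
        have : (gapF.card : ℤ) ≤ t₂ := by omega
        exact_mod_cast this
      linarith
    have hX : (1:ℝ) ≤ 3*C₀*n := by linarith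
    have hlogD : Real.log Dset.card ≤ Real.log (3*C₀) + Real.log n := by
      have := log_cast_le Dset.card _ hcardD hX
      rwa [Real.log_mul (by positivity) hn0] at this
    have hlogg : Real.log gapF.card ≤ Real.log (3*C₀) + Real.log n := by
      have := log_cast_le gapF.card _ hcardg hX
      rwa [Real.log_mul (by positivity) hn0] at this
    -- bound on cβ
    have hcβle : ‖cβ‖ ≤ Cβ := by
      rw [hcβdef, Complex.norm_real, Real.norm_eq_abs]
      obtain ⟨hβ1, hβ2⟩ := hβ
      exact log_ratio_bound φ β hφ0 hφ2 hβ1 hβ2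
    -- now the main estimate on R'
    have hDbound : ∑ k ∈ Dset.erase k₀, ‖fz w k‖ ≤ 4*(1 + Real.log Dset.card) :=
      sum_fz_erase_le w k₀ hreK Dset
    have hgbound : ∑ k ∈ gapF.erase k₀, ‖fz w k‖ ≤ 4*(1 + Real.log gapF.card) :=
      sum_fz_erase_le w k₀ hreK gapF
    have hR'le : ‖R'‖ ≤ 4*(1 + Real.log Dset.card) + 4*(1 + Real.log gapF.card) + 12 := by
      have hlogDnn : (0:ℝ) ≤ Real.log Dset.card := Real.log_natCast_nonneg _
      have hlogGnn : (0:ℝ) ≤ Real.log gapF.card := Real.log_natCast_nonneg _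
      rcases eq_or_ne ks k₀ with heq | hksne
      · -- nearest integer = nearest pole
        rw [heq] at hpoleks hsval hR'def
        rcases hpoleks with ⟨hD, hg⟩ | ⟨hD, hg⟩
        · have hs : s = 1 := hsval.1 hD
          have hReq : R' = (∑ k ∈ Dset.erase k₀, fz w k) + (∑ k ∈ gapF.erase k₀, fz w k) := by
            rw [hR'def, ← Finset.sum_erase_add Dset _ hD, ← Finset.sum_erase_add gapF _ hg, hs]
            push_cast
            ring
          rw [hReq]
          calc ‖(∑ k ∈ Dset.erase k₀, fz w k) + (∑ k ∈ gapF.erase k₀, fz w k)‖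
              ≤ ‖∑ k ∈ Dset.erase k₀, fz w k‖ + ‖∑ k ∈ gapF.erase k₀, fz w k‖ := norm_add_le _ _
            _ ≤ (∑ k ∈ Dset.erase k₀, ‖fz w k‖) + ∑ k ∈ gapF.erase k₀, ‖fz w k‖ :=
                add_le_add (norm_sum_le _ _) (norm_sum_le _ _)
            _ ≤ 4*(1+Real.log Dset.card) + 4*(1+Real.log gapF.card) := add_le_add hDbound hgbound
            _ ≤ _ := by linarith
        · have hs : s = -1 := hsval.2 hD
          have hReq : R' = (∑ k ∈ Dset.erase k₀, fz w k) + (∑ k ∈ gapF.erase k₀, fz w k) := by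
            rw [hR'def, hs, Finset.erase_eq_of_notMem hD, Finset.erase_eq_of_notMem hg]
            push_cast
            ring
          rw [hReq]
          calc ‖(∑ k ∈ Dset.erase k₀, fz w k) + (∑ k ∈ gapF.erase k₀, fz w k)‖
              ≤ ‖∑ k ∈ Dset.erase k₀, fz w k‖ + ‖∑ k ∈ gapF.erase k₀, fz w k‖ := norm_add_le _ _
            _ ≤ (∑ k ∈ Dset.erase k₀, ‖fz w k‖) + ∑ k ∈ gapF.erase k₀, ‖fz w k‖ :=
                add_le_add (norm_sum_le _ _) (norm_sum_le _ _)
            _ ≤ 4*(1+Real.log Dset.card) + 4*(1+Real.log gapF.card) := add_le_add hDbound hgbound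
            _ ≤ _ := by linarith
      · -- ks ≠ k₀
        have hfzks2 : ‖fz w ks‖ ≤ 2 := by
          have h1 := fz_abs_le_two_div w k₀ ks hreK hksne
          have h2 := int_dist_ge_one hksne
          have h3 : 2*(1/|(ks:ℝ) - (k₀:ℝ)|) ≤ 2 := by
            rw [mul_one_div]
            exact div_le_self (by norm_num) h2
          linarith
        have hDdec := sum_double_erase Dset (fz w) k₀ ks hksne
        have hgdec := sum_double_erase gapF (fz w) k₀ ks hksne
        set e1 : ℂ := (if k₀ ∈ Dset then fz w k₀ else 0)
          + (if k₀ ∈ gapF then fz w k₀ else 0) - fz w k₀ with he1def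
        set e2 : ℂ := (if ks ∈ Dset then fz w ks else 0)
          + (if ks ∈ gapF then fz w ks else 0) - (s:ℂ) * fz w ks with he2def
        have hReq : R' = ((∑ k ∈ (Dset.erase k₀).erase ks, fz w k)
            + ∑ k ∈ (gapF.erase k₀).erase ks, fz w k) + e1 + e2 := by
          rw [hR'def, hDdec, hgdec, he1def, he2def]
          ring
        have hsub1 : ∑ k ∈ (Dset.erase k₀).erase ks, ‖fz w k‖ ≤ ∑ k ∈ Dset.erase k₀, ‖fz w k‖ :=
          Finset.sum_le_sum_of_subset_of_nonneg (Finset.erase_subset _ _)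
            (fun _ _ _ => norm_nonneg _)
        have hsub2 : ∑ k ∈ (gapF.erase k₀).erase ks, ‖fz w k‖ ≤ ∑ k ∈ gapF.erase k₀, ‖fz w k‖ :=
          Finset.sum_le_sum_of_subset_of_nonneg (Finset.erase_subset _ _)
            (fun _ _ _ => norm_nonneg _)
        have he1le : ‖e1‖ ≤ 6 := by
          by_cases hpol : (k₀ ∈ Dset ∧ k₀ ∈ gapF) ∨ (k₀ ∉ Dset ∧ k₀ ∉ gapF)
          · have hmin0 := hminZ k₀ hpol
            have hksne0 : w - (ks:ℂ) ≠ 0 := by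
              intro hzero
              have h7 : (w - (ks:ℂ)).im = w.im := by
                simp [Complex.sub_im, Complex.intCast_im]
              rw [hzero] at h7
              simp only [Complex.zero_im] at h7
              linarith [him, h7]
            have hk0pos : 0 < ‖w - (ks:ℂ)‖ := norm_pos_iff.mpr hksne0
            have hfzk0 : ‖fz w k₀‖ ≤ 2 := by
              have h9 : ‖fz w ks‖ = ‖w - (ks:ℂ)‖⁻¹ := by rw [fz, norm_inv]
              have h10 : ‖w - (k₀:ℂ)‖⁻¹ ≤ ‖w - (ks:ℂ)‖⁻¹ := inv_anti₀ hk0pos hmin0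
              rw [fz, norm_inv]
              rw [h9] at hfzks2
              linarith
            have hi1 : ‖(if k₀ ∈ Dset then fz w k₀ else 0)‖ ≤ 2 :=
              norm_ite_le _ _ _ hfzk0 (by norm_num)
            have hi2 : ‖(if k₀ ∈ gapF then fz w k₀ else 0)‖ ≤ 2 :=
              norm_ite_le _ _ _ hfzk0 (by norm_num)
            rw [he1def]
            calc ‖(if k₀ ∈ Dset then fz w k₀ else 0) + (if k₀ ∈ gapF then fz w k₀ else 0) - fz w k₀‖
                ≤ ‖(if k₀ ∈ Dset then fz w k₀ else 0) + (if k₀ ∈ gapF then fz w k₀ else 0)‖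
                  + ‖fz w k₀‖ := norm_sub_le _ _
              _ ≤ 6 := by
                  have := norm_add_le (if k₀ ∈ Dset then fz w k₀ else 0)
                    (if k₀ ∈ gapF then fz w k₀ else 0)
                  linarith
          · push_neg at hpol
            by_cases hD : k₀ ∈ Dset <;> by_cases hg : k₀ ∈ gapF
            · exact (hpol.1 hD hg).elim
            · have : e1 = 0 := by rw [he1def, if_pos hD, if_neg hg]; ring
              rw [this]; simp
            · have : e1 = 0 := by rw [he1def, if_neg hD, if_pos hg]; ring
              rw [this]; simp
            · exact (hg (hpol.2 hD)).elim
        have he2le : ‖e2‖ ≤ 6 := by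
          have hi1 : ‖(if ks ∈ Dset then fz w ks else 0)‖ ≤ 2 :=
            norm_ite_le _ _ _ hfzks2 (by norm_num)
          have hi2 : ‖(if ks ∈ gapF then fz w ks else 0)‖ ≤ 2 :=
            norm_ite_le _ _ _ hfzks2 (by norm_num)
          have hns : ‖(s:ℂ) * fz w ks‖ ≤ 2 := by
            rw [norm_mul, hsnorm, one_mul]
            exact hfzks2
          rw [he2def]
          calc ‖(if ks ∈ Dset then fz w ks else 0) + (if ks ∈ gapF then fz w ks else 0)
              - (s:ℂ) * fz w ks‖
              ≤ ‖(if ks ∈ Dset then fz w ks else 0) + (if ks ∈ gapF then fz w ks else 0)‖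
                + ‖(s:ℂ) * fz w ks‖ := norm_sub_le _ _
            _ ≤ 6 := by
                have := norm_add_le (if ks ∈ Dset then fz w ks else 0)
                  (if ks ∈ gapF then fz w ks else 0)
                linarith
        rw [hReq]
        have t1 := norm_add_le (((∑ k ∈ (Dset.erase k₀).erase ks, fz w k)
            + ∑ k ∈ (gapF.erase k₀).erase ks, fz w k) + e1) e2
        have t2 := norm_add_le ((∑ k ∈ (Dset.erase k₀).erase ks, fz w k)
            + ∑ k ∈ (gapF.erase k₀).erase ks, fz w k) e1
        have t3 := norm_add_le (∑ k ∈ (Dset.erase k₀).erase ks, fz w k)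
          (∑ k ∈ (gapF.erase k₀).erase ks, fz w k)
        have t4 := norm_sum_le ((Dset.erase k₀).erase ks) (fz w)
        have t5 := norm_sum_le ((gapF.erase k₀).erase ks) (fz w)
        linarith
    -- final arithmetic
    have hlog2n : Real.log 2 ≤ Real.log n := by
      have := log_nat_mono (a := 2) (b := n) hn
      simpa using this
    have hnormsum : ‖cβ + R' - F‖ ≤ ‖cβ‖ + ‖R'‖ + ‖F‖ := by
      calc ‖cβ + R' - F‖ ≤ ‖cβ + R'‖ + ‖F‖ := norm_sub_le _ _
        _ ≤ ‖cβ‖ + ‖R'‖ + ‖F‖ := by linarith [norm_add_le cβ R']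
    have htot : ‖cβ + R' - F‖ ≤ A + 8 * Real.log n := by
      rw [hAdef]
      calc ‖cβ + R' - F‖ ≤ ‖cβ‖ + ‖R'‖ + ‖F‖ := hnormsum
        _ ≤ Cβ + (4*(1 + Real.log Dset.card) + 4*(1 + Real.log gapF.card) + 12) + 32 := by
            linarith
        _ ≤ Cβ + (4*(1 + (Real.log (3*C₀) + Real.log n)) + 4*(1 + (Real.log (3*C₀) + Real.log n)) + 12) + 32 := by
            linarith
        _ = (Cβ + 52 + 8*Real.log (3*C₀)) + 8 * Real.log n := by ring
    have hAle : A ≤ (A/Real.log 2) * Real.log n := by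
      have h1 : (A/Real.log 2) * Real.log 2 = A := div_mul_cancel₀ A (ne_of_gt hlog2)
      have h2 : (A/Real.log 2) * Real.log 2 ≤ (A/Real.log 2) * Real.log n :=
        mul_le_mul_of_nonneg_left hlog2n (le_of_lt (div_pos hApos hlog2))
      linarith
    calc ‖cβ + R' - F‖ ≤ A + 8 * Real.log n := htot
      _ ≤ (A/Real.log 2) * Real.log n + 8 * Real.log n := by linarith
      _ = (A/Real.log 2 + 8) * Real.log n := by ring
end

section
/- For every φ ∈ (0, 1/2), K ≥ 1 and ε ∈ (0, 1/2), there exist C > 0 and N ∈ ℕ such that the following holds for all integers n ≥ N. Let t_c ∈ [n^{−1/2+ε}, K], let z_c ∈ (−t_c, 0) be such that B := −z_c/t_c ∈ (φ, 1−φ), and let x₂, t₂ be integers with t₂ ≥ 1, |x₂| ≤ K·n^{1/2}, |t₂ − n·t_c| ≤ K·n^{1/2}, and |x₂ − B(t₂ − n·t_c)| ≤ K·n^{1/4}. Then for every z ∈ ℂ with |z − z_c| ≤ (φ/2)·t_c, | ∑_{i=−x₂+1}^{−x₂+t₂−1} 1/(nz + i) − ∑_{i=0}^{⌊n·t_c⌋−1}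 1/(nz + i) | ≤ C·( n^{−3/4}·t_c^{−1} + n^{−1/2}·t_c^{−2}·|z − z_c| ). -/
open MeasureTheory intervalIntegral





noncomputable def Gaux (f : ℤ → ℂ) (k : ℤ) : ℂ :=
  if 0 ≤ k then ∑ i ∈ Finset.Icc 0 (k - 1), f i else -∑ i ∈ Finset.Icc k (-1), f i

lemma Gaux_zero (f : ℤ → ℂ) : Gaux f 0 = 0 := by
  simp [Gaux, Finset.Icc_eq_empty_of_lt (show (0:ℤ) > -1 by omega)]

lemma Icc_top (a b : ℤ) (h : a ≤ b + 1) :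
    Finset.Icc a (b + 1) = insert (b + 1) (Finset.Icc a b) := by
  ext x; simp only [Finset.mem_Icc, Finset.mem_insert]; omega

lemma Icc_bot (a b : ℤ) (h : a ≤ b) :
    Finset.Icc a b = insert a (Finset.Icc (a + 1) b) := by
  ext x; simp only [Finset.mem_Icc, Finset.mem_insert]; omega

lemma Gaux_step (f : ℤ → ℂ) (k : ℤ) : Gaux f (k + 1) = Gaux f k + f k := by
  rcases le_or_gt 0 k with hk | hk
  · have h1 : (0:ℤ) ≤ k + 1 := by omega
    simp only [Gaux, if_pos hk, if_pos h1]
    have e : k + 1 - 1 = (k - 1) + 1 := by ring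
    rw [e, Icc_top 0 (k - 1) (by omega), Finset.sum_insert (by simp)]
    have e2 : k - 1 + 1 = k := by ring
    rw [e2]; ring
  · rcases eq_or_lt_of_le (show k + 1 ≤ 0 by omega) with hk1 | hk1
    · have hk' : k = -1 := by omega
      subst hk'
      show Gaux f 0 = _
      rw [Gaux_zero]
      simp only [Gaux, if_neg (show ¬ (0:ℤ) ≤ -1 by omega)]
      rw [Finset.Icc_self, Finset.sum_singleton]
      ring
    · have h1 : ¬ (0:ℤ) ≤ k + 1 := by omega
      have h2 : ¬ (0:ℤ) ≤ k := by omega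
      simp only [Gaux, if_neg h1, if_neg h2]
      rw [Icc_bot k (-1) (by omega), Finset.sum_insert (by simp)]
      ring

lemma sum_Icc_eq_Gaux_aux (f : ℤ → ℂ) (p : ℤ) :
    ∀ k : ℕ, ∑ i ∈ Finset.Icc p (p + (k:ℤ) - 1), f i = Gaux f (p + k) - Gaux f p := by
  intro k
  induction k with
  | zero => simp [Finset.Icc_eq_empty_of_lt (show p > p - 1 by omega)]
  | succ k ih =>
    have e : p + ((k:ℤ)+1) - 1 = (p + (k:ℤ) - 1) + 1 := by ring
    have e2 : (((k+1:ℕ)):ℤ) = (k:ℤ) + 1 := by push_cast; ring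
    rw [e2, e, Icc_top p (p + (k:ℤ) - 1) (by omega),
      Finset.sum_insert (by simp only [Finset.mem_Icc]; omega)]
    have e3 : p + (k:ℤ) - 1 + 1 = p + (k:ℤ) := by ring
    rw [e3, ih, show p + ((k:ℤ)+1) = (p + (k:ℤ)) + 1 by ring, Gaux_step]
    ring

lemma sum_Icc_eq_Gaux (f : ℤ → ℂ) (p q : ℤ) (h : p ≤ q + 1) :
    ∑ i ∈ Finset.Icc p q, f i = Gaux f (q + 1) - Gaux f p := by
  obtain ⟨k, hk⟩ : ∃ k : ℕ, q + 1 = p + k := ⟨(q + 1 - p).toNat, by omega⟩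
  have hq : q = p + (k:ℤ) - 1 := by omega
  rw [hq, show p + (k:ℤ) - 1 + 1 = p + (k:ℤ) by ring]
  exact sum_Icc_eq_Gaux_aux f p k



lemma invContOn (w : ℂ) (s : Set ℝ) (h : ∀ x ∈ s, w + (x:ℂ) ≠ 0) :
    ContinuousOn (fun x : ℝ => (w + (x:ℂ))⁻¹) s :=
  ((continuous_const.add Complex.continuous_ofReal).continuousOn).inv₀ h

lemma invIntegrable (w : ℂ) (α β : ℝ) (h : ∀ x ∈ Set.uIcc α β, w + (x:ℂ) ≠ 0) :
    IntervalIntegrable (fun x : ℝ => (w + (x:ℂ))⁻¹) volume α β :=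
  (invContOn w _ h).intervalIntegrable

lemma step_bound (w : ℂ) (d : ℝ) (hd : 0 < d) (c : ℝ)
    (h : ∀ x : ℝ, c ≤ x → x ≤ c + 1 → d ≤ ‖w + (x:ℂ)‖) :
    ‖(w + (c:ℂ))⁻¹ - ∫ x in c..(c+1), (w + (x:ℂ))⁻¹‖ ≤ 1 / d ^ 2 := by
  have hne : ∀ x : ℝ, c ≤ x → x ≤ c + 1 → w + (x:ℂ) ≠ 0 := by
    intro x h1 h2 h0
    have := h x h1 h2
    rw [h0] at this; simp at this; linarith
  have hc0 : w + (c:ℂ) ≠ 0 := hne c le_rfl (by linarith)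
  have hconst : (w + (c:ℂ))⁻¹ = ∫ _x in c..(c+1), (w + (c:ℂ))⁻¹ := by
    rw [intervalIntegral.integral_const, show c + 1 - c = 1 by ring, one_smul]
  have hint : IntervalIntegrable (fun x : ℝ => (w + (x:ℂ))⁻¹) volume c (c+1) := by
    apply invIntegrable
    intro x hx
    rw [Set.uIcc_of_le (by linarith : c ≤ c + 1)] at hx
    exact hne x hx.1 hx.2
  have hsplit : (w + (c:ℂ))⁻¹ - ∫ x in c..(c+1), (w + (x:ℂ))⁻¹
      = ∫ x in c..(c+1), ((w + (c:ℂ))⁻¹ - (w + (x:ℂ))⁻¹) := by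
    rw [intervalIntegral.integral_sub intervalIntegrable_const hint, ← hconst]
  rw [hsplit]
  have key : ∀ x ∈ Set.uIoc c (c+1),
      ‖(w + (c:ℂ))⁻¹ - (w + (x:ℂ))⁻¹‖ ≤ 1 / d ^ 2 := by
    intro x hx
    rw [Set.uIoc_of_le (by linarith : c ≤ c + 1)] at hx
    obtain ⟨hxl0, hxr0⟩ := hx
    have hx1 : c ≤ x := le_of_lt hxl0
    have hx0 : w + (x:ℂ) ≠ 0 := hne x hx1 hxr0
    have hid : (w + (c:ℂ))⁻¹ - (w + (x:ℂ))⁻¹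
        = ((x:ℂ) - (c:ℂ)) * ((w + (c:ℂ))⁻¹ * (w + (x:ℂ))⁻¹) := by
      field_simp
      ring
    rw [hid]
    rw [norm_mul, norm_mul, norm_inv, norm_inv]
    have e1 : ‖(x:ℂ) - (c:ℂ)‖ = |x - c| := by
      rw [← Complex.ofReal_sub, Complex.norm_real, Real.norm_eq_abs]
    rw [e1]
    have b1 : |x - c| ≤ 1 := by rw [abs_le]; constructor <;> linarith
    have b2 : (‖w + (c:ℂ)‖)⁻¹ ≤ d⁻¹ :=
      inv_anti₀ hd (h c le_rfl (by linarith))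
    have b3 : (‖w + (x:ℂ)‖)⁻¹ ≤ d⁻¹ :=
      inv_anti₀ hd (h x hx1 hxr0)
    calc |x - c| * ((‖w + (c:ℂ)‖)⁻¹ * (‖w + (x:ℂ)‖)⁻¹)
        ≤ 1 * (d⁻¹ * d⁻¹) := by
          apply mul_le_mul b1 _ (by positivity) (by norm_num)
          apply mul_le_mul b2 b3 (by positivity) (by positivity)
      _ = 1 / d ^ 2 := by rw [one_mul]; field_simp
  calc ‖∫ x in c..(c+1), ((w + (c:ℂ))⁻¹ - (w + (x:ℂ))⁻¹)‖
      ≤ (1 / d ^ 2) * |c + 1 - c| :=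
        intervalIntegral.norm_integral_le_of_norm_le_const key
    _ = 1 / d ^ 2 := by rw [show c + 1 - c = 1 by ring, abs_one, mul_one]


lemma sum_integral_bound (w : ℂ) (d : ℝ) (hd : 0 < d) (p : ℤ) :
    ∀ k : ℕ, (∀ x : ℝ, (p:ℝ) ≤ x → x ≤ (p:ℝ) + k → d ≤ ‖w + (x:ℂ)‖) →
    ‖(∑ i ∈ Finset.Icc p (p + (k:ℤ) - 1), (w + (i:ℂ))⁻¹) -
      ∫ x in (p:ℝ)..((p:ℝ) + k), (w + (x:ℂ))⁻¹‖ ≤ k / d ^ 2 := by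
  intro k
  induction k with
  | zero =>
    intro _
    simp [Finset.Icc_eq_empty_of_lt (show p > p - 1 by omega)]
  | succ k ih =>
    intro h
    have hsub : ∀ x : ℝ, (p:ℝ) ≤ x → x ≤ (p:ℝ) + k → d ≤ ‖w + (x:ℂ)‖ := by
      intro x h1 h2
      exact h x h1 (by push_cast; linarith)
    have hne : ∀ x : ℝ, (p:ℝ) ≤ x → x ≤ (p:ℝ) + (k+1:ℕ) → w + (x:ℂ) ≠ 0 := by
      intro x h1 h2 h0
      have := h x h1 h2
      rw [h0] at this; simp at this; linarith
    have hint1 : IntervalIntegrable (fun x : ℝ => (w + (x:ℂ))⁻¹) volume (p:ℝ) ((p:ℝ) + k) := by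
      apply invIntegrable
      intro x hx
      rw [Set.uIcc_of_le (by push_cast; linarith : (p:ℝ) ≤ (p:ℝ) + k)] at hx
      exact hne x hx.1 (by push_cast; push_cast at hx; linarith [hx.2])
    have hint2 : IntervalIntegrable (fun x : ℝ => (w + (x:ℂ))⁻¹) volume ((p:ℝ) + k) ((p:ℝ) + (k+1:ℕ)) := by
      apply invIntegrable
      intro x hx
      rw [Set.uIcc_of_le (by push_cast; linarith : (p:ℝ) + k ≤ (p:ℝ) + (k+1:ℕ))] at hx
      exact hne x (by push_cast; push_cast at hx; linarith [hx.1]) hx.2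
    have hsplitInt : ∫ x in (p:ℝ)..((p:ℝ) + (k+1:ℕ)), (w + (x:ℂ))⁻¹
        = (∫ x in (p:ℝ)..((p:ℝ) + k), (w + (x:ℂ))⁻¹)
          + ∫ x in ((p:ℝ) + k)..((p:ℝ) + (k+1:ℕ)), (w + (x:ℂ))⁻¹ :=
      (intervalIntegral.integral_add_adjacent_intervals hint1 hint2).symm
    have e3 : ((p + (k:ℤ) : ℤ):ℂ) = (((p:ℝ) + k : ℝ):ℂ) := by push_cast; ring
    have hsplitSum : ∑ i ∈ Finset.Icc p (p + ((k+1:ℕ):ℤ) - 1), (w + (i:ℂ))⁻¹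
        = (∑ i ∈ Finset.Icc p (p + (k:ℤ) - 1), (w + (i:ℂ))⁻¹) + (w + (((p:ℝ) + k : ℝ):ℂ))⁻¹ := by
      have e2 : p + ((k+1:ℕ):ℤ) - 1 = (p + (k:ℤ) - 1) + 1 := by push_cast; ring
      rw [e2, Icc_top p (p + (k:ℤ) - 1) (by omega),
        Finset.sum_insert (by simp only [Finset.mem_Icc]; omega)]
      rw [show p + (k:ℤ) - 1 + 1 = p + (k:ℤ) by ring, e3]
      exact add_comm _ _
    have hstep : ‖(w + (((p:ℝ) + k : ℝ):ℂ))⁻¹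
        - ∫ x in ((p:ℝ)+k)..(((p:ℝ)+k)+1), (w + (x:ℂ))⁻¹‖ ≤ 1 / d ^ 2 := by
      apply step_bound w d hd
      intro x h1 h2
      exact h x (by push_cast; linarith) (by push_cast; linarith)
    have e4 : (p:ℝ) + (k+1:ℕ) = ((p:ℝ) + k) + 1 := by push_cast; ring
    rw [hsplitSum, hsplitInt, e4]
    have tri : ∀ A B C D : ℂ, ‖(A + B) - (C + D)‖ ≤ ‖A - C‖ + ‖B - D‖ := by
      intro A B C D
      rw [show (A + B) - (C + D) = (A - C) + (B - D) by ring]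
      exact norm_add_le _ _
    calc ‖_‖ ≤ _ := tri _ _ _ _
      _ ≤ (k:ℝ) / d ^ 2 + 1 / d ^ 2 := add_le_add (ih hsub) hstep
      _ = ((k+1:ℕ):ℝ) / d ^ 2 := by push_cast; ring


lemma Gdiff_bound_le (w : ℂ) (d : ℝ) (hd : 0 < d) (p q : ℤ) (hpq : p ≤ q)
    (h : ∀ x : ℝ, (p:ℝ) ≤ x → x ≤ (q:ℝ) → d ≤ ‖w + (x:ℂ)‖) :
    ‖(Gaux (fun i => (w + (i:ℂ))⁻¹) q - Gaux (fun i => (w + (i:ℂ))⁻¹) p) -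
      ∫ x in (p:ℝ)..(q:ℝ), (w + (x:ℂ))⁻¹‖ ≤ ((q:ℝ) - (p:ℝ)) / d ^ 2 := by
  obtain ⟨k, hk⟩ : ∃ k : ℕ, q = p + k := ⟨(q - p).toNat, by omega⟩
  subst hk
  have hG : Gaux (fun i => (w + (i:ℂ))⁻¹) (p + k) - Gaux (fun i => (w + (i:ℂ))⁻¹) p
      = ∑ i ∈ Finset.Icc p (p + (k:ℤ) - 1), (w + (i:ℂ))⁻¹ :=
    (sum_Icc_eq_Gaux_aux _ p k).symm
  have e1 : ((p + (k:ℤ) : ℤ):ℝ) = (p:ℝ) + k := by push_cast; ring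
  rw [hG, e1]
  have := sum_integral_bound w d hd p k (by intro x h1 h2; exact h x h1 (by rw [e1]; exact h2))
  calc ‖_‖ ≤ (k:ℝ) / d ^ 2 := this
    _ = ((p:ℝ) + k - (p:ℝ)) / d ^ 2 := by ring

lemma Gdiff_bound (w : ℂ) (d : ℝ) (hd : 0 < d) (p q : ℤ)
    (h : ∀ x : ℝ, min (p:ℝ) (q:ℝ) ≤ x → x ≤ max (p:ℝ) (q:ℝ) → d ≤ ‖w + (x:ℂ)‖) :
    ‖(Gaux (fun i => (w + (i:ℂ))⁻¹) q - Gaux (fun i => (w + (i:ℂ))⁻¹) p) -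
      ∫ x in (p:ℝ)..(q:ℝ), (w + (x:ℂ))⁻¹‖ ≤ |(q:ℝ) - (p:ℝ)| / d ^ 2 := by
  rcases le_total p q with hpq | hpq
  · have hpq' : (p:ℝ) ≤ (q:ℝ) := by exact_mod_cast hpq
    have h' : ∀ x : ℝ, (p:ℝ) ≤ x → x ≤ (q:ℝ) → d ≤ ‖w + (x:ℂ)‖ := by
      intro x h1 h2
      exact h x (le_trans (min_le_left _ _) h1) (le_trans h2 (le_max_right _ _))
    have := Gdiff_bound_le w d hd p q hpq h'
    rwa [abs_of_nonneg (by linarith : (0:ℝ) ≤ (q:ℝ) - (p:ℝ))]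
  · have hpq' : (q:ℝ) ≤ (p:ℝ) := by exact_mod_cast hpq
    have h' : ∀ x : ℝ, (q:ℝ) ≤ x → x ≤ (p:ℝ) → d ≤ ‖w + (x:ℂ)‖ := by
      intro x h1 h2
      exact h x (le_trans (min_le_right _ _) h1) (le_trans h2 (le_max_left _ _))
    have hb := Gdiff_bound_le w d hd q p hpq h'
    have eneg : (Gaux (fun i => (w + (i:ℂ))⁻¹) q - Gaux (fun i => (w + (i:ℂ))⁻¹) p) -
        ∫ x in (p:ℝ)..(q:ℝ), (w + (x:ℂ))⁻¹
        = -((Gaux (fun i => (w + (i:ℂ))⁻¹) p - Gaux (fun i => (w + (i:ℂ))⁻¹) q) -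
          ∫ x in (q:ℝ)..(p:ℝ), (w + (x:ℂ))⁻¹) := by
      rw [intervalIntegral.integral_symm]
      ring
    rw [eneg, norm_neg]
    rwa [abs_sub_comm, abs_of_nonneg (by linarith : (0:ℝ) ≤ (p:ℝ) - (q:ℝ))]

lemma integral_param (w : ℂ) (p P : ℝ) :
    ∫ x in p..(p + P), (w + (x:ℂ))⁻¹
      = ∫ τ in (0:ℝ)..1, ((P:ℂ) * (w + (p:ℂ) + (P:ℂ) * (τ:ℂ))⁻¹) := by
  rcases eq_or_ne P 0 with h0 | h0
  · simp [h0]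
  · have comp := intervalIntegral.integral_comp_mul_add (a := (0:ℝ)) (b := 1)
      (fun x : ℝ => (w + (x:ℂ))⁻¹) h0 p
    rw [show P * 0 + p = p by ring, show P * 1 + p = p + P by ring] at comp
    have e : ∫ τ in (0:ℝ)..1, ((P:ℂ) * (w + (p:ℂ) + (P:ℂ) * (τ:ℂ))⁻¹)
        = (P:ℂ) * ∫ τ in (0:ℝ)..1, (w + ((P * τ + p : ℝ):ℂ))⁻¹ := by
      rw [← intervalIntegral.integral_const_mul]
      apply intervalIntegral.integral_congr
      intro τ _
      push_cast
      ring_nf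
    rw [e, comp, Complex.real_smul]
    push_cast
    rw [← mul_assoc, mul_inv_cancel₀ (by exact_mod_cast h0 : (P:ℂ) ≠ 0), one_mul]

lemma pair_integral_bound (w : ℂ) (d : ℝ) (hd : 0 < d) (pR PR PA : ℝ)
    (hR : ∀ τ : ℝ, 0 ≤ τ → τ ≤ 1 → d ≤ ‖w + (pR:ℂ) + (PR:ℂ) * (τ:ℂ)‖)
    (hA : ∀ τ : ℝ, 0 ≤ τ → τ ≤ 1 → d ≤ ‖w + (PA:ℂ) * (τ:ℂ)‖) :
    ‖(∫ x in pR..(pR + PR), (w + (x:ℂ))⁻¹) - ∫ x in (0:ℝ)..(0 + PA), (w + (x:ℂ))⁻¹‖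
      ≤ ‖((PR - PA : ℝ):ℂ) * w - ((PA:ℝ):ℂ) * ((pR:ℝ):ℂ)‖ / d ^ 2 := by
  rw [integral_param w pR PR, integral_param w 0 PA]
  simp only [Complex.ofReal_zero, add_zero]
  have hne1 : ∀ τ : ℝ, 0 ≤ τ → τ ≤ 1 → w + (pR:ℂ) + (PR:ℂ) * (τ:ℂ) ≠ 0 := by
    intro τ h1 h2 h0
    have := hR τ h1 h2; rw [h0] at this; simp at this; linarith
  have hne2 : ∀ τ : ℝ, 0 ≤ τ → τ ≤ 1 → w + (PA:ℂ) * (τ:ℂ) ≠ 0 := by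
    intro τ h1 h2 h0
    have := hA τ h1 h2; rw [h0] at this; simp at this; linarith
  have hi1 : IntervalIntegrable (fun τ : ℝ => (PR:ℂ) * (w + (pR:ℂ) + (PR:ℂ) * (τ:ℂ))⁻¹) volume 0 1 := by
    apply ContinuousOn.intervalIntegrable
    apply ContinuousOn.mul continuousOn_const
    apply ContinuousOn.inv₀
    · exact (continuous_const.add (continuous_const.mul Complex.continuous_ofReal)).continuousOn
    · intro τ hτ
      rw [Set.uIcc_of_le (by norm_num : (0:ℝ) ≤ 1)] at hτ
      exact hne1 τ hτ.1 hτ.2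
  have hi2 : IntervalIntegrable (fun τ : ℝ => (PA:ℂ) * (w + (PA:ℂ) * (τ:ℂ))⁻¹) volume 0 1 := by
    apply ContinuousOn.intervalIntegrable
    apply ContinuousOn.mul continuousOn_const
    apply ContinuousOn.inv₀
    · exact (continuous_const.add (continuous_const.mul Complex.continuous_ofReal)).continuousOn
    · intro τ hτ
      rw [Set.uIcc_of_le (by norm_num : (0:ℝ) ≤ 1)] at hτ
      exact hne2 τ hτ.1 hτ.2
  rw [← intervalIntegral.integral_sub hi1 hi2]
  have key : ∀ τ ∈ Set.uIoc (0:ℝ) 1,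
      ‖(PR:ℂ) * (w + (pR:ℂ) + (PR:ℂ) * (τ:ℂ))⁻¹ - (PA:ℂ) * (w + (PA:ℂ) * (τ:ℂ))⁻¹‖
        ≤ ‖((PR - PA : ℝ):ℂ) * w - ((PA:ℝ):ℂ) * ((pR:ℝ):ℂ)‖ / d ^ 2 := by
    intro τ hτ
    rw [Set.uIoc_of_le (by norm_num : (0:ℝ) ≤ 1)] at hτ
    obtain ⟨hτ1, hτ2⟩ := hτ
    have hA1 : w + (pR:ℂ) + (PR:ℂ) * (τ:ℂ) ≠ 0 := hne1 τ (le_of_lt hτ1) hτ2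
    have hA2 : w + (PA:ℂ) * (τ:ℂ) ≠ 0 := hne2 τ (le_of_lt hτ1) hτ2
    have hid : (PR:ℂ) * (w + (pR:ℂ) + (PR:ℂ) * (τ:ℂ))⁻¹ - (PA:ℂ) * (w + (PA:ℂ) * (τ:ℂ))⁻¹
        = (((PR - PA : ℝ):ℂ) * w - ((PA:ℝ):ℂ) * ((pR:ℝ):ℂ))
          * ((w + (pR:ℂ) + (PR:ℂ) * (τ:ℂ))⁻¹ * (w + (PA:ℂ) * (τ:ℂ))⁻¹) := by
      have hA2' : w + (τ:ℂ) * (PA:ℂ) ≠ 0 := by rw [mul_comm]; exact hA2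
      push_cast
      field_simp
      ring
    rw [hid, norm_mul, norm_mul, norm_inv, norm_inv]
    have b2 : (‖w + (pR:ℂ) + (PR:ℂ) * (τ:ℂ)‖)⁻¹ ≤ d⁻¹ :=
      inv_anti₀ hd (hR τ (le_of_lt hτ1) hτ2)
    have b3 : (‖w + (PA:ℂ) * (τ:ℂ)‖)⁻¹ ≤ d⁻¹ :=
      inv_anti₀ hd (hA τ (le_of_lt hτ1) hτ2)
    calc ‖((PR - PA : ℝ):ℂ) * w - ((PA:ℝ):ℂ) * ((pR:ℝ):ℂ)‖
          * ((‖w + (pR:ℂ) + (PR:ℂ) * (τ:ℂ)‖)⁻¹ * (‖w + (PA:ℂ) * (τ:ℂ)‖)⁻¹)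
        ≤ ‖((PR - PA : ℝ):ℂ) * w - ((PA:ℝ):ℂ) * ((pR:ℝ):ℂ)‖ * (d⁻¹ * d⁻¹) := by
          apply mul_le_mul_of_nonneg_left _ (by positivity)
          apply mul_le_mul b2 b3 (by positivity) (by positivity)
      _ = ‖((PR - PA : ℝ):ℂ) * w - ((PA:ℝ):ℂ) * ((pR:ℝ):ℂ)‖ / d ^ 2 := by
          rw [div_eq_mul_inv, ← mul_inv, ← sq]
  calc ‖_‖ ≤ (‖((PR - PA : ℝ):ℂ) * w - ((PA:ℝ):ℂ) * ((pR:ℝ):ℂ)‖ / d ^ 2) * |1 - (0:ℝ)| :=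
        intervalIntegral.norm_integral_le_of_norm_le_const key
    _ = _ := by norm_num

set_option maxHeartbeats 1000000

/-- Lemma 4.10 of the paper: near the saddle point `z_c`, the derivative of the key
function `D₂` differs from the derivative of its time-`t_c` reference version only
through the displayed difference of finite sums, which is quantitatively small. -/
theorem key_function_sum_difference
    (φ K ε : ℝ) (hφ : φ ∈ Set.Ioo (0 : ℝ) (1 / 2)) (hK : 1 ≤ K)
    (hε : ε ∈ Set.Ioo (0 : ℝ) (1 / 2)) :
    ∃ C : ℝ, 0 < C ∧ ∃ N : ℕ, ∀ n : ℕ, N ≤ n →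
      ∀ tc zc B : ℝ,
        (n : ℝ) ^ (-(1 : ℝ) / 2 + ε) ≤ tc → tc ≤ K →
        -tc < zc → zc < 0 → B = -zc / tc → B ∈ Set.Ioo φ (1 - φ) →
      ∀ t₂ : ℕ, 1 ≤ t₂ →
      ∀ x₂ : ℤ,
        |(x₂ : ℝ)| ≤ K * (n : ℝ) ^ ((1 : ℝ) / 2) →
        |(t₂ : ℝ) - n * tc| ≤ K * (n : ℝ) ^ ((1 : ℝ) / 2) →
        |(x₂ : ℝ) - B * ((t₂ : ℝ) - n * tc)| ≤ K * (n : ℝ) ^ ((1 : ℝ) / 4) →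
      ∀ z : ℂ, ‖z - (zc : ℂ)‖ ≤ (φ / 2) * tc →
        ‖(∑ i ∈ Finset.Icc (-x₂ + 1) (-x₂ + (t₂ : ℤ) - 1), 1 / ((n : ℂ) * z + (i : ℂ))) -
              ∑ i ∈ Finset.Icc (0 : ℤ) (⌊(n : ℝ) * tc⌋ - 1), 1 / ((n : ℂ) * z + (i : ℂ))‖ ≤
          C * ((n : ℝ) ^ (-(3 : ℝ) / 4) / tc +
            (n : ℝ) ^ (-(1 : ℝ) / 2) / tc ^ 2 * ‖z - (zc : ℂ)‖) := by
  obtain ⟨hφ0, hφh⟩ := hφ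
  obtain ⟨hε0, hεh⟩ := hε
  have htend : Filter.Tendsto (fun n : ℕ => (n:ℝ) ^ ε) Filter.atTop Filter.atTop :=
    (tendsto_rpow_atTop hε0).comp tendsto_natCast_atTop_atTop
  obtain ⟨N₀, hN₀⟩ := Filter.eventually_atTop.mp (htend.eventually_ge_atTop (12 * K / φ))
  refine ⟨200 * K / φ ^ 2, by positivity, max N₀ 4, ?_⟩
  intro n hn tc zc B htc1 htc2 hzc1 hzc2 hB hBmem t₂ ht₂ x₂ hx₂ ht₂c hx₂c z hz
  obtain ⟨hBφ, hBφ'⟩ := hBmem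
  have hn4 : 4 ≤ n := le_trans (le_max_right _ _) hn
  have hnε : 12 * K / φ ≤ (n:ℝ) ^ ε := hN₀ n (le_trans (le_max_left _ _) hn)
  have hn4R : (4:ℝ) ≤ n := by exact_mod_cast hn4
  have hn0 : (0:ℝ) < n := by linarith
  have hn1 : (1:ℝ) ≤ n := by linarith
  have htc0 : (0:ℝ) < tc := lt_of_lt_of_le (Real.rpow_pos_of_pos hn0 _) htc1
  set sq : ℝ := (n:ℝ) ^ ((1:ℝ)/2) with hsqdef
  set qr : ℝ := (n:ℝ) ^ ((1:ℝ)/4) with hqrdef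
  have hsq0 : (0:ℝ) < sq := Real.rpow_pos_of_pos hn0 _
  have hqr0 : (0:ℝ) < qr := Real.rpow_pos_of_pos hn0 _
  have hsq1 : (1:ℝ) ≤ sq := Real.one_le_rpow hn1 (by norm_num)
  have hqr1 : (1:ℝ) ≤ qr := Real.one_le_rpow hn1 (by norm_num)
  have hsq2 : (2:ℝ) ≤ sq := by
    have h1 : (4:ℝ) ^ ((1:ℝ)/2) ≤ sq := by
      rw [hsqdef]; exact Real.rpow_le_rpow (by norm_num) hn4R (by norm_num)
    have h2 : (4:ℝ) ^ ((1:ℝ)/2) = 2 := by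
      rw [show (4:ℝ) = 2 ^ (2:ℕ) by norm_num, ← Real.rpow_natCast 2 2,
        ← Real.rpow_mul (by norm_num)]
      norm_num
    linarith
  set T : ℝ := (n:ℝ) * tc with hTdef
  have hT0 : (0:ℝ) < T := by positivity
  have hTge : sq * (n:ℝ) ^ ε ≤ T := by
    have h1 : (n:ℝ) ^ ((1:ℝ)/2 + ε) = sq * (n:ℝ) ^ ε := by
      rw [hsqdef]; exact Real.rpow_add hn0 _ _
    have h2 : (n:ℝ) ^ ((1:ℝ) + (-(1:ℝ)/2 + ε)) = (n:ℝ) * (n:ℝ) ^ (-(1:ℝ)/2 + ε) := by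
      rw [Real.rpow_add hn0, Real.rpow_one]
    have h4 : (n:ℝ) * (n:ℝ) ^ (-(1:ℝ)/2 + ε) ≤ T := by
      rw [hTdef]; exact mul_le_mul_of_nonneg_left htc1 hn0.le
    calc sq * (n:ℝ)^ε = (n:ℝ) ^ ((1:ℝ)/2 + ε) := h1.symm
      _ = (n:ℝ) ^ ((1:ℝ) + (-(1:ℝ)/2 + ε)) := by congr 1; ring
      _ = (n:ℝ) * (n:ℝ) ^ (-(1:ℝ)/2 + ε) := h2
      _ ≤ T := h4
  have hKφ : (1:ℝ) ≤ 12 * K / φ := by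
    rw [le_div_iff₀ hφ0]; linarith
  have hnε1 : (1:ℝ) ≤ (n:ℝ)^ε := le_trans hKφ hnε
  have hsqT : sq ≤ T := by
    have h1 : sq * 1 ≤ sq * (n:ℝ)^ε := mul_le_mul_of_nonneg_left hnε1 hsq0.le
    rw [mul_one] at h1
    linarith [hTge]
  have hM : 3 * K * sq ≤ φ / 4 * T := by
    have h1 : sq * (12 * K / φ) ≤ sq * (n:ℝ)^ε := mul_le_mul_of_nonneg_left hnε hsq0.le
    have h2 : sq * (12 * K / φ) ≤ T := le_trans h1 hTge
    have h3 : φ / 4 * (sq * (12 * K / φ)) = 3 * K * sq := by field_simp; ring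
    have h4 := mul_le_mul_of_nonneg_left h2 (le_of_lt (by positivity : (0:ℝ) < φ / 4))
    rw [h3] at h4
    exact h4
  have hB0 : 0 < B := lt_trans hφ0 hBφ
  have hB1 : B ≤ 1 := by linarith
  have hzcB : zc = -B * tc := by rw [hB]; field_simp
  have hrez : |z.re - zc| ≤ φ / 2 * tc := by
    have h1 : |(z - (zc:ℂ)).re| ≤ ‖z - (zc:ℂ)‖ := Complex.abs_re_le_norm _
    have h2 : (z - (zc:ℂ)).re = z.re - zc := by simp
    rw [h2] at h1
    exact le_trans h1 hz
  obtain ⟨hrez1, hrez2⟩ := abs_le.mp hrez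
  have hre_ub : z.re ≤ -(φ/2) * tc := by
    have hBtc : 0 ≤ (B - φ) * tc := mul_nonneg (by linarith only [hBφ]) htc0.le
    linarith only [hrez2, hzcB, hBtc]
  have hre_lb : -(1 - φ/2) * tc ≤ z.re := by
    have hBtc : 0 ≤ (1 - φ - B) * tc := mul_nonneg (by linarith only [hBφ']) htc0.le
    linarith only [hrez1, hzcB, hBtc]
  set w : ℂ := (n:ℂ) * z with hwdef
  have hwre : ∀ x : ℝ, (w + (x:ℂ)).re = (n:ℝ) * z.re + x := by
    intro x
    simp [hwdef, Complex.add_re, Complex.mul_re]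
  set d : ℝ := φ / 4 * T with hddef
  have hd0 : 0 < d := by positivity
  have hK0 : (0:ℝ) < K := by linarith
  have hKsq0 : (0:ℝ) < K * sq := by positivity
  have hKsq1 : (1:ℝ) ≤ K * sq := by
    have := mul_le_mul_of_nonneg_left hsq1 (by linarith : (0:ℝ) ≤ K)
    rw [mul_one] at this
    linarith
  have hKsq2 : (2:ℝ) ≤ K * sq := by
    have := mul_le_mul_of_nonneg_left hsq2 (by linarith : (0:ℝ) ≤ K)
    linarith only [this, hK]
  have hL : ∀ x : ℝ, |x| ≤ 2 * (K * sq) → d ≤ ‖w + (x:ℂ)‖ := by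
    intro x hx
    obtain ⟨hx1, hx2⟩ := abs_le.mp hx
    have e1 : (n:ℝ) * z.re ≤ (n:ℝ) * (-(φ/2) * tc) := mul_le_mul_of_nonneg_left hre_ub hn0.le
    have e2 : (n:ℝ) * (-(φ/2) * tc) = -(φ/2) * T := by rw [hTdef]; ring
    have h2 : d ≤ -((w + (x:ℂ)).re) := by
      rw [hwre x, hddef]
      rw [e2] at e1
      linarith only [e1, hx2, hM, hKsq0, hddef]
    calc d ≤ -((w + (x:ℂ)).re) := h2
      _ ≤ |(w + (x:ℂ)).re| := neg_le_abs _
      _ ≤ ‖_‖ := Complex.abs_re_le_norm _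
  have hR : ∀ x : ℝ, |x - T| ≤ 3 * (K * sq) → d ≤ ‖w + (x:ℂ)‖ := by
    intro x hx
    obtain ⟨hx1, hx2⟩ := abs_le.mp hx
    have e1 : (n:ℝ) * (-(1 - φ/2) * tc) ≤ (n:ℝ) * z.re := mul_le_mul_of_nonneg_left hre_lb hn0.le
    have e2 : (n:ℝ) * (-(1 - φ/2) * tc) = -(1 - φ/2) * T := by rw [hTdef]; ring
    have h2 : d ≤ (w + (x:ℂ)).re := by
      rw [hwre x, hddef]
      rw [e2] at e1
      linarith only [e1, hx1, hM, hKsq0, hddef]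
    calc d ≤ (w + (x:ℂ)).re := h2
      _ ≤ |(w + (x:ℂ)).re| := le_abs_self _
      _ ≤ ‖_‖ := Complex.abs_re_le_norm _
  set m : ℤ := ⌊T⌋ with hmdef
  have hm0 : (m:ℝ) ≤ T := Int.floor_le T
  have hm1 : T < (m:ℝ) + 1 := Int.lt_floor_add_one T
  have hT1 : (1:ℝ) ≤ T := le_trans hsq1 hsqT
  have hmZ1 : (1:ℤ) ≤ m := by
    rw [hmdef]
    exact Int.le_floor.mpr (by exact_mod_cast hT1)
  set q₁ : ℤ := -x₂ + (t₂:ℤ) with hq₁def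
  set a : ℤ := -x₂ + 1 with hadef
  have haR : (a:ℝ) = 1 - (x₂:ℝ) := by rw [hadef]; push_cast; ring
  have hq₁R : (q₁:ℝ) = (t₂:ℝ) - (x₂:ℝ) := by rw [hq₁def]; push_cast; ring
  have habs_a : |(a:ℝ)| ≤ 2 * (K * sq) := by
    rw [haR, show (1:ℝ) - (x₂:ℝ) = 1 + (-(x₂:ℝ)) by ring]
    refine le_trans (abs_add_le _ _) ?_
    rw [abs_neg, abs_one]
    linarith [hx₂, hKsq1]
  have habs_q₁ : |(q₁:ℝ) - T| ≤ 2 * (K * sq) := by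
    rw [hq₁R, show (t₂:ℝ) - (x₂:ℝ) - T = ((t₂:ℝ) - T) + (-(x₂:ℝ)) by ring]
    refine le_trans (abs_add_le _ _) ?_
    rw [abs_neg]
    linarith [ht₂c, hx₂]
  have habs_m : |(m:ℝ) - T| ≤ 1 := by
    rw [abs_le]; constructor <;> linarith
  -- the integrals
  have hE₁ : ‖(Gaux (fun i => (w + (i:ℂ))⁻¹) q₁ - Gaux (fun i => (w + (i:ℂ))⁻¹) m)
      - ∫ x in ((m:ℤ):ℝ)..((q₁:ℤ):ℝ), (w + (x:ℂ))⁻¹‖ ≤ (3 * (K * sq)) / d ^ 2 := by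
    have hreg : ∀ x : ℝ, min ((m:ℤ):ℝ) ((q₁:ℤ):ℝ) ≤ x → x ≤ max ((m:ℤ):ℝ) ((q₁:ℤ):ℝ)
        → d ≤ ‖w + (x:ℂ)‖ := by
      intro x h1 h2
      apply hR
      obtain ⟨hma, hmb⟩ := abs_le.mp habs_m
      obtain ⟨hqa, hqb⟩ := abs_le.mp habs_q₁
      have l1 : T - 2 * (K * sq) ≤ min ((m:ℤ):ℝ) ((q₁:ℤ):ℝ) :=
        le_min (by linarith [hKsq1]) (by linarith)
      have l2 : max ((m:ℤ):ℝ) ((q₁:ℤ):ℝ) ≤ T + 2 * (K * sq) :=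
        max_le (by linarith [hKsq1]) (by linarith)
      rw [abs_le]
      constructor <;> linarith only [l1, l2, h1, h2, hKsq0]
    refine le_trans (Gdiff_bound w d hd0 m q₁ hreg) ?_
    gcongr
    calc |(q₁:ℝ) - (m:ℝ)| = |((q₁:ℝ) - T) + (T - (m:ℝ))| := by ring_nf
      _ ≤ |(q₁:ℝ) - T| + |T - (m:ℝ)| := abs_add_le _ _
      _ ≤ 2 * (K * sq) + 1 := by
          linarith only [habs_m, habs_q₁, abs_sub_comm T ((q₁:ℤ):ℝ), abs_sub_comm T ((m:ℤ):ℝ)]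
      _ ≤ 3 * (K * sq) := by linarith only [hKsq1]
  have hE₂ : ‖(Gaux (fun i => (w + (i:ℂ))⁻¹) a - Gaux (fun i => (w + (i:ℂ))⁻¹) 0)
      - ∫ x in (((0:ℤ)):ℝ)..((a:ℤ):ℝ), (w + (x:ℂ))⁻¹‖ ≤ (2 * (K * sq)) / d ^ 2 := by
    have hreg : ∀ x : ℝ, min (((0:ℤ)):ℝ) ((a:ℤ):ℝ) ≤ x → x ≤ max (((0:ℤ)):ℝ) ((a:ℤ):ℝ)
        → d ≤ ‖w + (x:ℂ)‖ := by
      intro x h1 h2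
      apply hL
      obtain ⟨haa, hab⟩ := abs_le.mp habs_a
      have l1 : -(2 * (K * sq)) ≤ min (((0:ℤ)):ℝ) ((a:ℤ):ℝ) :=
        le_min (by norm_num; linarith [hKsq0]) (by linarith)
      have l2 : max (((0:ℤ)):ℝ) ((a:ℤ):ℝ) ≤ 2 * (K * sq) :=
        max_le (by norm_num; linarith [hKsq0]) (by linarith)
      rw [abs_le]
      constructor <;> linarith only [l1, l2, h1, h2, hKsq0]
    refine le_trans (Gdiff_bound w d hd0 0 a hreg) ?_
    gcongr
    rw [Int.cast_zero, sub_zero]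
    exact habs_a
  -- the pair of integrals
  have hpairR : ∀ τ : ℝ, 0 ≤ τ → τ ≤ 1 →
      d ≤ ‖w + (((m:ℤ):ℝ):ℂ) + ((((q₁:ℤ):ℝ) - ((m:ℤ):ℝ) : ℝ):ℂ) * (τ:ℂ)‖ := by
    intro τ h1 h2
    have e : w + (((m:ℤ):ℝ):ℂ) + ((((q₁:ℤ):ℝ) - ((m:ℤ):ℝ) : ℝ):ℂ) * (τ:ℂ)
        = w + ((((m:ℤ):ℝ) + (((q₁:ℤ):ℝ) - ((m:ℤ):ℝ)) * τ : ℝ):ℂ) := by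
      push_cast; ring
    rw [e]
    apply hR
    have hPR : |((q₁:ℤ):ℝ) - ((m:ℤ):ℝ)| ≤ 2 * (K * sq) + 1 := by
      calc |((q₁:ℤ):ℝ) - ((m:ℤ):ℝ)| = |((q₁:ℝ) - T) + (T - (m:ℝ))| := by ring_nf
        _ ≤ |(q₁:ℝ) - T| + |T - (m:ℝ)| := abs_add_le _ _
        _ ≤ 2 * (K * sq) + 1 := by
            linarith only [habs_m, habs_q₁, abs_sub_comm T ((q₁:ℤ):ℝ), abs_sub_comm T ((m:ℤ):ℝ)]
    have hterm : |(((q₁:ℤ):ℝ) - ((m:ℤ):ℝ)) * τ| ≤ 2 * (K * sq) + 1 := by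
      rw [abs_mul, abs_of_nonneg h1]
      have hmm := mul_nonneg (abs_nonneg (((q₁:ℤ):ℝ) - ((m:ℤ):ℝ))) (by linarith only [h2] : (0:ℝ) ≤ 1 - τ)
      linarith only [hPR, hmm]
    calc |(m:ℝ) + (((q₁:ℤ):ℝ) - ((m:ℤ):ℝ)) * τ - T|
        = |((m:ℝ) - T) + (((q₁:ℤ):ℝ) - ((m:ℤ):ℝ)) * τ| := by ring_nf
      _ ≤ |(m:ℝ) - T| + |(((q₁:ℤ):ℝ) - ((m:ℤ):ℝ)) * τ| := abs_add_le _ _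
      _ ≤ 1 + (2 * (K * sq) + 1) := by linarith [habs_m]
      _ ≤ 3 * (K * sq) := by linarith [hKsq2]
  have hpairA : ∀ τ : ℝ, 0 ≤ τ → τ ≤ 1 →
      d ≤ ‖w + (((a:ℤ):ℝ):ℂ) * (τ:ℂ)‖ := by
    intro τ h1 h2
    have e : w + (((a:ℤ):ℝ):ℂ) * (τ:ℂ) = w + (((a:ℝ) * τ : ℝ):ℂ) := by push_cast; ring
    rw [e]
    apply hL
    rw [abs_mul, abs_of_nonneg h1]
    have hmm := mul_nonneg (abs_nonneg ((a:ℤ):ℝ)) (by linarith only [h2] : (0:ℝ) ≤ 1 - τ)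
    linarith only [habs_a, hmm]
  have hD := pair_integral_bound w d hd0 ((m:ℤ):ℝ) (((q₁:ℤ):ℝ) - ((m:ℤ):ℝ)) ((a:ℤ):ℝ)
    hpairR hpairA
  rw [show ((m:ℤ):ℝ) + (((q₁:ℤ):ℝ) - ((m:ℤ):ℝ)) = ((q₁:ℤ):ℝ) by ring, zero_add] at hD
  -- bound the numerator ν
  set Z : ℝ := ‖z - (zc:ℂ)‖ with hZdef
  have hZ0 : 0 ≤ Z := by rw [hZdef]; exact norm_nonneg _
  set r : ℝ := ((t₂:ℝ) - 1 - (m:ℝ)) * ((n:ℝ) * zc) - (1 - (x₂:ℝ)) * (m:ℝ) with hrdef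
  have hν : ((((q₁:ℤ):ℝ) - ((m:ℤ):ℝ) - ((a:ℤ):ℝ) : ℝ):ℂ) * w - (((a:ℤ):ℝ):ℂ) * (((m:ℤ):ℝ):ℂ)
      = (r:ℂ) + (((t₂:ℝ) - 1 - (m:ℝ) : ℝ):ℂ) * (n:ℂ) * (z - (zc:ℂ)) := by
    rw [hrdef, hwdef, hq₁R, haR]
    push_cast
    ring
  have hνabs : ‖((((q₁:ℤ):ℝ) - ((m:ℤ):ℝ) - ((a:ℤ):ℝ) : ℝ):ℂ) * w
        - (((a:ℤ):ℝ):ℂ) * (((m:ℤ):ℝ):ℂ)‖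
      ≤ |r| + |(t₂:ℝ) - 1 - (m:ℝ)| * ((n:ℝ) * Z) := by
    rw [hν]
    refine le_trans (norm_add_le _ _) ?_
    rw [norm_mul, norm_mul, Complex.norm_real, Complex.norm_real, Real.norm_eq_abs, Real.norm_eq_abs, Complex.norm_natCast]
    rw [← hZdef]
    exact le_of_eq (by ring)
  have hnzc : (n:ℝ) * zc = -B * T := by rw [hzcB, hTdef]; ring
  have hid_r : r = B * T * (1 - (T - (m:ℝ))) + ((x₂:ℝ) - B * ((t₂:ℝ) - T)) * T
      - (x₂:ℝ) * (T - (m:ℝ)) - (m:ℝ) := by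
    rw [hrdef, hnzc]; ring
  have hθ1 : 0 ≤ T - (m:ℝ) := by linarith
  have hθ2 : T - (m:ℝ) ≤ 1 := by linarith
  have hKqr1 : 1 ≤ K * qr := by
    have := mul_le_mul_of_nonneg_left hqr1 (by linarith : (0:ℝ) ≤ K)
    rw [mul_one] at this
    linarith
  have hδ := abs_le.mp hx₂c
  have hx₂' := abs_le.mp hx₂
  have hmR1 : (1:ℝ) ≤ (m:ℝ) := by exact_mod_cast hmZ1
  have hr_bound : |r| ≤ 4 * (K * qr) * T := by
    rw [hid_r]
    have pB : B * (1 - (T - (m:ℝ))) ≤ 1 := by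
      have h := mul_le_mul_of_nonneg_left (show (1 - (T - (m:ℝ))) ≤ 1 by linarith only [hθ1]) hB0.le
      rw [mul_one] at h
      linarith only [h, hB1]
    have pB0 : 0 ≤ B * (1 - (T - (m:ℝ))) :=
      mul_nonneg hB0.le (by linarith only [hθ2])
    have p1a : 0 ≤ B * T * (1 - (T - (m:ℝ))) :=
      mul_nonneg (mul_nonneg hB0.le hT0.le) (by linarith only [hθ2])
    have p1b : B * T * (1 - (T - (m:ℝ))) ≤ T := by
      have h := mul_le_mul_of_nonneg_left pB hT0.le
      rw [mul_one] at h
      nlinarith only [h]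
    have p2a : -(K * qr * T) ≤ ((x₂:ℝ) - B * ((t₂:ℝ) - T)) * T := by
      have h := mul_le_mul_of_nonneg_right hδ.1 hT0.le
      linarith only [h]
    have p2b : ((x₂:ℝ) - B * ((t₂:ℝ) - T)) * T ≤ K * qr * T := by
      have h := mul_le_mul_of_nonneg_right hδ.2 hT0.le
      linarith only [h]
    have p3h1 := mul_le_mul_of_nonneg_right hx₂'.2 hθ1
    have p3h2 := mul_le_mul_of_nonneg_left hθ2 hKsq0.le
    have p3h3 := mul_le_mul_of_nonneg_right hx₂'.1 hθ1
    have p3a : -(K * sq) ≤ (x₂:ℝ) * (T - (m:ℝ)) := by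
      rw [mul_one] at p3h2
      linarith only [p3h2, p3h3]
    have p3b : (x₂:ℝ) * (T - (m:ℝ)) ≤ K * sq := by
      rw [mul_one] at p3h2
      linarith only [p3h1, p3h2]
    have pKsqT : K * sq ≤ K * qr * T := by
      have h1 := mul_le_mul_of_nonneg_left hsqT (show (0:ℝ) ≤ K by linarith only [hK])
      have h2 := mul_le_mul_of_nonneg_right
        (mul_le_mul_of_nonneg_left hqr1 (show (0:ℝ) ≤ K by linarith only [hK])) hT0.le
      rw [mul_one] at h2
      nlinarith only [h1, h2]
    have pT : T ≤ K * qr * T := by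
      have h := mul_le_mul_of_nonneg_right hKqr1 hT0.le
      rw [one_mul] at h
      linarith only [h]
    rw [abs_le]
    constructor <;>
      linarith only [p1a, p1b, p2a, p2b, p3a, p3b, pKsqT, pT, hm0, hmR1]
  have hs_bound : |(t₂:ℝ) - 1 - (m:ℝ)| ≤ 3 * (K * sq) := by
    obtain ⟨h1', h2'⟩ := abs_le.mp ht₂c
    rw [abs_le]
    constructor <;> linarith only [h1', h2', hm0, hm1, hKsq0, hKsq1]
  -- rewrite the goal
  simp only [one_div]
  have hAeq : ∑ i ∈ Finset.Icc (-x₂ + 1) (-x₂ + (t₂:ℤ) - 1), (w + (i:ℂ))⁻¹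
      = Gaux (fun i => (w + (i:ℂ))⁻¹) q₁ - Gaux (fun i => (w + (i:ℂ))⁻¹) a := by
    rw [sum_Icc_eq_Gaux (fun i => (w + (i:ℂ))⁻¹) (-x₂ + 1) (-x₂ + (t₂:ℤ) - 1) (by omega)]
    rw [show -x₂ + (t₂:ℤ) - 1 + 1 = q₁ by rw [hq₁def]; ring]
  have hBeq : ∑ i ∈ Finset.Icc (0:ℤ) (m - 1), (w + (i:ℂ))⁻¹
      = Gaux (fun i => (w + (i:ℂ))⁻¹) m := by
    rw [sum_Icc_eq_Gaux (fun i => (w + (i:ℂ))⁻¹) 0 (m - 1) (by omega)]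
    rw [show m - 1 + 1 = m by ring, Gaux_zero, sub_zero]
  rw [hAeq, hBeq]
  have hdecomp : (Gaux (fun i => (w + (i:ℂ))⁻¹) q₁ - Gaux (fun i => (w + (i:ℂ))⁻¹) a)
      - Gaux (fun i => (w + (i:ℂ))⁻¹) m
      = ((Gaux (fun i => (w + (i:ℂ))⁻¹) q₁ - Gaux (fun i => (w + (i:ℂ))⁻¹) m)
          - ∫ x in ((m:ℤ):ℝ)..((q₁:ℤ):ℝ), (w + (x:ℂ))⁻¹)
        - ((Gaux (fun i => (w + (i:ℂ))⁻¹) a - Gaux (fun i => (w + (i:ℂ))⁻¹) 0)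
          - ∫ x in (((0:ℤ)):ℝ)..((a:ℤ):ℝ), (w + (x:ℂ))⁻¹)
        + ((∫ x in ((m:ℤ):ℝ)..((q₁:ℤ):ℝ), (w + (x:ℂ))⁻¹)
          - ∫ x in (((0:ℤ)):ℝ)..((a:ℤ):ℝ), (w + (x:ℂ))⁻¹) := by
    rw [Gaux_zero]
    ring
  rw [hdecomp]
  have tri2 : ∀ X Y V : ℂ, ‖X - Y + V‖
      ≤ ‖X‖ + ‖Y‖ + ‖V‖ := by
    intro X Y V
    have h1 : ‖X - Y + V‖ ≤ ‖X - Y‖ + ‖V‖ :=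
      norm_add_le _ _
    have h2 : ‖X - Y‖ ≤ ‖X‖ + ‖Y‖ := by
      have h := norm_add_le X (-Y)
      rw [← sub_eq_add_neg, norm_neg] at h
      exact h
    linarith
  refine le_trans (tri2 _ _ _) ?_
  -- the e0 : cast 0 adjust for I₂ in hD
  have hI₂cast : (∫ x in (0:ℝ)..((a:ℤ):ℝ), (w + (x:ℂ))⁻¹)
      = ∫ x in (((0:ℤ)):ℝ)..((a:ℤ):ℝ), (w + (x:ℂ))⁻¹ := by norm_num
  rw [hI₂cast] at hD
  have hDbound : ‖(∫ x in ((m:ℤ):ℝ)..((q₁:ℤ):ℝ), (w + (x:ℂ))⁻¹)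
      - ∫ x in (((0:ℤ)):ℝ)..((a:ℤ):ℝ), (w + (x:ℂ))⁻¹‖
      ≤ (4 * (K * qr) * T + 3 * (K * sq) * ((n:ℝ) * Z)) / d ^ 2 := by
    refine le_trans hD ?_
    gcongr
    refine le_trans hνabs ?_
    have : |(t₂:ℝ) - 1 - (m:ℝ)| * ((n:ℝ) * Z) ≤ 3 * (K * sq) * ((n:ℝ) * Z) := by
      apply mul_le_mul_of_nonneg_right hs_bound
      positivity
    linarith [hr_bound]
  refine le_trans (add_le_add (add_le_add hE₁ hE₂) hDbound) ?_
  -- final numeric computation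
  have hcomb : (3 * (K * sq)) / d ^ 2 + (2 * (K * sq)) / d ^ 2
      + (4 * (K * qr) * T + 3 * (K * sq) * ((n:ℝ) * Z)) / d ^ 2
      = (5 * (K * sq) + 4 * (K * qr) * T + 3 * (K * sq) * ((n:ℝ) * Z)) / d ^ 2 := by
    ring
  rw [hcomb, div_le_iff₀ (by positivity : (0:ℝ) < d ^ 2)]
  -- rpow computations
  have hn2R : ((n:ℝ)) ^ (2:ℕ) = (n:ℝ) ^ ((2:ℝ)) := by
    rw [← Real.rpow_natCast (n:ℝ) 2]; norm_num
  have hqrn : qr * (n:ℝ) = (n:ℝ) ^ ((5:ℝ)/4) := by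
    rw [hqrdef, ← Real.rpow_add_one hn0.ne' ((1:ℝ)/4)]
    norm_num
  have h54 : (n:ℝ) ^ (-(3:ℝ)/4) * (n:ℝ) ^ ((2:ℝ)) = (n:ℝ) ^ ((5:ℝ)/4) := by
    rw [← Real.rpow_add hn0]; norm_num
  have hX : (n:ℝ) ^ (-(3:ℝ)/4) * (n:ℝ) ^ (2:ℕ) = (n:ℝ) ^ ((5:ℝ)/4) := by
    rw [hn2R]; exact h54
  have hPT : (n:ℝ) ^ (-(3:ℝ)/4) / tc * T ^ 2 = (n:ℝ) ^ ((5:ℝ)/4) * tc := by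
    rw [hTdef, div_mul_eq_mul_div, div_eq_iff htc0.ne']
    linear_combination tc ^ 2 * hX
  have hqrT : qr * T = (n:ℝ) ^ ((5:ℝ)/4) * tc := by
    rw [hTdef, ← hqrn]; ring
  have hsqP : sq ≤ (n:ℝ) ^ (-(3:ℝ)/4) / tc * T ^ 2 := by
    rw [hPT]
    have t1 : (n:ℝ) ^ (-(3:ℝ)/4) ≤ tc :=
      le_trans (Real.rpow_le_rpow_of_exponent_le hn1 (by linarith)) htc1
    have t2 : (n:ℝ) ^ ((5:ℝ)/4) * (n:ℝ) ^ (-(3:ℝ)/4) ≤ (n:ℝ) ^ ((5:ℝ)/4) * tc :=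
      mul_le_mul_of_nonneg_left t1 (Real.rpow_pos_of_pos hn0 _).le
    have t3 : (n:ℝ) ^ ((5:ℝ)/4) * (n:ℝ) ^ (-(3:ℝ)/4) = sq := by
      rw [hsqdef, ← Real.rpow_add hn0]; norm_num
    linarith
  have hB2 : sq * (n:ℝ) = (n:ℝ) ^ ((3:ℝ)/2) := by
    rw [hsqdef, ← Real.rpow_add_one hn0.ne']; norm_num
  have hA2 : (n:ℝ) ^ (-(1:ℝ)/2) * (n:ℝ) ^ (2:ℕ) = (n:ℝ) ^ ((3:ℝ)/2) := by
    rw [hn2R, ← Real.rpow_add hn0]; norm_num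
  have hsqnQ : sq * (n:ℝ) = (n:ℝ) ^ (-(1:ℝ)/2) / tc ^ 2 * T ^ 2 := by
    rw [hTdef, div_mul_eq_mul_div, eq_div_iff (pow_ne_zero 2 htc0.ne')]
    linear_combination tc ^ 2 * hB2 - tc ^ 2 * hA2
  have hCd : 200 * K / φ ^ 2 * ((n:ℝ) ^ (-(3:ℝ)/4) / tc + (n:ℝ) ^ (-(1:ℝ)/2) / tc ^ 2 * Z) * d ^ 2
      = 25 * K * ((n:ℝ) ^ (-(3:ℝ)/4) / tc * T ^ 2) / 2
        + 25 * K * ((n:ℝ) ^ (-(1:ℝ)/2) / tc ^ 2 * T ^ 2 * Z) / 2 := by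
    rw [hddef]
    field_simp
    ring
  rw [hCd]
  have f1 : 5 * (K * sq) ≤ 5 * K * ((n:ℝ) ^ (-(3:ℝ)/4) / tc * T ^ 2) := by
    have := mul_le_mul_of_nonneg_left hsqP (show (0:ℝ) ≤ 5 * K by linarith)
    linarith
  have f2 : 4 * (K * qr) * T = 4 * K * ((n:ℝ) ^ (-(3:ℝ)/4) / tc * T ^ 2) := by
    rw [hPT, ← hqrT]; ring
  have f3 : 3 * (K * sq) * ((n:ℝ) * Z) = 3 * K * ((n:ℝ) ^ (-(1:ℝ)/2) / tc ^ 2 * T ^ 2 * Z) := by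
    have h : K * (sq * (n:ℝ)) * Z = K * ((n:ℝ) ^ (-(1:ℝ)/2) / tc ^ 2 * T ^ 2) * Z := by
      rw [hsqnQ]
    linear_combination 3 * h
  have g1 : 0 ≤ K * ((n:ℝ) ^ (-(3:ℝ)/4) / tc * T ^ 2) := by positivity
  have g2 : 0 ≤ K * ((n:ℝ) ^ (-(1:ℝ)/2) / tc ^ 2 * T ^ 2 * Z) := by
    apply mul_nonneg hK0.le
    apply mul_nonneg _ hZ0
    positivity
  linarith only [f1, f2, f3, g1, g2]
end
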